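/- arXiv:math/0308025 — 8 statements merged into one kernel-verified Lean document; each statement's English description precedes it below -/
import Mathlib

section
/- Let each Ω_k be a nonempty countable set with the discrete σ-algebra and μ_k a probability measure on Ω_k, and let μ = ⊗_{k=1}^∞ μ_k be the infinite product probability measure on Ω = Π_k Ω_k. Then μ is purely discrete (i.e., there exists a countable subset of Ω of full μ-measure) if and only if the infinite product Π_{k=1}^∞ (max_{ω_k ∈ Ω_k} μ_k({ω_k})) is strictly positive. -/
open MeasureTheory
open scoped ENNReal

/-- `P` is the infinite product of the probability measures `μ k`: every
finite-dimensional cylinder set gets the product of the coordinate measures.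
(Taking the empty finite set shows that `P` is a probability measure, and this
property determines `P` uniquely on the product σ-algebra.) -/
def IsProductMeasure {Ω : ℕ → Type*} [∀ k, MeasurableSpace (Ω k)]
    (μ : (k : ℕ) → Measure (Ω k)) (P : Measure ((k : ℕ) → Ω k)) : Prop :=
  ∀ (s : Finset ℕ) (E : (k : ℕ) → Set (Ω k)), (∀ k ∈ s, MeasurableSet (E k)) →
    P {ω | ∀ k ∈ s, ω k ∈ E k} = ∏ k ∈ s, μ k (E k)

/-- In a countable discrete probability space, the supremum of the atom masses
is attained. -/
lemma exists_max_atom {α : Type*} [MeasurableSpace α] [Countable α] [Nonempty α]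
    (hdisc : ∀ s : Set α, MeasurableSet s)
    (μ : Measure α) [IsProbabilityMeasure μ] :
    ∃ a : α, μ {a} = ⨆ ω : α, μ {ω} := by
  have htsum : ∑' ω : α, μ {ω} = 1 := by
    rw [← measure_iUnion (fun i j hij => by simp [Function.onFun, hij])
      (fun ω => hdisc _), Set.iUnion_of_singleton, measure_univ]
  set s := ⨆ ω : α, μ {ω} with hs
  have hsle : s ≤ 1 := iSup_le fun ω => prob_le_one
  have hstop : s ≠ ∞ := (hsle.trans_lt ENNReal.one_lt_top).ne
  have hs0 : s ≠ 0 := by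
    intro h
    have h2 : ∀ ω : α, μ {ω} = 0 := fun ω =>
      le_antisymm (h ▸ le_iSup (fun ω : α => μ {ω}) ω) bot_le
    simp [h2] at htsum
  have hhalf : s / 2 ≠ 0 := by
    simp [ENNReal.div_eq_zero_iff, hs0]
  have hfin : {ω : α | s / 2 ≤ μ {ω}}.Finite :=
    ENNReal.finite_const_le_of_tsum_ne_top (htsum ▸ ENNReal.one_ne_top) hhalf
  have hne : {ω : α | s / 2 ≤ μ {ω}}.Nonempty := by
    have hlt : s / 2 < s := ENNReal.half_lt_self hs0 hstop
    obtain ⟨ω, hω⟩ := lt_iSup_iff.mp hlt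
    exact ⟨ω, hω.le⟩
  obtain ⟨a, haT, hamax⟩ := Set.exists_max_image _ (fun ω => μ {ω}) hfin hne
  refine ⟨a, le_antisymm (le_iSup (fun ω : α => μ {ω}) a) (iSup_le fun ω => ?_)⟩
  by_cases hω : s / 2 ≤ μ {ω}
  · exact hamax ω hω
  · exact (lt_of_not_ge hω).le.trans haT

/-- For countable discrete coordinate spaces, the infinite product `P` of probability
measures `μ k` is purely discrete (there is a countable set of full `P`-measure) if and
only if the infinite product `∏_{k} max_{ω} μ k {ω}` is strictly positive.  Since each
factor lies in `[0,1]`, the infinite product is the infimum of the partial products. -/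
theorem productMeasure_discrete_iff
    {Ω : ℕ → Type*} [∀ k, MeasurableSpace (Ω k)] [∀ k, Countable (Ω k)]
    [∀ k, Nonempty (Ω k)]
    (hdisc : ∀ k (s : Set (Ω k)), MeasurableSet s)
    (μ : (k : ℕ) → Measure (Ω k)) [∀ k, IsProbabilityMeasure (μ k)]
    (P : Measure ((k : ℕ) → Ω k)) (hP : IsProductMeasure μ P) :
    (∃ D : Set ((k : ℕ) → Ω k), D.Countable ∧ P D = 1) ↔
      0 < ⨅ n : ℕ, ∏ k ∈ Finset.range n, ⨆ ω : Ω k, μ k {ω} := by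
  set m : ℕ → ℝ≥0∞ := fun k => ⨆ ω : Ω k, μ k {ω} with hm
  set p : ℕ → ℝ≥0∞ := fun n => ∏ k ∈ Finset.range n, m k with hp
  set c : ℝ≥0∞ := ⨅ n : ℕ, p n with hc
  have huniv : P Set.univ = 1 := by
    have := hP ∅ (fun k => Set.univ) (by simp)
    simpa using this
  have hcyl : ∀ (s : Finset ℕ) (a : (k : ℕ) → Ω k),
      P {ω | ∀ k ∈ s, ω k = a k} = ∏ k ∈ s, μ k {a k} := by
    intro s a
    have := hP s (fun k => {a k}) (fun k _ => hdisc k _)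
    simpa [Set.mem_singleton_iff] using this
  have hm1 : ∀ k, m k ≤ 1 := fun k => iSup_le fun ω => prob_le_one
  have hp1 : ∀ n, p n ≤ 1 := fun n => Finset.prod_le_one (fun _ _ => zero_le)
    (fun k _ => hm1 k)
  have hctop : c ≠ ∞ := ((iInf_le _ 0).trans (hp1 0)).trans_lt ENNReal.one_lt_top |>.ne
  constructor
  · rintro ⟨D, hDc, hD1⟩
    rw [pos_iff_ne_zero]
    intro hc0
    have hsing : ∀ x : (k : ℕ) → Ω k, P {x} = 0 := by
      intro x
      have h1 : ∀ n, P {x} ≤ p n := by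
        intro n
        calc P {x} ≤ P {ω | ∀ k ∈ Finset.range n, ω k = x k} := by
              refine measure_mono ?_
              rintro ω rfl
              exact fun k _ => rfl
          _ = ∏ k ∈ Finset.range n, μ k {x k} := hcyl _ _
          _ ≤ p n := Finset.prod_le_prod' fun k _ => le_iSup (fun ω : Ω k => μ k {ω}) (x k)
      have h2 : P {x} ≤ c := le_iInf h1
      rw [hc0] at h2
      exact le_antisymm h2 bot_le
    have hD0 : P D = 0 := by
      have hDU : D = ⋃ x ∈ D, {x} := by simp
      rw [hDU, measure_biUnion_null_iff hDc]
      exact fun x _ => hsing x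
    rw [hD0] at hD1
    exact one_ne_zero hD1.symm
  · intro hcpos
    choose a ha using fun k => exists_max_atom (hdisc k) (μ k)
    set DN : ℕ → Set ((k : ℕ) → Ω k) := fun N => {ω | ∀ k, N ≤ k → ω k = a k} with hDN
    refine ⟨⋃ N, DN N, ?_, ?_⟩
    · refine Set.countable_iUnion fun N => ?_
      have : DN N ⊆ Set.range (fun x : (k : Fin N) → Ω k =>
          (fun k => if h : k < N then x ⟨k, h⟩ else a k : (k : ℕ) → Ω k)) := by
        intro ω hω
        refine ⟨fun k => ω k, ?_⟩
        funext k
        by_cases h : k < N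
        · simp [h]
        · simp only [dif_neg h]
          exact (hω k (le_of_not_gt h)).symm
      exact (Set.countable_range _).mono this
    · -- measure of the union is 1
      have hptop : ∀ N, p N ≠ ∞ := fun N =>
        ((hp1 N).trans_lt ENNReal.one_lt_top).ne
      have hppos : ∀ N, p N ≠ 0 := fun N =>
        (hcpos.trans_le (iInf_le _ N)).ne'
      -- cylinders
      have key : ∀ N, c ≤ p N * P (DN N) := by
        intro N
        set C : ℕ → Set ((k : ℕ) → Ω k) :=
          fun M => {ω | ∀ k ∈ Finset.Ico N (N + M), ω k = a k} with hC
        have hCmeas : ∀ M, MeasurableSet (C M) := by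
          intro M
          have : C M = ⋂ k ∈ Finset.Ico N (N + M), (fun ω : (k : ℕ) → Ω k => ω k) ⁻¹' {a k} := by
            ext ω; simp [hC]
          rw [this]
          exact MeasurableSet.biInter (Finset.Ico N (N + M)).countable_toSet
            fun k _ => (measurable_pi_apply k) (hdisc k _)
        have hanti : Antitone C := by
          intro M M' hMM ω hω k hk
          exact hω k (Finset.Ico_subset_Ico le_rfl (by omega) hk)
        have hDNC : DN N = ⋂ M, C M := by
          ext ω
          simp only [Set.mem_iInter, Set.mem_setOf_eq]
          constructor
          · intro hω M k hk
            rw [Finset.mem_Ico] at hk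
            exact hω k hk.1
          · intro hω k hk
            exact hω (k + 1 - N) k (Finset.mem_Ico.mpr ⟨hk, by omega⟩)
        have hCM : ∀ M, P (C M) = ∏ k ∈ Finset.Ico N (N + M), m k := by
          intro M
          rw [hC]
          rw [hcyl (Finset.Ico N (N + M)) a]
          exact Finset.prod_congr rfl fun k _ => ha k
        have hDNmeas : P (DN N) = ⨅ M, P (C M) := by
          rw [hDNC]
          refine hanti.measure_iInter (fun M => (hCmeas M).nullMeasurableSet) ⟨0, ?_⟩
          refine ne_top_of_le_ne_top ENNReal.one_ne_top ?_
          rw [← huniv]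
          exact measure_mono (Set.subset_univ _)
        rw [hDNmeas, ENNReal.mul_iInf_of_ne (hppos N) (hptop N)]
        refine le_iInf fun M => ?_
        rw [hCM M]
        calc c ≤ p (N + M) := iInf_le _ _
          _ = p N * ∏ k ∈ Finset.Ico N (N + M), m k := by
              rw [hp]
              simp only [Finset.range_eq_Ico]
              exact (Finset.prod_Ico_consecutive m (Nat.zero_le N) (Nat.le_add_right N M)).symm
      have hU : ∀ N, c ≤ p N * P (⋃ N', DN N') := by
        intro N
        exact (key N).trans (mul_le_mul_right (measure_mono (Set.subset_iUnion DN N)) _)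
      have hPD_le : P (⋃ N', DN N') ≤ 1 := by
        rw [← huniv]; exact measure_mono (Set.subset_univ _)
      have hPDtop : P (⋃ N', DN N') ≠ ∞ := (hPD_le.trans_lt ENNReal.one_lt_top).ne
      have h1 : c ≤ c * P (⋃ N', DN N') := by
        have h2 := le_iInf hU
        rwa [← ENNReal.iInf_mul (fun h => absurd h hPDtop)] at h2
      have h3 : (1 : ℝ≥0∞) ≤ P (⋃ N', DN N') := by
        refine (ENNReal.mul_le_mul_iff_right hcpos.ne' hctop).mp ?_
        rw [mul_one]
        exact h1
      exact le_antisymm hPD_le h3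
end

section
/- Let (Ω_k, A_k) be measurable spaces carrying probability measures μ_k and ν_k with ν_k absolutely continuous with respect to μ_k for every k, and let μ = ⊗_k μ_k, ν = ⊗_k ν_k be the infinite product measures on Ω = Π_k Ω_k. Then the dichotomy holds: either ν is absolutely continuous with respect to μ, or ν and μ are mutually singular. -/
open MeasureTheory

open Filter Set ENNReal Topology

namespace KakutaniAux

section PiLintegral

/-- Tonelli for a product of single-coordinate functions over a finite product measure. -/
lemma lintegral_pi_prod : ∀ {n : ℕ} {E : Fin n → Type*} [∀ i, MeasurableSpace (E i)]
    (m : ∀ i, Measure (E i)) [∀ i, IsProbabilityMeasure (m i)] (g : ∀ i, E i → ℝ≥0∞)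
    (hg : ∀ i, Measurable (g i)),
    ∫⁻ x, ∏ i, g i (x i) ∂(Measure.pi m) = ∏ i, ∫⁻ y, g i y ∂(m i) := by
  intro n
  induction n with
  | zero =>
    intro E _ m _ g hg
    simp [lintegral_const]
  | succ n ih =>
    intro E _ m _ g hg
    have hmp := (measurePreserving_piFinSuccAbove m 0).symm
    have hemb := (MeasurableEquiv.piFinSuccAbove E 0).symm.measurableEmbedding
    rw [← hmp.lintegral_comp_emb hemb]
    have heq : ∀ y : E 0 × ((j : Fin n) → E ((0 : Fin (n+1)).succAbove j)),
        ∏ i, g i ((MeasurableEquiv.piFinSuccAbove E 0).symm y i)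
          = g 0 y.1 * ∏ j, g ((0 : Fin (n+1)).succAbove j) (y.2 j) := by
      intro y
      rw [Fin.prod_univ_succAbove (fun i => g i ((MeasurableEquiv.piFinSuccAbove E 0).symm y i)) 0]
      simp only [MeasurableEquiv.piFinSuccAbove_symm_apply, Fin.insertNthEquiv,
        Equiv.coe_fn_mk, Fin.insertNth_apply_same, Fin.insertNth_apply_succAbove]
    simp_rw [heq]
    rw [lintegral_prod_mul (f := g 0)
      (g := fun x : (j : Fin n) → E ((0 : Fin (n+1)).succAbove j) =>
        ∏ j, g ((0 : Fin (n+1)).succAbove j) (x j)) (hg 0).aemeasurable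
      (Finset.measurable_prod _ fun j _ => (hg _).comp (measurable_pi_apply j)).aemeasurable]
    rw [ih _ _ (fun j => hg _)]
    rw [Fin.prod_univ_succAbove (fun i => ∫⁻ y, g i y ∂(m i)) 0]

end PiLintegral

section Product

variable {Ω : ℕ → Type*} [∀ k, MeasurableSpace (Ω k)]

/-- Projection on the first `n` coordinates. -/
def kproj (n : ℕ) : (∀ k, Ω k) → (∀ i : Fin n, Ω i) := fun ω i => ω i

lemma measurable_kproj (n : ℕ) : Measurable (kproj (Ω := Ω) n) :=
  measurable_pi_lambda _ fun i => measurable_pi_apply _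

variable (μ : (k : ℕ) → Measure (Ω k)) [∀ k, IsProbabilityMeasure (μ k)]
variable (P : Measure ((k : ℕ) → Ω k))

lemma isProbabilityMeasure (hP : IsProductMeasure μ P) : IsProbabilityMeasure P := by
  constructor
  have := hP ∅ (fun _ => Set.univ) (by simp)
  simpa using this

lemma map_kproj (hP : IsProductMeasure μ P) (n : ℕ) :
    Measure.map (kproj n) P = Measure.pi (fun i : Fin n => μ i) := by
  haveI := isProbabilityMeasure μ P hP
  classical
  refine (Measure.pi_eq fun E hE => ?_).symm
  rw [Measure.map_apply (measurable_kproj n) (MeasurableSet.univ_pi hE)]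
  set E' : ∀ k, Set (Ω k) := fun k => if h : k < n then E ⟨k, h⟩ else Set.univ with hE'
  have hpre : kproj (Ω := Ω) n ⁻¹' (Set.univ.pi E) = {ω | ∀ k ∈ Finset.range n, ω k ∈ E' k} := by
    ext ω
    simp only [Set.mem_preimage, Set.mem_pi, Set.mem_univ, forall_true_left, Set.mem_setOf_eq,
      Finset.mem_range, hE']
    constructor
    · intro h k hk
      rw [dif_pos hk]
      exact h ⟨k, hk⟩
    · intro h i
      have := h i i.2
      rw [dif_pos i.2] at this
      exact this
  rw [hpre, hP (Finset.range n) E' (fun k hk => by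
    rw [hE']
    by_cases h : k < n
    · simpa [dif_pos h] using hE ⟨k, h⟩
    · simp [dif_neg h])]
  rw [← Fin.prod_univ_eq_prod_range (fun k => μ k (E' k)) n]
  refine Finset.prod_congr rfl fun i _ => ?_
  simp [hE', i.2]

lemma lintegral_prod_eval (hP : IsProductMeasure μ P) {n : ℕ} (g : ∀ k, Ω k → ℝ≥0∞)
    (hg : ∀ k, Measurable (g k)) :
    ∫⁻ ω, ∏ k ∈ Finset.range n, g k (ω k) ∂P
      = ∏ k ∈ Finset.range n, ∫⁻ x, g k x ∂(μ k) := by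
  have hmeas : Measurable fun x : ∀ i : Fin n, Ω i => ∏ i : Fin n, g i (x i) :=
    Finset.measurable_prod _ fun i _ => (hg _).comp (measurable_pi_apply i)
  calc ∫⁻ ω, ∏ k ∈ Finset.range n, g k (ω k) ∂P
      = ∫⁻ ω, (fun x : ∀ i : Fin n, Ω i => ∏ i : Fin n, g i (x i)) (kproj n ω) ∂P :=
        lintegral_congr fun ω => (Fin.prod_univ_eq_prod_range (fun k => g k (ω k)) n).symm
    _ = ∫⁻ x, ∏ i : Fin n, g i (x i) ∂(Measure.map (kproj n) P) :=
        (lintegral_map hmeas (measurable_kproj n)).symm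
    _ = ∏ i : Fin n, ∫⁻ x, g i x ∂(μ i) := by
        rw [map_kproj μ P hP n, lintegral_pi_prod _ _ (fun i => hg _)]
    _ = ∏ k ∈ Finset.range n, ∫⁻ x, g k x ∂(μ k) :=
        Fin.prod_univ_eq_prod_range (fun k => ∫⁻ x, g k x ∂(μ k)) n

variable (ν : (k : ℕ) → Measure (Ω k)) [∀ k, IsProbabilityMeasure (ν k)]
variable (Q : Measure ((k : ℕ) → Ω k))

/-- The measure of a cylinder set under `Q` as a `P`-integral of the density. -/
lemma cyl_apply (hP : IsProductMeasure μ P) (hQ : IsProductMeasure ν Q)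
    (f : ∀ k, Ω k → ℝ≥0∞) (hfm : ∀ k, Measurable (f k))
    (hν : ∀ k, (μ k).withDensity (f k) = ν k)
    (n : ℕ) (T : Set (∀ i : Fin n, Ω i)) (hT : MeasurableSet T) :
    Q (kproj n ⁻¹' T) = ∫⁻ ω in kproj n ⁻¹' T, ∏ k ∈ Finset.range n, f k (ω k) ∂P := by
  classical
  have hprodmeas : Measurable fun x : ∀ i : Fin n, Ω i => ∏ i : Fin n, f i (x i) :=
    Finset.measurable_prod _ fun i _ => (hfm _).comp (measurable_pi_apply i)
  have h2 : Measure.pi (fun i : Fin n => ν i)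
      = (Measure.pi fun i : Fin n => μ i).withDensity (fun x => ∏ i : Fin n, f i (x i)) := by
    refine (Measure.pi_eq fun E hE => ?_)
    rw [withDensity_apply _ (MeasurableSet.univ_pi hE)]
    have hind : ∀ x : ∀ i : Fin n, Ω i,
        (Set.univ.pi E).indicator (fun x => ∏ i : Fin n, f i (x i)) x
          = ∏ i : Fin n, (E i).indicator (f i) (x i) := by
      intro x
      by_cases hx : x ∈ Set.univ.pi E
      · rw [Set.indicator_of_mem hx]
        refine Finset.prod_congr rfl fun i _ => ?_
        rw [Set.indicator_of_mem (hx i (Set.mem_univ i))]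
      · rw [Set.indicator_of_notMem hx]
        rw [Set.mem_pi] at hx
        push_neg at hx
        obtain ⟨i, _, hi⟩ := hx
        exact (Finset.prod_eq_zero (Finset.mem_univ i)
          (by rw [Set.indicator_of_notMem hi])).symm
    rw [← lintegral_indicator (MeasurableSet.univ_pi hE)]
    simp_rw [hind]
    rw [lintegral_pi_prod _ _ (fun i => (hfm _).indicator (hE i))]
    refine Finset.prod_congr rfl fun i _ => ?_
    rw [lintegral_indicator (hE i), ← withDensity_apply _ (hE i), hν]
  have hQmap := map_kproj ν Q hQ n
  have hPmap := map_kproj μ P hP n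
  calc Q (kproj n ⁻¹' T) = (Measure.map (kproj n) Q) T :=
        (Measure.map_apply (measurable_kproj n) hT).symm
    _ = ∫⁻ x in T, ∏ i : Fin n, f i (x i) ∂(Measure.pi fun i : Fin n => μ i) := by
        rw [hQmap, h2, withDensity_apply _ hT]
    _ = ∫⁻ x, T.indicator (fun x => ∏ i : Fin n, f i (x i)) x ∂(Measure.map (kproj n) P) := by
        rw [hPmap, lintegral_indicator hT]
    _ = ∫⁻ ω, T.indicator (fun x => ∏ i : Fin n, f i (x i)) (kproj n ω) ∂P :=
        lintegral_map (hprodmeas.indicator hT) (measurable_kproj n)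
    _ = ∫⁻ ω in kproj n ⁻¹' T, ∏ k ∈ Finset.range n, f k (ω k) ∂P := by
        rw [← lintegral_indicator (measurable_kproj n hT)]
        congr 1
        ext ω
        rw [← Set.indicator_comp_right (kproj n)
          (g := fun x => ∏ i : Fin n, f i (x i)) (s := T)]
        by_cases hω : ω ∈ kproj n ⁻¹' T
        · rw [Set.indicator_of_mem hω, Set.indicator_of_mem hω, Function.comp_apply]
          exact (Fin.prod_univ_eq_prod_range (fun k => f k (ω k)) n)
        · rw [Set.indicator_of_notMem hω, Set.indicator_of_notMem hω]

lemma singular_of_inf_zero (hP : IsProductMeasure μ P) (hQ : IsProductMeasure ν Q)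
    (f : ∀ k, Ω k → ℝ≥0∞) (hfm : ∀ k, Measurable (f k))
    (hν : ∀ k, (μ k).withDensity (f k) = ν k)
    (hinf : ⨅ n, ∏ k ∈ Finset.range n, ∫⁻ x, f k x ^ (2⁻¹:ℝ) ∂(μ k) = 0) :
    Q.MutuallySingular P := by
  haveI := isProbabilityMeasure μ P hP
  haveI := isProbabilityMeasure ν Q hQ
  set a : ℕ → ℝ≥0∞ := fun k => ∫⁻ x, f k x ^ (2⁻¹:ℝ) ∂(μ k) with ha
  set b : ℕ → ℝ≥0∞ := fun n => ∏ k ∈ Finset.range n, a k with hb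
  set S : ℕ → (∀ k, Ω k) → ℝ≥0∞ := fun n ω => ∏ k ∈ Finset.range n, f k (ω k) ^ (2⁻¹:ℝ)
    with hS
  have hfS : ∀ (n : ℕ) (ω : ∀ k, Ω k),
      ∏ k ∈ Finset.range n, f k (ω k) = S n ω * S n ω := by
    intro n ω
    rw [hS, ← Finset.prod_mul_distrib]
    refine Finset.prod_congr rfl fun k _ => ?_
    rw [← ENNReal.rpow_add_of_nonneg (2⁻¹:ℝ) (2⁻¹:ℝ) (by norm_num) (by norm_num)]
    norm_num
  have hSmeas : ∀ n, Measurable (S n) := fun n => Finset.measurable_prod _ fun k _ =>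
    ((hfm k).comp (measurable_pi_apply k)).pow_const (2⁻¹:ℝ)
  have hSint : ∀ n, ∫⁻ ω, S n ω ∂P = b n := fun n =>
    lintegral_prod_eval μ P hP _ (fun k => (hfm k).pow_const (2⁻¹:ℝ))
  set c : ℕ → ℝ≥0∞ := fun j => (2⁻¹ : ℝ≥0∞) ^ j with hc
  have hc0 : ∀ j, c j ≠ 0 := fun j => by simp [hc]
  have hctop : ∀ j, c j ≠ ∞ := fun j => by
    refine ne_of_lt (lt_of_le_of_lt (pow_le_one' (by norm_num) j) ?_); norm_num
  have hex : ∀ j : ℕ, ∃ n, b n ≤ c j * c j := by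
    intro j
    by_contra h
    push_neg at h
    have h2 : c j * c j ≤ ⨅ n, b n := le_iInf fun n => (h n).le
    rw [hinf, nonpos_iff_eq_zero, mul_eq_zero] at h2
    rcases h2 with h2 | h2 <;> exact hc0 j h2
  choose nn hnn using hex
  set A : ℕ → Set (∀ k, Ω k) := fun j => {ω | c j ≤ S (nn j) ω} with hA
  have hAmeas : ∀ j, MeasurableSet (A j) := fun j =>
    measurableSet_le measurable_const (hSmeas _)
  have hPA : ∀ j, P (A j) ≤ c j := by
    intro j
    have h1 := mul_meas_ge_le_lintegral₀ (μ := P) (hSmeas (nn j)).aemeasurable (c j)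
    rw [hSint] at h1
    exact (ENNReal.mul_le_mul_iff_right (hc0 j) (hctop j)).mp (h1.trans (hnn j))
  have hQA : ∀ j, Q (A j)ᶜ ≤ c j * c j := by
    intro j
    have hTm : MeasurableSet {x : ∀ i : Fin (nn j), Ω i |
        ∏ i : Fin (nn j), f i (x i) ^ (2⁻¹:ℝ) < c j} := by
      exact measurableSet_lt (Finset.measurable_prod _ fun i _ =>
        ((hfm _).comp (measurable_pi_apply i)).pow_const (2⁻¹:ℝ)) measurable_const
    have hprc : ∀ ω : ∀ k, Ω k,
        ∏ i : Fin (nn j), f i (kproj (nn j) ω i) ^ (2⁻¹:ℝ) = S (nn j) ω :=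
      fun ω => Fin.prod_univ_eq_prod_range (fun k => f k (ω k) ^ (2⁻¹:ℝ)) (nn j)
    have hAc : (A j)ᶜ = kproj (nn j) ⁻¹' {x : ∀ i : Fin (nn j), Ω i |
        ∏ i : Fin (nn j), f i (x i) ^ (2⁻¹:ℝ) < c j} := by
      ext ω
      simp only [hA, Set.mem_compl_iff, Set.mem_setOf_eq, not_le, Set.mem_preimage]
      rw [hprc ω]
    rw [hAc, cyl_apply μ P ν Q hP hQ f hfm hν _ _ hTm]
    have hle : ∫⁻ ω in kproj (nn j) ⁻¹' {x : ∀ i : Fin (nn j), Ω i |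
          ∏ i : Fin (nn j), f i (x i) ^ (2⁻¹:ℝ) < c j},
        ∏ k ∈ Finset.range (nn j), f k (ω k) ∂P ≤ ∫⁻ _ in kproj (nn j) ⁻¹' {x : ∀ i : Fin (nn j), Ω i |
          ∏ i : Fin (nn j), f i (x i) ^ (2⁻¹:ℝ) < c j}, (c j * c j) ∂P := by
      refine setLIntegral_mono measurable_const fun ω hω => ?_
      rw [Set.mem_preimage, Set.mem_setOf_eq, hprc ω] at hω
      rw [hfS (nn j) ω]
      exact mul_le_mul' hω.le hω.le
    refine hle.trans ?_
    rw [setLIntegral_const]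
    exact (mul_le_mul_right prob_le_one _).trans_eq (mul_one _)
  set N : Set (∀ k, Ω k) := ⋂ J : ℕ, ⋃ j, ⋃ (_ : J ≤ j), A j with hN
  have hNmeas : MeasurableSet N :=
    MeasurableSet.iInter fun J => MeasurableSet.iUnion fun j =>
      MeasurableSet.iUnion fun _ => hAmeas j
  have hcc : Tendsto (fun j => c j * 2) atTop (𝓝 0) := by
    have h1 : Tendsto c atTop (𝓝 0) :=
      ENNReal.tendsto_pow_atTop_nhds_zero_of_lt_one (by norm_num)
    have := ENNReal.Tendsto.mul_const (b := 2) h1 (Or.inr (by norm_num))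
    simpa using this
  have hPN : P N = 0 := by
    refine nonpos_iff_eq_zero.mp (ge_of_tendsto' hcc fun J => ?_)
    have h1 : N ⊆ ⋃ i : ℕ, A (J + i) := by
      refine (Set.iInter_subset _ J).trans ?_
      intro ω hω
      simp only [Set.mem_iUnion] at hω ⊢
      obtain ⟨j, hJ, hj⟩ := hω
      exact ⟨j - J, by rwa [Nat.add_sub_cancel' hJ]⟩
    refine (measure_mono h1).trans ((measure_iUnion_le _).trans ?_)
    have h2 : ∀ i : ℕ, P (A (J + i)) ≤ c J * c i := fun i => (hPA _).trans (le_of_eq (by simp [hc, pow_add]))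
    refine (ENNReal.tsum_le_tsum h2).trans ?_
    rw [ENNReal.tsum_mul_left]
    refine mul_le_mul_right ?_ _
    rw [hc]
    simp [ENNReal.tsum_geometric, ENNReal.one_sub_inv_two]
  have hQNc : Q Nᶜ = 0 := by
    have hNc : Nᶜ = ⋃ J : ℕ, (⋃ j, ⋃ (_ : J ≤ j), A j)ᶜ := by
      rw [hN, Set.compl_iInter]
    refine nonpos_iff_eq_zero.mp ?_
    rw [hNc]
    refine (measure_iUnion_le _).trans ?_
    have h0 : ∀ J : ℕ, Q (⋂ j, ⋂ (_ : J ≤ j), (A j)ᶜ) = 0 := by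
      intro J
      have hcc2 : Tendsto (fun j => c j * c j) atTop (𝓝 0) := by
        have h1 : Tendsto c atTop (𝓝 0) :=
          ENNReal.tendsto_pow_atTop_nhds_zero_of_lt_one (by norm_num)
        simpa using ENNReal.Tendsto.mul h1 (Or.inr (by norm_num)) h1 (Or.inr (by norm_num))
      refine nonpos_iff_eq_zero.mp (ge_of_tendsto hcc2 ?_)
      refine eventually_atTop.mpr ⟨J, fun j hj => ?_⟩
      exact le_trans (measure_mono (Set.iInter₂_subset j hj)) (hQA j)
    simp only [Set.compl_iUnion]
    simp [h0]
  exact ⟨Nᶜ, hNmeas.compl, hQNc, by rwa [compl_compl]⟩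

/-- In the absolutely continuous case, cylinder measures are eventually given by the finite
products of densities. -/
lemma cyl_apply_ge (hP : IsProductMeasure μ P) (hQ : IsProductMeasure ν Q)
    (f : ∀ k, Ω k → ℝ≥0∞) (hfm : ∀ k, Measurable (f k))
    (hν : ∀ k, (μ k).withDensity (f k) = ν k)
    {n₀ n : ℕ} (h : n₀ ≤ n) (T : Set (∀ i : Fin n₀, Ω i)) (hT : MeasurableSet T) :
    Q (kproj n₀ ⁻¹' T) = ∫⁻ ω in kproj n₀ ⁻¹' T, ∏ k ∈ Finset.range n, f k (ω k) ∂P := by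
  have hgm : Measurable (fun x : ∀ i : Fin n, Ω i => (fun i : Fin n₀ => x ⟨i.1, lt_of_lt_of_le i.2 h⟩)) :=
    measurable_pi_lambda _ fun i => measurable_pi_apply _
  have hset : kproj (Ω := Ω) n₀ ⁻¹' T
      = kproj n ⁻¹' ((fun x : ∀ i : Fin n, Ω i => (fun i : Fin n₀ => x ⟨i.1, lt_of_lt_of_le i.2 h⟩)) ⁻¹' T) := rfl
  rw [hset, cyl_apply μ P ν Q hP hQ f hfm hν n _ (hgm hT)]

lemma ac_of_inf_ne_zero (hP : IsProductMeasure μ P) (hQ : IsProductMeasure ν Q)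
    (f : ∀ k, Ω k → ℝ≥0∞) (hfm : ∀ k, Measurable (f k))
    (hν : ∀ k, (μ k).withDensity (f k) = ν k)
    (hfint : ∀ k, ∫⁻ x, f k x ∂(μ k) = 1)
    (hinf : (⨅ n, ∏ k ∈ Finset.range n, ∫⁻ x, f k x ^ (2⁻¹:ℝ) ∂(μ k)) ≠ 0) :
    Q ≪ P := by
  classical
  haveI := isProbabilityMeasure μ P hP
  haveI := isProbabilityMeasure ν Q hQ
  set a : ℕ → ℝ≥0∞ := fun k => ∫⁻ x, f k x ^ (2⁻¹:ℝ) ∂(μ k) with ha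
  set b : ℕ → ℝ≥0∞ := fun n => ∏ k ∈ Finset.range n, a k with hb
  set S : ℕ → (∀ k, Ω k) → ℝ≥0∞ := fun n ω => ∏ k ∈ Finset.range n, f k (ω k) ^ (2⁻¹:ℝ)
    with hS
  set X : ℕ → (∀ k, Ω k) → ℝ≥0∞ := fun n ω => ∏ k ∈ Finset.range n, f k (ω k) with hX
  have hfS : ∀ (n : ℕ) (ω : ∀ k, Ω k), X n ω = S n ω * S n ω := by
    intro n ω
    rw [hS, hX, ← Finset.prod_mul_distrib]
    refine Finset.prod_congr rfl fun k _ => ?_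
    rw [← ENNReal.rpow_add_of_nonneg (2⁻¹:ℝ) (2⁻¹:ℝ) (by norm_num) (by norm_num)]
    norm_num
  have hSmeas : ∀ n, Measurable (S n) := fun n => Finset.measurable_prod _ fun k _ =>
    ((hfm k).comp (measurable_pi_apply k)).pow_const (2⁻¹:ℝ)
  have hXmeas : ∀ n, Measurable (X n) := fun n => Finset.measurable_prod _ fun k _ =>
    (hfm k).comp (measurable_pi_apply k)
  have hXint : ∀ n, ∫⁻ ω, X n ω ∂P = 1 := fun n => by
    rw [hX, lintegral_prod_eval μ P hP _ hfm]
    simp [hfint]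
  -- `a k ≤ 1` by Cauchy-Schwarz
  have ha1 : ∀ k, a k ≤ 1 := by
    intro k
    have hconj : Real.HolderConjugate 2 2 := Real.holderConjugate_iff.mpr ⟨one_lt_two, by norm_num⟩
    have h := ENNReal.lintegral_mul_le_Lp_mul_Lq (μ k) hconj
      (f := fun x => f k x ^ (2⁻¹:ℝ)) (g := fun _ => (1:ℝ≥0∞))
      ((hfm k).pow_const _).aemeasurable aemeasurable_const
    simp only [Pi.mul_apply, mul_one] at h
    rw [ha]
    refine h.trans ?_
    have h1 : ∀ x : Ω k, (f k x ^ (2⁻¹:ℝ)) ^ (2:ℝ) = f k x := by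
      intro x
      rw [← ENNReal.rpow_mul]
      norm_num
    simp only [h1, ENNReal.one_rpow, lintegral_const, measure_univ, mul_one, one_mul, hfint k]
    simp
  -- cross moments
  have hcross : ∀ m n, m ≤ n →
      ∫⁻ ω, S m ω * S n ω ∂P = ∏ k ∈ Finset.Ico m n, a k := by
    intro m n hmn
    set g : ∀ k, Ω k → ℝ≥0∞ := fun k x => if k < m then f k x else f k x ^ (2⁻¹:ℝ) with hg
    have hgm : ∀ k, Measurable (g k) := fun k => by
      rw [hg]
      by_cases h : k < m
      · simpa [h] using hfm k
      · simpa [h] using (hfm k).pow_const (2⁻¹:ℝ)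
    have hptw : ∀ ω, S m ω * S n ω = ∏ k ∈ Finset.range n, g k (ω k) := by
      intro ω
      have h1 : ∏ k ∈ Finset.range m, g k (ω k) = X m ω := by
        rw [hX]
        refine Finset.prod_congr rfl fun k hk => ?_
        rw [hg]
        simp [Finset.mem_range.mp hk]
      have h2 : ∏ k ∈ Finset.Ico m n, g k (ω k)
          = ∏ k ∈ Finset.Ico m n, f k (ω k) ^ (2⁻¹:ℝ) := by
        refine Finset.prod_congr rfl fun k hk => ?_
        rw [hg]
        simp [not_lt.mpr (Finset.mem_Ico.mp hk).1]
      have h3 : S n ω = S m ω * ∏ k ∈ Finset.Ico m n, f k (ω k) ^ (2⁻¹:ℝ) := by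
        rw [hS]
        exact (Finset.prod_range_mul_prod_Ico _ hmn).symm
      rw [h3, ← Finset.prod_range_mul_prod_Ico (fun k => g k (ω k)) hmn, h1, h2,
        ← mul_assoc, ← hfS m ω]
    calc ∫⁻ ω, S m ω * S n ω ∂P
        = ∫⁻ ω, ∏ k ∈ Finset.range n, g k (ω k) ∂P := lintegral_congr hptw
      _ = ∏ k ∈ Finset.range n, ∫⁻ x, g k x ∂(μ k) := lintegral_prod_eval μ P hP _ hgm
      _ = ∏ k ∈ Finset.Ico m n, a k := by
          rw [← Finset.prod_range_mul_prod_Ico (fun k => ∫⁻ x, g k x ∂(μ k)) hmn]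
          have h1 : ∏ k ∈ Finset.range m, ∫⁻ x, g k x ∂(μ k) = 1 := by
            refine Finset.prod_eq_one fun k hk => ?_
            have hk' : k < m := Finset.mem_range.mp hk
            rw [hg]
            simp only [hk', if_true]
            exact hfint k
          have h2 : ∏ k ∈ Finset.Ico m n, ∫⁻ x, g k x ∂(μ k)
              = ∏ k ∈ Finset.Ico m n, a k := by
            refine Finset.prod_congr rfl fun k hk => ?_
            have hk' : ¬ k < m := not_lt.mpr (Finset.mem_Ico.mp hk).1
            rw [hg, ha]
            simp only [hk', if_false]
          rw [h1, h2, one_mul]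
  have haIco1 : ∀ m n, (∏ k ∈ Finset.Ico m n, a k) ≤ 1 :=
    fun m n => Finset.prod_le_one (fun _ _ => zero_le) (fun k _ => ha1 k)
  have hb1 : ∀ n, b n ≤ 1 := fun n => Finset.prod_le_one (fun _ _ => zero_le)
    (fun k _ => ha1 k)
  have hbtop : ∀ n, b n ≠ ∞ := fun n => ((hb1 n).trans_lt ENNReal.one_lt_top).ne
  set L : ℝ≥0∞ := ⨅ n, b n with hLdef
  have hL0 : L ≠ 0 := hinf
  have hLle : ∀ n, L ≤ b n := fun n => iInf_le _ n
  have hLtop : L ≠ ∞ := ((hLle 0).trans_lt ((hb1 0).trans_lt ENNReal.one_lt_top)).ne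
  set β : ℕ → ℝ := fun n => (b n).toReal with hβ
  set l : ℝ := L.toReal with hl
  have hlpos : 0 < l := ENNReal.toReal_pos hL0 hLtop
  have hlle : ∀ n, l ≤ β n := fun n => ENNReal.toReal_mono (hbtop n) (hLle n)
  have hbsplit : ∀ {m n : ℕ}, m ≤ n → β n = β m * (∏ k ∈ Finset.Ico m n, a k).toReal := by
    intro m n hmn
    have hbn : b n = b m * ∏ k ∈ Finset.Ico m n, a k := by
      rw [hb]
      exact (Finset.prod_range_mul_prod_Ico a hmn).symm
    show (b n).toReal = (b m).toReal * _
    rw [hbn, ENNReal.toReal_mul]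
  have hβanti : Antitone β := by
    intro m n hmn
    rw [hbsplit hmn]
    refine mul_le_of_le_one_right ENNReal.toReal_nonneg ?_
    exact ENNReal.toReal_mono ENNReal.one_ne_top (haIco1 m n) |>.trans (by simp)
  have hbdd : BddBelow (Set.range β) := ⟨l, by rintro x ⟨n, rfl⟩; exact hlle n⟩
  set l' : ℝ := ⨅ n, β n with hl'
  have hl'le : ∀ n, l' ≤ β n := fun n => ciInf_le hbdd n
  have hβtendsto : Tendsto β atTop (𝓝 l') := tendsto_atTop_ciInf hβanti hbdd
  -- the real-valued square roots of the densities
  set W : ℕ → (∀ k, Ω k) → ℝ := fun n ω => (S n ω).toReal with hW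
  have hWmeas : ∀ n, Measurable (W n) := fun n => (hSmeas n).ennreal_toReal
  have hWsq : ∀ n ω, W n ω ^ 2 = (X n ω).toReal := by
    intro n ω
    rw [hW, hfS n ω, ENNReal.toReal_mul]
    ring
  have hXintb : ∀ n, Integrable (fun ω => (X n ω).toReal) P := fun n =>
    integrable_toReal_of_lintegral_ne_top (hXmeas n).aemeasurable
      (by rw [hXint n]; exact ENNReal.one_ne_top)
  have hWmem : ∀ n, MemLp (W n) 2 P := fun n => by
    refine (memLp_two_iff_integrable_sq (hWmeas n).aestronglyMeasurable).mpr ?_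
    have : (fun ω => W n ω ^ 2) = fun ω => (X n ω).toReal := funext fun ω => hWsq n ω
    rw [this]
    exact hXintb n
  set φ : ℕ → Lp ℝ 2 P := fun n => (hWmem n).toLp (W n) with hφ
  -- inner products
  have hinner : ∀ m n, m ≤ n → (inner ℝ (φ m) (φ n) : ℝ)
      = (∏ k ∈ Finset.Ico m n, a k).toReal := by
    intro m n hmn
    rw [hφ, L2.inner_def]
    have h1 : ∫ ω, (inner ℝ ((hWmem m).toLp (W m) ω) ((hWmem n).toLp (W n) ω) : ℝ) ∂P
        = ∫ ω, (S m ω * S n ω).toReal ∂P := by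
      refine integral_congr_ae ?_
      filter_upwards [(hWmem m).coeFn_toLp, (hWmem n).coeFn_toLp] with ω hm hn
      rw [hm, hn, RCLike.inner_apply, hW, ENNReal.toReal_mul]
      simp [starRingEnd_apply, mul_comm]
    rw [h1, integral_toReal (f := fun ω => S m ω * S n ω) ((hSmeas m).mul (hSmeas n)).aemeasurable
      (ae_lt_top (f := fun ω => S m ω * S n ω) ((hSmeas m).mul (hSmeas n))
        (by rw [hcross m n hmn]; exact ((haIco1 m n).trans_lt ENNReal.one_lt_top).ne)),
      hcross m n hmn]
  have hnorm : ∀ n, ‖φ n‖ = 1 := by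
    intro n
    have h1 := hinner n n le_rfl
    simp only [Finset.Ico_self, Finset.prod_empty, ENNReal.toReal_one] at h1
    have h2 : ‖φ n‖ ^ 2 = 1 := by rw [← real_inner_self_eq_norm_sq]; exact h1
    have h3 : ‖φ n‖ = Real.sqrt (‖φ n‖ ^ 2) := (Real.sqrt_sq (norm_nonneg _)).symm
    rw [h3, h2, Real.sqrt_one]
  -- Cauchy sequence
  have hdist : ∀ N m n, N ≤ m → N ≤ n →
      dist (φ m) (φ n) ≤ Real.sqrt (2 * (β N - l') / l) := by
    have key : ∀ N m n, N ≤ m → m ≤ n →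
        dist (φ m) (φ n) ≤ Real.sqrt (2 * (β N - l') / l) := by
      intro N m n hNm hmn
      set γ : ℝ := (∏ k ∈ Finset.Ico m n, a k).toReal with hγdef
      have hγβ : β n = β m * γ := hbsplit hmn
      have hd2 : dist (φ m) (φ n) ^ 2 = 2 - 2 * γ := by
        rw [dist_eq_norm, norm_sub_sq_real, hinner m n hmn, hnorm m, hnorm n, ← hγdef]
        ring
      have hγ1 : γ ≤ 1 := by
        rw [hγdef]
        exact (ENNReal.toReal_mono ENNReal.one_ne_top (haIco1 m n)).trans (by simp)
      have hineq : 2 - 2 * γ ≤ 2 * (β N - l') / l := by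
        have h1 : β m - β n ≤ β N - l' := sub_le_sub (hβanti hNm) (hl'le n)
        have h2 : β m * (1 - γ) = β m - β n := by rw [hγβ]; ring
        have h3 : l * (1 - γ) ≤ β m * (1 - γ) :=
          mul_le_mul_of_nonneg_right (hlle m) (by linarith)
        have h4 : (1 - γ) ≤ (β N - l') / l := (le_div_iff₀ hlpos).mpr (by nlinarith)
        calc 2 - 2 * γ = 2 * (1 - γ) := by ring
          _ ≤ 2 * ((β N - l') / l) := by linarith
          _ = 2 * (β N - l') / l := by ring
      calc dist (φ m) (φ n) = Real.sqrt (dist (φ m) (φ n) ^ 2) :=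
            (Real.sqrt_sq dist_nonneg).symm
        _ ≤ Real.sqrt (2 * (β N - l') / l) :=
            Real.sqrt_le_sqrt (by rw [hd2]; exact hineq)
    intro N m n hNm hNn
    rcases le_total m n with h | h
    · exact key N m n hNm h
    · rw [dist_comm]
      exact key N n m hNn h
  have hDto : Tendsto (fun N => Real.sqrt (2 * (β N - l') / l)) atTop (𝓝 0) := by
    have h1 : Tendsto (fun N => 2 * (β N - l') / l) atTop (𝓝 0) := by
      have h2 : Tendsto (fun N => 2 * (β N - l') / l) atTop (𝓝 (2 * (l' - l') / l)) :=
        ((hβtendsto.sub (tendsto_const_nhds (x := l'))).const_mul (2:ℝ)).div_const l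
      simpa using h2
    have h3 := (Real.continuous_sqrt.tendsto 0).comp h1
    simpa [Function.comp_def] using h3
  have hcauchy : CauchySeq φ :=
    cauchySeq_of_le_tendsto_0 _ (fun n m N hn hm => hdist N n m hn hm) hDto
  obtain ⟨ζ, hζ⟩ := cauchySeq_tendsto_of_complete hcauchy
  -- the candidate density
  have hζmem : MemLp (⇑ζ) 2 P := Lp.memLp ζ
  have hζsq : Integrable (fun ω => (ζ : (∀ k, Ω k) → ℝ) ω ^ 2) P := hζmem.integrable_sq
  -- L² Cauchy-Schwarz for Lp elements
  have hCS : ∀ u v : Lp ℝ 2 P, ∫ ω, |(u : (∀ k, Ω k) → ℝ) ω * (v : (∀ k, Ω k) → ℝ) ω| ∂P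
      ≤ ‖u‖ * ‖v‖ := by
    intro u v
    have habs : (inner ℝ |u| |v| : ℝ)
        = ∫ ω, |(u : (∀ k, Ω k) → ℝ) ω * (v : (∀ k, Ω k) → ℝ) ω| ∂P := by
      rw [L2.inner_def]
      refine integral_congr_ae ?_
      filter_upwards [Lp.coeFn_abs u, Lp.coeFn_abs v] with ω h1 h2
      rw [RCLike.inner_apply, h1, h2, abs_mul]
      simp [starRingEnd_apply, mul_comm]
    have hnu : ‖|u|‖ = ‖u‖ := by
      rw [Lp.norm_def, Lp.norm_def, eLpNorm_congr_ae (Lp.coeFn_abs u)]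
      congr 1
      have : (fun ω => |(u : (∀ k, Ω k) → ℝ) ω|) = fun ω => ‖(u : (∀ k, Ω k) → ℝ) ω‖ := by
        funext ω; rw [Real.norm_eq_abs]
      rw [this, eLpNorm_norm]
    have hnv : ‖|v|‖ = ‖v‖ := by
      rw [Lp.norm_def, Lp.norm_def, eLpNorm_congr_ae (Lp.coeFn_abs v)]
      congr 1
      have : (fun ω => |(v : (∀ k, Ω k) → ℝ) ω|) = fun ω => ‖(v : (∀ k, Ω k) → ℝ) ω‖ := by
        funext ω; rw [Real.norm_eq_abs]
      rw [this, eLpNorm_norm]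
    calc ∫ ω, |(u : (∀ k, Ω k) → ℝ) ω * (v : (∀ k, Ω k) → ℝ) ω| ∂P
        = (inner ℝ |u| |v| : ℝ) := habs.symm
      _ ≤ ‖|u|‖ * ‖|v|‖ := real_inner_le_norm _ _
      _ = ‖u‖ * ‖v‖ := by rw [hnu, hnv]
  -- convergence of integrals over any measurable set
  have hconvA : ∀ A : Set (∀ k, Ω k), MeasurableSet A →
      Tendsto (fun n => ∫ ω in A, W n ω ^ 2 ∂P) atTop
        (𝓝 (∫ ω in A, (ζ : (∀ k, Ω k) → ℝ) ω ^ 2 ∂P)) := by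
    intro A hA
    rw [tendsto_iff_dist_tendsto_zero]
    have hbound : ∀ n, dist (∫ ω in A, W n ω ^ 2 ∂P)
        (∫ ω in A, (ζ : (∀ k, Ω k) → ℝ) ω ^ 2 ∂P) ≤ ‖φ n - ζ‖ * ‖φ n + ζ‖ := by
      intro n
      have hWint : Integrable (fun ω => W n ω ^ 2) P := (hWmem n).integrable_sq
      rw [Real.dist_eq, ← integral_sub hWint.restrict hζsq.restrict]
      have h1 : |∫ ω in A, (W n ω ^ 2 - (ζ : (∀ k, Ω k) → ℝ) ω ^ 2) ∂P|
          ≤ ∫ ω in A, |W n ω ^ 2 - (ζ : (∀ k, Ω k) → ℝ) ω ^ 2| ∂P := by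
        have := norm_integral_le_integral_norm (μ := P.restrict A)
          (f := fun ω => W n ω ^ 2 - (ζ : (∀ k, Ω k) → ℝ) ω ^ 2)
        simpa [Real.norm_eq_abs] using this
      have h2 : ∫ ω in A, |W n ω ^ 2 - (ζ : (∀ k, Ω k) → ℝ) ω ^ 2| ∂P
          ≤ ∫ ω, |W n ω ^ 2 - (ζ : (∀ k, Ω k) → ℝ) ω ^ 2| ∂P :=
        setIntegral_le_integral (hWint.sub hζsq).abs
          (Filter.Eventually.of_forall fun ω => abs_nonneg _)
      have h3 : ∫ ω, |W n ω ^ 2 - (ζ : (∀ k, Ω k) → ℝ) ω ^ 2| ∂P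
          ≤ ‖φ n - ζ‖ * ‖φ n + ζ‖ := by
        have h4 : ∫ ω, |W n ω ^ 2 - (ζ : (∀ k, Ω k) → ℝ) ω ^ 2| ∂P
            = ∫ ω, |((φ n - ζ : Lp ℝ 2 P) : (∀ k, Ω k) → ℝ) ω
                * ((φ n + ζ : Lp ℝ 2 P) : (∀ k, Ω k) → ℝ) ω| ∂P := by
          refine integral_congr_ae ?_
          filter_upwards [Lp.coeFn_sub (φ n) ζ, Lp.coeFn_add (φ n) ζ,
            (hWmem n).coeFn_toLp] with ω hsub hadd hcoe
          rw [hsub, hadd]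
          simp only [Pi.sub_apply, Pi.add_apply, hφ]
          rw [hcoe]
          have : W n ω ^ 2 - (ζ : (∀ k, Ω k) → ℝ) ω ^ 2
              = (W n ω - (ζ : (∀ k, Ω k) → ℝ) ω) * (W n ω + (ζ : (∀ k, Ω k) → ℝ) ω) := by
            ring
          rw [this]
        rw [h4]
        exact hCS _ _
      exact (h1.trans h2).trans h3
    have hzero : Tendsto (fun n => ‖φ n - ζ‖ * ‖φ n + ζ‖) atTop (𝓝 0) := by
      have h1 : Tendsto (fun n => ‖φ n - ζ‖) atTop (𝓝 0) :=
        tendsto_iff_norm_sub_tendsto_zero.mp hζ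
      have h2 : Tendsto (fun n => ‖φ n + ζ‖) atTop (𝓝 ‖ζ + ζ‖) :=
        (hζ.add tendsto_const_nhds).norm
      simpa using h1.mul h2
    refine squeeze_zero (fun n => dist_nonneg) hbound hzero
  -- identification of Q with the density measure
  have hζm : AEMeasurable (fun ω => ENNReal.ofReal ((ζ : (∀ k, Ω k) → ℝ) ω ^ 2)) P :=
    (ENNReal.measurable_ofReal.comp_aemeasurable
      ((Lp.aestronglyMeasurable ζ).aemeasurable.pow_const 2))
  have hkey : ∀ (n : ℕ) (T : Set (∀ i : Fin n, Ω i)), MeasurableSet T →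
      Q (kproj n ⁻¹' T)
        = (P.withDensity (fun ω => ENNReal.ofReal ((ζ : (∀ k, Ω k) → ℝ) ω ^ 2)))
            (kproj n ⁻¹' T) := by
    intro n T hT
    have hAmeas : MeasurableSet (kproj (Ω := Ω) n ⁻¹' T) := measurable_kproj n hT
    -- the sequence of integrals is eventually constant with value (Q A).toReal
    have hconst : ∀ j, n ≤ j → ∫ ω in kproj n ⁻¹' T, W j ω ^ 2 ∂P
        = (Q (kproj n ⁻¹' T)).toReal := by
      intro j hj
      have hQA := cyl_apply_ge μ P ν Q hP hQ f hfm hν hj T hT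
      have h1 : ∫ ω in kproj n ⁻¹' T, W j ω ^ 2 ∂P
          = ∫ ω in kproj n ⁻¹' T, (X j ω).toReal ∂P := by
        refine integral_congr_ae (Filter.Eventually.of_forall fun ω => hWsq j ω)
      have h2 : ∫ ω in kproj n ⁻¹' T, (X j ω).toReal ∂P
          = (∫⁻ ω in kproj n ⁻¹' T, X j ω ∂P).toReal := by
        refine integral_toReal ((hXmeas j).aemeasurable.restrict) ?_
        refine ae_restrict_of_ae (ae_lt_top (hXmeas j) ?_)
        rw [hXint j]
        exact ENNReal.one_ne_top
      rw [h1, h2]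
      simp only [hX]
      rw [← hQA]
    have hconv := hconvA (kproj n ⁻¹' T) hAmeas
    have hlim : (Q (kproj n ⁻¹' T)).toReal
        = ∫ ω in kproj n ⁻¹' T, (ζ : (∀ k, Ω k) → ℝ) ω ^ 2 ∂P := by
      refine tendsto_nhds_unique ?_ hconv
      refine Tendsto.congr' ?_ tendsto_const_nhds
      filter_upwards [eventually_ge_atTop n] with j hj
      exact (hconst j hj).symm
    rw [withDensity_apply _ hAmeas,
      ← ofReal_integral_eq_lintegral_ofReal hζsq.restrict
        (Filter.Eventually.of_forall fun ω => sq_nonneg _),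
      ← hlim, ENNReal.ofReal_toReal (measure_ne_top Q _)]
  have hQeq : Q = P.withDensity (fun ω => ENNReal.ofReal ((ζ : (∀ k, Ω k) → ℝ) ω ^ 2)) := by
    refine ext_of_generate_finite (measurableCylinders Ω)
      generateFrom_measurableCylinders.symm isPiSystem_measurableCylinders ?_ ?_
    · intro s hs
      obtain ⟨I, S', hS', rfl⟩ := (mem_measurableCylinders s).mp hs
      set n := (I.sup id) + 1 with hn
      have hlt : ∀ i : I, (i : ℕ) < n := fun i => Nat.lt_succ_of_le (Finset.le_sup (f := id) i.2)
      set r : (∀ i : Fin n, Ω i) → ∀ i : I, Ω i := fun x i => x ⟨i.1, hlt i⟩ with hr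
      have hrm : Measurable r := measurable_pi_lambda _ fun i => measurable_pi_apply _
      have hcylEq : cylinder I S' = kproj n ⁻¹' (r ⁻¹' S') := rfl
      rw [hcylEq]
      exact hkey n _ (hrm hS')
    · have h0 := hkey 0 Set.univ MeasurableSet.univ
      simpa using h0
  rw [hQeq]
  exact withDensity_absolutelyContinuous P _

end Product

end KakutaniAux

/-- Kakutani dichotomy: if `ν k ≪ μ k` for every `k`, then the infinite product measure
`Q = ⊗ ν k` is either absolutely continuous with respect to `P = ⊗ μ k` or mutually
singular with it. -/
theorem productMeasure_absolutelyContinuous_or_mutuallySingular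
    {Ω : ℕ → Type*} [∀ k, MeasurableSpace (Ω k)]
    (μ ν : (k : ℕ) → Measure (Ω k))
    [∀ k, IsProbabilityMeasure (μ k)] [∀ k, IsProbabilityMeasure (ν k)]
    (hac : ∀ k, ν k ≪ μ k)
    (P Q : Measure ((k : ℕ) → Ω k))
    (hP : IsProductMeasure μ P) (hQ : IsProductMeasure ν Q) :
    Q ≪ P ∨ Q.MutuallySingular P := by
  classical
  set f : ∀ k, Ω k → ℝ≥0∞ := fun k => (ν k).rnDeriv (μ k) with hf
  have hfm : ∀ k, Measurable (f k) := fun k => Measure.measurable_rnDeriv _ _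
  have hν : ∀ k, (μ k).withDensity (f k) = ν k := fun k =>
    Measure.withDensity_rnDeriv_eq _ _ (hac k)
  have hfint : ∀ k, ∫⁻ x, f k x ∂(μ k) = 1 := fun k => by
    rw [hf, Measure.lintegral_rnDeriv (hac k)]
    exact measure_univ
  by_cases h : (⨅ n, ∏ k ∈ Finset.range n, ∫⁻ x, f k x ^ (2⁻¹:ℝ) ∂(μ k)) = 0
  · exact Or.inr (KakutaniAux.singular_of_inf_zero μ P ν Q hP hQ f hfm hν h)
  · exact Or.inl (KakutaniAux.ac_of_inf_ne_zero μ P ν Q hP hQ f hfm hν hfint h)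
end

section
/- Let (Ω_k, A_k) be measurable spaces carrying probability measures μ_k and ν_k with ν_k absolutely continuous with respect to μ_k for every k, and let μ = ⊗_k μ_k, ν = ⊗_k ν_k be the infinite product measures. Then ν is absolutely continuous with respect to μ if and only if the infinite product Π_{k=1}^∞ ρ(μ_k, ν_k) is strictly positive, where ρ(μ_k, ν_k) = ∫_{Ω_k} √(dν_k/dμ_k) dμ_k is the Hellinger integral. -/
open MeasureTheory

open Finset
open scoped ENNReal NNReal

namespace Kakutani

lemma sqrt_mul_self' (a : ℝ≥0∞) : a ^ (1/2 : ℝ) * a ^ (1/2 : ℝ) = a := by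
  rcases eq_or_ne a 0 with rfl | h0
  · simp
  rcases eq_or_ne a ⊤ with rfl | ht
  · simp
  rw [← ENNReal.rpow_add _ _ h0 ht]
  norm_num

lemma rpow_two' (a : ℝ≥0∞) : a ^ (2 : ℝ) = a * a := by
  rw [show (2:ℝ) = ((2:ℕ):ℝ) by norm_num, ENNReal.rpow_natCast, sq]

/-- `a*a - 1 = (a-1)*(a+1)` in `ℝ≥0∞`. -/
lemma mul_self_tsub_one (a : ℝ≥0∞) : a * a - 1 = (a - 1) * (a + 1) := by
  rcases le_or_gt a 1 with h | h
  · have h2 : a * a ≤ 1 := by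
      calc a * a ≤ 1 * 1 := mul_le_mul' h h
      _ = 1 := by simp
    simp [tsub_eq_zero_of_le h, tsub_eq_zero_of_le h2]
  · set b := a - 1 with hb
    have ha : a = 1 + b := by rw [hb, add_tsub_cancel_of_le h.le]
    rw [ha]
    have : (1 + b) * (1 + b) = 1 + (b + b + b * b) := by ring
    rw [this, ENNReal.add_sub_cancel_left ENNReal.one_ne_top]
    ring

/-- `1 - a*a = (1-a)*(a+1)` in `ℝ≥0∞`. -/
lemma one_tsub_mul_self (a : ℝ≥0∞) : 1 - a * a = (1 - a) * (a + 1) := by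
  rcases le_or_gt a 1 with h | h
  · have hat : a ≠ ⊤ := (h.trans_lt ENNReal.one_lt_top).ne
    set c := 1 - a with hc
    have h1 : (1:ℝ≥0∞) = a + c := by rw [hc, add_tsub_cancel_of_le h]
    have hct : c ≠ ⊤ := by
      rw [hc]; exact (tsub_le_self.trans_lt ENNReal.one_lt_top).ne
    have e : (a + c) * (a + c) = a * a + (a * c + c * a + c * c) := by ring
    calc (1:ℝ≥0∞) - a * a = (a + c) * (a + c) - a * a := by rw [← h1]; simp
    _ = a * a + (a * c + c * a + c * c) - a * a := by rw [e]
    _ = a * c + c * a + c * c := ENNReal.add_sub_cancel_left (by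
        exact ENNReal.mul_ne_top hat hat)
    _ = c * (a + 1) := by rw [h1]; ring
    _ = (1 - a) * (a + 1) := by rw [hc]
  · have h2 : (1:ℝ≥0∞) ≤ a * a := by
      calc (1:ℝ≥0∞) = 1 * 1 := by simp
      _ ≤ a * a := mul_le_mul' h.le h.le
    simp [tsub_eq_zero_of_le h.le, tsub_eq_zero_of_le h2]

lemma two_mul_le_sq_add_one (a : ℝ≥0∞) : 2 * a ≤ a * a + 1 := by
  rcases le_or_gt a 1 with h | h
  · set c := 1 - a with hc
    have h1 : (1:ℝ≥0∞) = a + c := by rw [hc, add_tsub_cancel_of_le h]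
    have key : a ≤ a * a + c := by
      calc a = a * 1 := by simp
      _ = a * a + a * c := by rw [h1]; ring
      _ ≤ a * a + c := by
          gcongr
          calc a * c ≤ 1 * c := by gcongr
          _ = c := one_mul c
    calc 2 * a = a + a := by ring
    _ ≤ a + (a * a + c) := by gcongr
    _ = a * a + (a + c) := by ring
    _ = a * a + 1 := by rw [← h1]
  · set b := a - 1 with hb
    have ha : a = 1 + b := by rw [hb, add_tsub_cancel_of_le h.le]
    rw [ha]
    calc 2 * (1 + b) = 1 + (b + b) + 1 := by ring
    _ ≤ 1 + (b + b + b * b) + 1 :=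
        add_le_add_left (add_le_add_right le_self_add 1) 1
    _ = (1 + b) * (1 + b) + 1 := by ring

lemma tsub_one_sq_le (a : ℝ≥0∞) (ha : a ≠ ⊤) :
    (a - 1) * (a - 1) ≤ (a * a + 1) - 2 * a := by
  rcases le_or_gt a 1 with h | h
  · simp [tsub_eq_zero_of_le h]
  · set b := a - 1 with hb
    have ha1 : a = 1 + b := by rw [hb, add_tsub_cancel_of_le h.le]
    rw [ha1]
    have : (1 + b) * (1 + b) + 1 = 2 * (1 + b) + b * b := by ring
    rw [this, ENNReal.add_sub_cancel_left]
    exact ENNReal.mul_ne_top (by finiteness) (by simp [ha1] at ha; finiteness)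

lemma one_tsub_sq_le (a : ℝ≥0∞) :
    (1 - a) * (1 - a) ≤ (a * a + 1) - 2 * a := by
  rcases le_or_gt 1 a with h | h
  · simp [tsub_eq_zero_of_le h]
  rcases eq_or_ne a ⊤ with rfl | ha
  · simp at h
  set c := 1 - a with hc
  have h1 : (1:ℝ≥0∞) = a + c := by rw [hc, add_tsub_cancel_of_le h.le]
  have hct : c ≠ ⊤ := by rw [hc]; exact (tsub_le_self.trans_lt ENNReal.one_lt_top).ne
  have : a * a + 1 = a * a + (a + c) * (a + c) := by rw [← h1]; ring_nf
  rw [this]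
  have expand : a * a + (a + c) * (a + c) = 2 * a * (a + c) + c * c := by ring
  rw [expand, ← h1, mul_one, ENNReal.add_sub_cancel_left (by finiteness)]


/-- Tonelli for a product of coordinate functions over a finite pi-measure. -/
lemma lintegral_pi_prod : ∀ {n : ℕ} {α : Fin n → Type u} [∀ i, MeasurableSpace (α i)]
    (μ : ∀ i, Measure (α i)) [∀ i, SigmaFinite (μ i)]
    (φ : ∀ i, α i → ℝ≥0∞) (hφ : ∀ i, Measurable (φ i)),
    ∫⁻ x, ∏ i, φ i (x i) ∂Measure.pi μ = ∏ i, ∫⁻ y, φ i y ∂μ i := by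
  intro n
  induction n with
  | zero =>
    intro α _ μ _ φ hφ
    simp [lintegral_const, Measure.pi_univ]
  | succ n ih =>
    intro α _ μ _ φ hφ
    have hmp := (measurePreserving_piFinSuccAbove μ 0).symm
    calc ∫⁻ x, ∏ i, φ i (x i) ∂Measure.pi μ
        = ∫⁻ z : α 0 × ((j : Fin n) → α (Fin.succ j)),
            φ 0 z.1 * ∏ j, φ (Fin.succ j) (z.2 j)
            ∂((μ 0).prod (Measure.pi fun j => μ (Fin.succ j))) := by
          rw [MeasurePreserving.lintegral_map_equiv
            (fun x : (i : Fin (n+1)) → α i => ∏ i, φ i (x i))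
            (MeasurableEquiv.piFinSuccAbove α 0).symm hmp]
          simp_rw [MeasurableEquiv.piFinSuccAbove_symm_apply, Fin.insertNthEquiv,
            Fin.prod_univ_succ, Fin.insertNth_zero, Equiv.coe_fn_mk, Fin.zero_succAbove,
            Fin.cons_succ, Fin.cons_zero]
          rfl
      _ = (∫⁻ y, φ 0 y ∂μ 0) * ∏ j, ∫⁻ y, φ (Fin.succ j) y ∂μ (Fin.succ j) := by
          rw [lintegral_prod_mul (f := φ 0)
            (g := fun y : (j : Fin n) → α (Fin.succ j) => ∏ j, φ (Fin.succ j) (y j))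
            (hφ 0).aemeasurable
            (Finset.measurable_prod univ
              (fun j _ => (hφ _).comp (measurable_pi_apply j))).aemeasurable,
            ih _ _ (fun j => hφ _)]
      _ = ∏ i, ∫⁻ y, φ i y ∂μ i := by rw [Fin.prod_univ_succ]

/-- Cauchy–Schwarz for lintegrals. -/
lemma lintegral_mul_le_sqrt {X : Type*} [MeasurableSpace X] (π : Measure X)
    {F G : X → ℝ≥0∞} (hF : Measurable F) (hG : Measurable G) :
    ∫⁻ x, F x * G x ∂π ≤
      (∫⁻ x, F x * F x ∂π) ^ (1/2 : ℝ) * (∫⁻ x, G x * G x ∂π) ^ (1/2 : ℝ) := by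
  have hconj : (2:ℝ).HolderConjugate 2 := by
    exact Real.HolderConjugate.two_two
  have := ENNReal.lintegral_mul_le_Lp_mul_Lq π hconj hF.aemeasurable hG.aemeasurable
  simp only [Pi.mul_apply] at this
  calc ∫⁻ x, F x * G x ∂π
      ≤ (∫⁻ a, F a ^ (2:ℝ) ∂π) ^ (1/2:ℝ) * (∫⁻ a, G a ^ (2:ℝ) ∂π) ^ (1/2:ℝ) := this
    _ = (∫⁻ x, F x * F x ∂π) ^ (1/2 : ℝ) * (∫⁻ x, G x * G x ∂π) ^ (1/2 : ℝ) := by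
        congr 1 <;> · congr 1; exact lintegral_congr fun x => by rw [rpow_two']

end Kakutani


section Setup
variable {Ω : ℕ → Type*} [∀ k, MeasurableSpace (Ω k)]

/-- Projection onto the first `m` coordinates. -/
def proj (m : ℕ) : ((k : ℕ) → Ω k) → ((i : Fin m) → Ω i) := fun ω i => ω i

lemma measurable_proj (m : ℕ) : Measurable (proj (Ω := Ω) m) :=
  measurable_pi_lambda _ fun i => measurable_pi_apply _

variable {μ : ∀ k, Measure (Ω k)} [∀ k, IsProbabilityMeasure (μ k)]
  {P : Measure ((k : ℕ) → Ω k)}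

lemma isProbability_of_isProductMeasure (hP : IsProductMeasure μ P) :
    IsProbabilityMeasure P := by
  constructor
  have := hP ∅ (fun _ => Set.univ) (by simp)
  simpa using this

lemma map_proj_eq_pi (hP : IsProductMeasure μ P) (m : ℕ) :
    P.map (proj m) = Measure.pi (fun i : Fin m => μ i) := by
  refine (Measure.pi_eq fun s hs => ?_).symm
  rw [Measure.map_apply (measurable_proj m) (MeasurableSet.univ_pi hs)]
  set E : (k : ℕ) → Set (Ω k) := fun k => if h : k < m then s ⟨k, h⟩ else Set.univ with hE
  have hpre : proj m ⁻¹' Set.univ.pi s = {ω | ∀ k ∈ Finset.range m, ω k ∈ E k} := by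
    ext ω
    simp only [Set.mem_preimage, Set.mem_univ_pi, Set.mem_setOf_eq, Finset.mem_range, hE]
    constructor
    · intro h k hk
      rw [dif_pos hk]; exact h ⟨k, hk⟩
    · intro h i
      have := h i i.isLt
      rwa [dif_pos i.isLt] at this
  rw [hpre, hP (Finset.range m) E (fun k hk => by
    rw [hE]; simp only [Finset.mem_range] at hk
    simp only [dif_pos hk]; exact hs _)]
  rw [← Fin.prod_univ_eq_prod_range (fun k => μ k (E k)) m]
  refine Finset.prod_congr rfl fun i _ => ?_
  have : E i = s i := by rw [hE]; simp only [dif_pos i.isLt]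
  rw [this]

/-- A finite product of `withDensity` measures is `withDensity` of the product density. -/
lemma pi_withDensity_eq (m : ℕ) (φ : ∀ k, Ω k → ℝ≥0∞) (hφ : ∀ k, Measurable (φ k))
    (ν : ∀ k, Measure (Ω k)) [∀ k, IsProbabilityMeasure (ν k)]
    (hν : ∀ k, ν k = (μ k).withDensity (φ k)) :
    Measure.pi (fun i : Fin m => ν i) =
      (Measure.pi (fun i : Fin m => μ i)).withDensity
        (fun x : (i : Fin m) → Ω i => ∏ i : Fin m, φ i (x i)) := by
  refine Measure.pi_eq fun s hs => ?_
  rw [withDensity_apply _ (MeasurableSet.univ_pi hs), ← lintegral_indicator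
    (MeasurableSet.univ_pi hs) _]
  have key : ∀ x : (i : Fin m) → Ω i,
      (Set.univ.pi s).indicator (fun x : (i : Fin m) → Ω i => ∏ i : Fin m, φ i (x i)) x
        = ∏ i, ((s i).indicator (φ i)) (x i) := by
    intro x
    by_cases hx : x ∈ Set.univ.pi s
    · rw [Set.indicator_of_mem hx]
      exact Finset.prod_congr rfl fun i _ =>
        (Set.indicator_of_mem (hx i trivial) _).symm
    · rw [Set.indicator_of_notMem hx]
      rw [Set.mem_univ_pi] at hx
      push_neg at hx
      obtain ⟨i, hi⟩ := hx
      exact (Finset.prod_eq_zero (Finset.mem_univ i)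
        (Set.indicator_of_notMem hi _)).symm
  rw [lintegral_congr key,
    Kakutani.lintegral_pi_prod _ _ (fun i => (hφ i).indicator (hs i))]
  refine Finset.prod_congr rfl fun i _ => ?_
  rw [lintegral_indicator (hs i) _, ← withDensity_apply _ (hs i), ← hν i]

/-- Pushforward of `P.withDensity (∏_{k<n} φ k)` under `proj m`, `n ≤ m`. -/
lemma map_withDensity_proj (hP : IsProductMeasure μ P) {n m : ℕ} (hnm : n ≤ m)
    (φ : ∀ k, Ω k → ℝ≥0∞) (hφ : ∀ k, Measurable (φ k)) :
    (P.withDensity (fun ω => ∏ k ∈ Finset.range n, φ k (ω k))).map (proj m) =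
      (Measure.pi (fun i : Fin m => μ i)).withDensity
        (fun x => ∏ i : Fin m, if (i : ℕ) < n then φ i (x i) else 1) := by
  have hHmeas : Measurable (fun x : (i : Fin m) → Ω i =>
      ∏ i : Fin m, if (i : ℕ) < n then φ i (x i) else 1) := by
    apply Finset.measurable_prod
    intro i _
    by_cases h : (i : ℕ) < n
    · simpa [h, Function.comp_def] using (hφ i).comp (measurable_pi_apply i)
    · simpa [h] using measurable_const
  have hGmeas : Measurable (fun ω : (k : ℕ) → Ω k => ∏ k ∈ Finset.range n, φ k (ω k)) :=
    Finset.measurable_prod _ fun k _ => (hφ k).comp (measurable_pi_apply k)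
  refine Measure.ext fun B hB => ?_
  rw [Measure.map_apply (measurable_proj m) hB]
  rw [withDensity_apply _ ((measurable_proj m) hB), withDensity_apply _ hB,
    ← lintegral_indicator ((measurable_proj m) hB) _, ← lintegral_indicator hB _]
  have key : ∀ ω : (k : ℕ) → Ω k,
      (proj m ⁻¹' B).indicator (fun ω => ∏ k ∈ Finset.range n, φ k (ω k)) ω
        = (B.indicator (fun x => ∏ i : Fin m, if (i : ℕ) < n then φ i (x i) else 1))
            (proj m ω) := by
    intro ω
    by_cases hω : proj m ω ∈ B
    · rw [Set.indicator_of_mem (show ω ∈ proj m ⁻¹' B from hω), Set.indicator_of_mem hω]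
      have h1 : (∏ i : Fin m, if (i : ℕ) < n then φ i ((proj m ω) i) else 1)
          = ∏ k ∈ Finset.range m, (if k < n then φ k (ω k) else 1) :=
        Fin.prod_univ_eq_prod_range (fun k => if k < n then φ k (ω k) else 1) m
      rw [h1, Finset.range_eq_Ico (a := m), ← Finset.prod_Ico_consecutive _ (Nat.zero_le n) hnm]
      have h2 : ∏ k ∈ Finset.Ico 0 n, (if k < n then φ k (ω k) else 1)
          = ∏ k ∈ Finset.Ico 0 n, φ k (ω k) :=
        Finset.prod_congr rfl fun k hk => by
          rw [Finset.mem_Ico] at hk; rw [if_pos hk.2]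
      have h3 : ∏ k ∈ Finset.Ico n m, (if k < n then φ k (ω k) else 1) = 1 :=
        Finset.prod_eq_one fun k hk => by
          rw [Finset.mem_Ico] at hk; rw [if_neg (not_lt.2 hk.1)]
      rw [h2, h3, mul_one, ← Finset.range_eq_Ico]
    · rw [Set.indicator_of_notMem (show ω ∉ proj m ⁻¹' B from hω),
        Set.indicator_of_notMem hω]
  rw [lintegral_congr key,
    ← lintegral_map (hHmeas.indicator hB) (measurable_proj m),
    map_proj_eq_pi hP m]

end Setup

section S4

variable {Ω : ℕ → Type*} [∀ k, MeasurableSpace (Ω k)]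
  {μ : ∀ k, Measure (Ω k)} [∀ k, IsProbabilityMeasure (μ k)]

lemma prod_fin_split (m n : ℕ) (hnm : n ≤ m) (g h : ℕ → ℝ≥0∞) :
    (∏ i : Fin m, if (i : ℕ) < n then g i else h i)
      = (∏ k ∈ Finset.range n, g k) * ∏ k ∈ Finset.Ico n m, h k := by
  rw [Fin.prod_univ_eq_prod_range (fun k => if k < n then g k else h k) m,
    Finset.range_eq_Ico, ← Finset.prod_Ico_consecutive _ (Nat.zero_le n) hnm]
  congr 1
  · rw [← Finset.range_eq_Ico]
    exact Finset.prod_congr rfl fun k hk => if_pos (Finset.mem_range.mp hk)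
  · exact Finset.prod_congr rfl fun k hk => if_neg (not_lt.2 (Finset.mem_Ico.mp hk).1)

/-- The Hellinger integral is at most `1`. -/
lemma sqrt_lintegral_le_one {X : Type*} [MeasurableSpace X] (π : Measure X)
    [IsProbabilityMeasure π] {f : X → ℝ≥0∞} (hf : Measurable f)
    (h1 : ∫⁻ y, f y ∂π = 1) : ∫⁻ y, (f y) ^ (1/2 : ℝ) ∂π ≤ 1 := by
  have := Kakutani.lintegral_mul_le_sqrt π (hf.pow_const (1/2 : ℝ)) measurable_const
    (G := fun _ => 1)
  simp only [mul_one] at this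
  calc ∫⁻ y, (f y) ^ (1/2 : ℝ) ∂π
      ≤ (∫⁻ y, (f y) ^ (1/2:ℝ) * (f y) ^ (1/2:ℝ) ∂π) ^ (1/2:ℝ)
        * (∫⁻ _y, (1:ℝ≥0∞) ∂π) ^ (1/2:ℝ) := this
    _ = 1 := by
        have e : ∀ y, (f y) ^ (1/2:ℝ) * (f y) ^ (1/2:ℝ) = f y :=
          fun y => Kakutani.sqrt_mul_self' _
        rw [lintegral_congr e, h1, lintegral_one, measure_univ]
        simp

variable {m n : ℕ}

/-- Key finite-dimensional Hellinger estimate. -/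
lemma finite_bound (hnm : n ≤ m) (f : ∀ k, Ω k → ℝ≥0∞)
    (hf : ∀ k, Measurable (f k)) (hint1 : ∀ k, ∫⁻ y, f k y ∂μ k = 1)
    (hfin : ∀ k, ∀ᵐ y ∂μ k, f k y ≠ ⊤)
    {B : Set ((i : Fin m) → Ω i)} (hB : MeasurableSet B) :
    ((Measure.pi (fun i : Fin m => μ i)).withDensity
        (fun x => ∏ i : Fin m, f i (x i))) B ≤
      ((Measure.pi (fun i : Fin m => μ i)).withDensity
        (fun x => ∏ i : Fin m, if (i : ℕ) < n then f i (x i) else 1)) B +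
        (2 - 2 * ∏ k ∈ Finset.Ico n m, ∫⁻ y, (f k y) ^ (1/2:ℝ) ∂μ k) ^ (1/2:ℝ) * 2 ∧
    ((Measure.pi (fun i : Fin m => μ i)).withDensity
        (fun x => ∏ i : Fin m, if (i : ℕ) < n then f i (x i) else 1)) B ≤
      ((Measure.pi (fun i : Fin m => μ i)).withDensity
        (fun x => ∏ i : Fin m, f i (x i))) B +
        (2 - 2 * ∏ k ∈ Finset.Ico n m, ∫⁻ y, (f k y) ^ (1/2:ℝ) ∂μ k) ^ (1/2:ℝ) * 2 := by
  set π : Measure ((i : Fin m) → Ω i) := Measure.pi (fun i : Fin m => μ i) with hπ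
  set r : ℝ≥0∞ := ∏ k ∈ Finset.Ico n m, ∫⁻ y, (f k y) ^ (1/2:ℝ) ∂μ k with hr
  set δ : ℝ≥0∞ := (2 - 2 * r) ^ (1/2:ℝ) * 2 with hδ
  set G : ((i : Fin m) → Ω i) → ℝ≥0∞ := fun x => ∏ i : Fin m, f i (x i) with hG
  set H : ((i : Fin m) → Ω i) → ℝ≥0∞ :=
    fun x => ∏ i : Fin m, if (i : ℕ) < n then f i (x i) else 1 with hH
  set T : ((i : Fin m) → Ω i) → ℝ≥0∞ :=
    fun x => ∏ i : Fin m, if (i : ℕ) < n then 1 else f i (x i) with hT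
  set U : ((i : Fin m) → Ω i) → ℝ≥0∞ :=
    fun x => ∏ i : Fin m, if (i : ℕ) < n then 1 else (f i (x i)) ^ (1/2:ℝ) with hU
  have hfm : ∀ i : Fin m, Measurable (fun x : (i : Fin m) → Ω i => f i (x i)) :=
    fun i => (hf i).comp (measurable_pi_apply i)
  have hGm : Measurable G := Finset.measurable_prod _ fun i _ => hfm i
  have hHm : Measurable H := by
    apply Finset.measurable_prod
    intro i _
    by_cases h : (i : ℕ) < n
    · simpa [h] using hfm i
    · simpa [h] using measurable_const
  have hTm : Measurable T := by
    apply Finset.measurable_prod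
    intro i _
    by_cases h : (i : ℕ) < n
    · simpa [h] using measurable_const
    · simpa [h] using hfm i
  have hUm : Measurable U := by
    apply Finset.measurable_prod
    intro i _
    by_cases h : (i : ℕ) < n
    · simpa [h] using measurable_const
    · simpa [h] using (hfm i).pow_const _
  -- pointwise identities
  have eGHT : ∀ x, G x = H x * T x := by
    intro x
    rw [hG, hH, hT, ← Finset.prod_mul_distrib]
    exact Finset.prod_congr rfl fun i _ => by by_cases h : (i:ℕ) < n <;> simp [h]
  have eUUT : ∀ x, U x * U x = T x := by
    intro x
    rw [hU, hT, ← Finset.prod_mul_distrib]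
    refine Finset.prod_congr rfl fun i _ => ?_
    by_cases h : (i:ℕ) < n
    · simp [h]
    · simp only [h, if_false]
      exact Kakutani.sqrt_mul_self' _
  -- a.e. finiteness
  have hAE : ∀ᵐ x ∂π, ∀ i : Fin m, f i (x i) ≠ ⊤ := by
    rw [ae_all_iff]
    intro i
    rw [ae_iff]
    have : {x : (i : Fin m) → Ω i | ¬ f i (x i) ≠ ⊤}
        = Function.eval i ⁻¹' {y : Ω i | ¬ f i y ≠ ⊤} := rfl
    rw [this, hπ]
    exact Measure.pi_eval_preimage_null _ (ae_iff.mp (hfin i))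
  have hfinH : ∀ x, (∀ i : Fin m, f i (x i) ≠ ⊤) → H x ≠ ⊤ := by
    intro x hx
    rw [hH]
    refine (ENNReal.prod_lt_top fun i _ => ?_).ne
    by_cases h : (i:ℕ) < n
    · simp only [h, if_true]; exact (hx i).lt_top
    · simp [h]
  have hfinU : ∀ x, (∀ i : Fin m, f i (x i) ≠ ⊤) → U x ≠ ⊤ := by
    intro x hx
    rw [hU]
    refine (ENNReal.prod_lt_top fun i _ => ?_).ne
    by_cases h : (i:ℕ) < n
    · simp [h]
    · simp only [h, if_false]
      exact (ENNReal.rpow_ne_top_of_nonneg (by norm_num) (hx i)).lt_top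
  -- integral identities
  have IH : ∫⁻ x, H x ∂π = 1 := by
    rw [hH, hπ, Kakutani.lintegral_pi_prod (fun i : Fin m => μ i)
      (fun i => fun y => if (i:ℕ) < n then f i y else 1)
      (fun i => by
        by_cases h : (i:ℕ) < n
        · simpa [h] using hf i
        · simpa [h] using measurable_const)]
    refine Finset.prod_eq_one fun i _ => ?_
    by_cases h : (i:ℕ) < n
    · simpa [h] using hint1 i
    · simp [h]
  have IG : ∫⁻ x, G x ∂π = 1 := by
    rw [hG, hπ, Kakutani.lintegral_pi_prod (fun i : Fin m => μ i)
      (fun i => f i) (fun i => hf i)]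
    exact Finset.prod_eq_one fun i _ => hint1 i
  have IHU : ∫⁻ x, H x * U x ∂π = r := by
    have e : ∀ x, H x * U x
        = ∏ i : Fin m, (if (i:ℕ) < n then f i (x i) else (f i (x i)) ^ (1/2:ℝ)) := by
      intro x
      rw [hH, hU, ← Finset.prod_mul_distrib]
      refine Finset.prod_congr rfl fun i _ => ?_
      by_cases h : (i:ℕ) < n <;> simp [h]
    rw [lintegral_congr e, hπ, Kakutani.lintegral_pi_prod (fun i : Fin m => μ i)
      (fun i => fun y => if (i:ℕ) < n then f i y else (f i y) ^ (1/2:ℝ))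
      (fun i => by
        by_cases h : (i:ℕ) < n
        · simpa [h] using hf i
        · simpa [h] using (hf i).pow_const _)]
    have e2 : ∀ i : Fin m, (∫⁻ y, (if (i:ℕ) < n then f i y else (f i y) ^ (1/2:ℝ)) ∂μ i)
        = if (i:ℕ) < n then (1:ℝ≥0∞) else ∫⁻ y, (f i y) ^ (1/2:ℝ) ∂μ i := by
      intro i
      by_cases h : (i:ℕ) < n <;> simp only [h, if_true, if_false]
      · exact hint1 i
    rw [Finset.prod_congr rfl fun i _ => e2 i,
      prod_fin_split m n hnm (fun _ => 1) (fun k => ∫⁻ y, (f k y) ^ (1/2:ℝ) ∂μ k), hr]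
    simp
  have hrle : r ≤ 1 := by
    rw [hr]
    refine Finset.prod_le_one (fun k _ => zero_le) fun k _ => ?_
    exact sqrt_lintegral_le_one (μ k) (hf k) (hint1 k)
  -- the Cauchy–Schwarz bound on ∫ H * v * (U+1) for v ∈ {U-1, 1-U}
  have hCS : ∀ v : ((i : Fin m) → Ω i) → ℝ≥0∞, Measurable v →
      (∀ x, (∀ i : Fin m, f i (x i) ≠ ⊤) → v x * v x ≤ (T x + 1) - 2 * U x) →
      ∫⁻ x, H x * (v x * (U x + 1)) ∂π ≤ δ := by
    intro v hv hvsq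
    have hF1 : Measurable fun x => (H x) ^ (1/2:ℝ) * v x :=
      (hHm.pow_const _).mul hv
    have hF2 : Measurable fun x => (H x) ^ (1/2:ℝ) * (U x + 1) :=
      (hHm.pow_const _).mul (hUm.add measurable_const)
    have eprod : ∀ x, ((H x) ^ (1/2:ℝ) * v x) * ((H x) ^ (1/2:ℝ) * (U x + 1))
        = H x * (v x * (U x + 1)) := by
      intro x
      calc ((H x) ^ (1/2:ℝ) * v x) * ((H x) ^ (1/2:ℝ) * (U x + 1))
          = ((H x) ^ (1/2:ℝ) * (H x) ^ (1/2:ℝ)) * (v x * (U x + 1)) := by ring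
        _ = H x * (v x * (U x + 1)) := by rw [Kakutani.sqrt_mul_self']
    have step := Kakutani.lintegral_mul_le_sqrt π hF1 hF2
    rw [lintegral_congr eprod] at step
    -- bound ∫ F1²
    have bF1 : ∫⁻ x, ((H x) ^ (1/2:ℝ) * v x) * ((H x) ^ (1/2:ℝ) * v x) ∂π ≤ 2 - 2 * r := by
      have e1 : ∀ x, ((H x) ^ (1/2:ℝ) * v x) * ((H x) ^ (1/2:ℝ) * v x)
          = H x * (v x * v x) := by
        intro x
        calc ((H x) ^ (1/2:ℝ) * v x) * ((H x) ^ (1/2:ℝ) * v x)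
            = ((H x) ^ (1/2:ℝ) * (H x) ^ (1/2:ℝ)) * (v x * v x) := by ring
          _ = H x * (v x * v x) := by rw [Kakutani.sqrt_mul_self']
      rw [lintegral_congr e1]
      have mono : ∫⁻ x, H x * (v x * v x) ∂π
          ≤ ∫⁻ x, H x * (T x + 1) - 2 * (H x * U x) ∂π := by
        refine lintegral_mono_ae ?_
        filter_upwards [hAE] with x hx
        calc H x * (v x * v x) ≤ H x * ((T x + 1) - 2 * U x) :=
              mul_le_mul_right (hvsq x hx) _
          _ = H x * (T x + 1) - H x * (2 * U x) :=
              ENNReal.mul_sub (fun _ _ => hfinH x hx)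
          _ = H x * (T x + 1) - 2 * (H x * U x) := by ring_nf
      refine mono.trans ?_
      have hle : (fun x => 2 * (H x * U x)) ≤ᵐ[π] fun x => H x * (T x + 1) := by
        filter_upwards with x
        calc 2 * (H x * U x) = H x * (2 * U x) := by ring
          _ ≤ H x * (U x * U x + 1) := mul_le_mul_right (Kakutani.two_mul_le_sq_add_one _) _
          _ = H x * (T x + 1) := by rw [eUUT]
      have hint2 : ∫⁻ x, 2 * (H x * U x) ∂π ≠ ⊤ := by
        rw [lintegral_const_mul _ (f := fun x => H x * U x) (hHm.mul hUm), IHU]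
        exact (ENNReal.mul_lt_top (by norm_num) (hrle.trans_lt ENNReal.one_lt_top)).ne
      rw [lintegral_sub (g := fun x => 2 * (H x * U x)) ((measurable_const.mul (hHm.mul hUm))) hint2 hle]
      have eTop : ∫⁻ x, H x * (T x + 1) ∂π = 2 := by
        have e2 : ∀ x, H x * (T x + 1) = H x * T x + H x := by intro x; ring
        rw [lintegral_congr e2, lintegral_add_right _ hHm,
          lintegral_congr (fun x => (eGHT x).symm), IG, IH]
        norm_num
      rw [eTop, lintegral_const_mul _ (f := fun x => H x * U x) (hHm.mul hUm), IHU]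
  -- bound ∫ F2²
    have bF2 : ∫⁻ x, ((H x) ^ (1/2:ℝ) * (U x + 1)) * ((H x) ^ (1/2:ℝ) * (U x + 1)) ∂π
        ≤ 4 := by
      have e1 : ∀ x, ((H x) ^ (1/2:ℝ) * (U x + 1)) * ((H x) ^ (1/2:ℝ) * (U x + 1))
          = H x * T x + 2 * (H x * U x) + H x := by
        intro x
        calc ((H x) ^ (1/2:ℝ) * (U x + 1)) * ((H x) ^ (1/2:ℝ) * (U x + 1))
            = ((H x) ^ (1/2:ℝ) * (H x) ^ (1/2:ℝ)) * ((U x + 1) * (U x + 1)) := by ring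
          _ = H x * ((U x * U x) + 2 * U x + 1) := by rw [Kakutani.sqrt_mul_self']; ring_nf
          _ = H x * (T x + 2 * U x + 1) := by rw [eUUT]
          _ = H x * T x + 2 * (H x * U x) + H x := by ring
      rw [lintegral_congr e1, lintegral_add_right _ hHm,
        lintegral_add_right _ (g := fun x => 2 * (H x * U x)) (measurable_const.mul (hHm.mul hUm)),
        lintegral_congr (fun x => (eGHT x).symm), IG, IH,
        lintegral_const_mul _ (f := fun x => H x * U x) (hHm.mul hUm), IHU]
      calc 1 + 2 * r + 1 ≤ 1 + 2 * 1 + 1 := by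
            gcongr
        _ = 4 := by norm_num
    calc ∫⁻ x, H x * (v x * (U x + 1)) ∂π
        ≤ (∫⁻ x, ((H x) ^ (1/2:ℝ) * v x) * ((H x) ^ (1/2:ℝ) * v x) ∂π) ^ (1/2:ℝ)
          * (∫⁻ x, ((H x) ^ (1/2:ℝ) * (U x + 1)) * ((H x) ^ (1/2:ℝ) * (U x + 1)) ∂π)
            ^ (1/2:ℝ) := step
      _ ≤ (2 - 2 * r) ^ (1/2:ℝ) * (4:ℝ≥0∞) ^ (1/2:ℝ) :=
          mul_le_mul' (ENNReal.rpow_le_rpow bF1 (by norm_num))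
            (ENNReal.rpow_le_rpow bF2 (by norm_num))
      _ = δ := by
          rw [hδ]
          congr 1
          rw [show (4:ℝ≥0∞) = 2 ^ (2:ℝ) by rw [Kakutani.rpow_two']; norm_num,
            ← ENNReal.rpow_mul]
          norm_num
  constructor
  · -- wG B ≤ wH B + δ
    rw [withDensity_apply _ hB, withDensity_apply _ hB]
    have step1 : ∫⁻ x in B, G x ∂π ≤ ∫⁻ x in B, H x ∂π + ∫⁻ x, G x - H x ∂π := by
      calc ∫⁻ x in B, G x ∂π ≤ ∫⁻ x in B, H x + (G x - H x) ∂π :=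
            setLIntegral_mono (hHm.add (hGm.sub hHm)) fun x _ => le_add_tsub
        _ = ∫⁻ x in B, H x ∂π + ∫⁻ x in B, G x - H x ∂π :=
            lintegral_add_left hHm _
        _ ≤ ∫⁻ x in B, H x ∂π + ∫⁻ x, G x - H x ∂π := by
            gcongr _ + ?_
            exact setLIntegral_le_lintegral _ _
    refine step1.trans ?_
    gcongr
    have ept : ∀ᵐ x ∂π, G x - H x = H x * ((U x - 1) * (U x + 1)) := by
      filter_upwards [hAE] with x hx
      calc G x - H x = H x * T x - H x * 1 := by rw [← eGHT]; simp
        _ = H x * (T x - 1) := (ENNReal.mul_sub fun _ _ => hfinH x hx).symm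
        _ = H x * ((U x * U x) - 1) := by rw [eUUT]
        _ = H x * ((U x - 1) * (U x + 1)) := by rw [Kakutani.mul_self_tsub_one]
    rw [lintegral_congr_ae ept]
    refine hCS (fun x => U x - 1) (hUm.sub measurable_const) ?_
    intro x hx
    calc (U x - 1) * (U x - 1) ≤ (U x * U x + 1) - 2 * U x :=
          Kakutani.tsub_one_sq_le _ (hfinU x hx)
      _ = (T x + 1) - 2 * U x := by rw [eUUT]
  · -- wH B ≤ wG B + δ
    rw [withDensity_apply _ hB, withDensity_apply _ hB]
    have step1 : ∫⁻ x in B, H x ∂π ≤ ∫⁻ x in B, G x ∂π + ∫⁻ x, H x - G x ∂π := by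
      calc ∫⁻ x in B, H x ∂π ≤ ∫⁻ x in B, G x + (H x - G x) ∂π :=
            setLIntegral_mono (hGm.add (hHm.sub hGm)) fun x _ => le_add_tsub
        _ = ∫⁻ x in B, G x ∂π + ∫⁻ x in B, H x - G x ∂π :=
            lintegral_add_left hGm _
        _ ≤ ∫⁻ x in B, G x ∂π + ∫⁻ x, H x - G x ∂π := by
            gcongr _ + ?_
            exact setLIntegral_le_lintegral _ _
    refine step1.trans ?_
    gcongr
    have ept : ∀ᵐ x ∂π, H x - G x = H x * ((1 - U x) * (U x + 1)) := by
      filter_upwards [hAE] with x hx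
      calc H x - G x = H x * 1 - H x * T x := by rw [← eGHT]; simp
        _ = H x * (1 - T x) := (ENNReal.mul_sub fun _ _ => hfinH x hx).symm
        _ = H x * (1 - U x * U x) := by rw [eUUT]
        _ = H x * ((1 - U x) * (U x + 1)) := by rw [Kakutani.one_tsub_mul_self]
    rw [lintegral_congr_ae ept]
    refine hCS (fun x => 1 - U x) (measurable_const.sub hUm) ?_
    intro x _hx
    calc (1 - U x) * (1 - U x) ≤ (U x * U x + 1) - 2 * U x :=
          Kakutani.one_tsub_sq_le _
      _ = (T x + 1) - 2 * U x := by rw [eUUT]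


end S4

section S5

variable {Ω : ℕ → Type*} [∀ k, MeasurableSpace (Ω k)]
  {μ : ∀ k, Measure (Ω k)} [∀ k, IsProbabilityMeasure (μ k)]

/-- Forward-direction finite-dimensional estimate: the set where the density
exceeds 1 has small `π` measure but large `withDensity` measure. -/
lemma finite_forward (m : ℕ) (f : ∀ k, Ω k → ℝ≥0∞) (hf : ∀ k, Measurable (f k))
    (hint1 : ∀ k, ∫⁻ y, f k y ∂μ k = 1) :
    MeasurableSet {x : (i : Fin m) → Ω i | 1 < ∏ i : Fin m, f i (x i)} ∧
    Measure.pi (fun i : Fin m => μ i) {x : (i : Fin m) → Ω i | 1 < ∏ i : Fin m, f i (x i)}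
      ≤ (∏ k ∈ Finset.range m, ∫⁻ y, (f k y) ^ (1/2:ℝ) ∂μ k) ∧
    1 - (∏ k ∈ Finset.range m, ∫⁻ y, (f k y) ^ (1/2:ℝ) ∂μ k) ≤
      ((Measure.pi (fun i : Fin m => μ i)).withDensity
        (fun x => ∏ i : Fin m, f i (x i)))
        {x : (i : Fin m) → Ω i | 1 < ∏ i : Fin m, f i (x i)} := by
  set π : Measure ((i : Fin m) → Ω i) := Measure.pi (fun i : Fin m => μ i) with hπ
  set p : ℝ≥0∞ := ∏ k ∈ Finset.range m, ∫⁻ y, (f k y) ^ (1/2:ℝ) ∂μ k with hp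
  set G : ((i : Fin m) → Ω i) → ℝ≥0∞ := fun x => ∏ i : Fin m, f i (x i) with hG
  set SG : ((i : Fin m) → Ω i) → ℝ≥0∞ :=
    fun x => ∏ i : Fin m, (f i (x i)) ^ (1/2:ℝ) with hSG
  have hfm : ∀ i : Fin m, Measurable (fun x : (i : Fin m) → Ω i => f i (x i)) :=
    fun i => (hf i).comp (measurable_pi_apply i)
  have hGm : Measurable G := Finset.measurable_prod _ fun i _ => hfm i
  have hSGm : Measurable SG := Finset.measurable_prod _ fun i _ => (hfm i).pow_const _
  have eSG : ∀ x, SG x * SG x = G x := by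
    intro x
    rw [hSG, hG, ← Finset.prod_mul_distrib]
    exact Finset.prod_congr rfl fun i _ => Kakutani.sqrt_mul_self' _
  have ISG : ∫⁻ x, SG x ∂π = p := by
    rw [hSG, hπ, Kakutani.lintegral_pi_prod (fun i : Fin m => μ i)
      (fun i => fun y => (f i y) ^ (1/2:ℝ)) (fun i => (hf i).pow_const _), hp,
      Fin.prod_univ_eq_prod_range (fun k => ∫⁻ y, (f k y) ^ (1/2:ℝ) ∂μ k) m]
  set B : Set ((i : Fin m) → Ω i) := {x | 1 < G x} with hBdef
  have hB : MeasurableSet B := measurableSet_lt measurable_const hGm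
  refine ⟨hB, ?_, ?_⟩
  · have h1 : ∀ x ∈ B, (1:ℝ≥0∞) ≤ SG x := by
      intro x hx
      by_contra h
      push_neg at h
      have hGle : G x ≤ SG x := by
        rw [← eSG]
        calc SG x * SG x ≤ SG x * 1 := mul_le_mul_right h.le _
          _ = SG x := mul_one _
      have : (1:ℝ≥0∞) < 1 := lt_of_lt_of_le (lt_of_lt_of_le hx hGle) h.le
      exact lt_irrefl _ this
    calc π B = ∫⁻ _x in B, 1 ∂π := (setLIntegral_one B).symm
      _ ≤ ∫⁻ x in B, SG x ∂π := setLIntegral_mono hSGm h1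
      _ ≤ ∫⁻ x, SG x ∂π := setLIntegral_le_lintegral _ _
      _ = p := ISG
  · rw [withDensity_apply _ hB]
    have hsplit : ∫⁻ x in B, G x ∂π + ∫⁻ x in Bᶜ, G x ∂π = 1 := by
      rw [lintegral_add_compl G hB]
      rw [hG, hπ, Kakutani.lintegral_pi_prod (fun i : Fin m => μ i)
        (fun i => f i) (fun i => hf i)]
      exact Finset.prod_eq_one fun i _ => hint1 i
    have h2 : ∀ x ∈ Bᶜ, G x ≤ SG x := by
      intro x hx
      have hGle : G x ≤ 1 := not_lt.1 hx
      have hSGle : SG x ≤ 1 := by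
        by_contra h
        push_neg at h
        have : SG x ≤ G x := by
          rw [← eSG]
          calc SG x = SG x * 1 := (mul_one _).symm
            _ ≤ SG x * SG x := mul_le_mul_right h.le _
        exact absurd (h.trans_le (this.trans hGle)) (lt_irrefl _)
      rw [← eSG]
      calc SG x * SG x ≤ SG x * 1 := mul_le_mul_right hSGle _
        _ = SG x := mul_one _
    have h3 : ∫⁻ x in Bᶜ, G x ∂π ≤ p := by
      calc ∫⁻ x in Bᶜ, G x ∂π ≤ ∫⁻ x in Bᶜ, SG x ∂π := setLIntegral_mono hSGm h2
        _ ≤ ∫⁻ x, SG x ∂π := setLIntegral_le_lintegral _ _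
        _ = p := ISG
    rw [tsub_le_iff_right]
    calc (1:ℝ≥0∞) = ∫⁻ x in B, G x ∂π + ∫⁻ x in Bᶜ, G x ∂π := hsplit.symm
      _ ≤ ∫⁻ x in B, G x ∂π + p := add_le_add_right h3 _

/-- Restriction map between finite products. -/
def res {m m' : ℕ} (h : m ≤ m') : ((i : Fin m') → Ω i) → ((i : Fin m) → Ω i) :=
  fun x i => x (Fin.castLE h i)

lemma measurable_res {m m' : ℕ} (h : m ≤ m') : Measurable (res (Ω := Ω) h) :=
  measurable_pi_lambda _ fun i => measurable_pi_apply _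

lemma proj_comp_res {m m' : ℕ} (h : m ≤ m') :
    res (Ω := Ω) h ∘ proj m' = proj m := rfl

/-- Approximation of measurable sets by finite-dimensional cylinder sets. -/
lemma exists_cylinder_approx (S : Measure ((k : ℕ) → Ω k)) [IsFiniteMeasure S]
    {A : Set ((k : ℕ) → Ω k)} (hA : MeasurableSet A) :
    ∀ ε : ℝ≥0∞, 0 < ε → ε ≠ ⊤ →
      ∃ m B, MeasurableSet B ∧ S (symmDiff A (proj m ⁻¹' B)) < ε := by
  set good : Set (Set ((k : ℕ) → Ω k)) := {A | MeasurableSet A ∧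
    ∀ ε : ℝ≥0∞, 0 < ε → ε ≠ ⊤ →
      ∃ m B, MeasurableSet B ∧ S (symmDiff A (proj m ⁻¹' B)) < ε} with hgood
  suffices h : A ∈ good from h.2
  set M : MeasurableSpace ((k : ℕ) → Ω k) :=
    { MeasurableSet' := fun A => A ∈ good
      measurableSet_empty := ⟨MeasurableSet.empty, fun ε hε0 _ =>
        ⟨0, ∅, MeasurableSet.empty, by simpa using hε0⟩⟩
      measurableSet_compl := by
        rintro A ⟨hAm, hAa⟩
        refine ⟨hAm.compl, fun ε h0 ht => ?_⟩
        obtain ⟨m, B, hBm, hS⟩ := hAa ε h0 ht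
        refine ⟨m, Bᶜ, hBm.compl, ?_⟩
        rwa [Set.preimage_compl, compl_symmDiff_compl]
      measurableSet_iUnion := by
        intro g hg
        refine ⟨MeasurableSet.iUnion fun i => (hg i).1, fun ε h0 ht => ?_⟩
        set ε₂ : ℝ≥0∞ := ε / 2 with hε₂
        have hε₂0 : 0 < ε₂ := ENNReal.div_pos h0.ne' (by norm_num)
        have hε₂t : ε₂ ≠ ⊤ := by
          rw [hε₂]; exact (ENNReal.div_lt_top ht (by norm_num)).ne
        have hε₂ε : ε₂ + ε₂ = ε := ENNReal.add_halves ε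
        -- choose N with S (⋃ g) ≤ S (partial union) + ε₂
        set Acc : ℕ → Set ((k : ℕ) → Ω k) := fun N => ⋃ i ∈ Finset.range N, g i
          with hAcc
        have hAccm : ∀ N, MeasurableSet (Acc N) := fun N =>
          MeasurableSet.biUnion (Finset.range N).countable_toSet fun i _ => (hg i).1
        have hAccmono : Monotone Acc := fun a b hab =>
          Set.iUnion₂_subset fun i hi => Set.subset_iUnion₂ (s := fun i _ => g i) i
            (Finset.mem_range.mpr ((Finset.mem_range.mp hi).trans_le hab))
        have hAccU : (⋃ N, Acc N) = ⋃ i, g i := by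
          refine Set.Subset.antisymm ?_ ?_
          · exact Set.iUnion_subset fun N =>
              Set.iUnion₂_subset fun i _ => Set.subset_iUnion g i
          · exact Set.iUnion_subset fun i => Set.subset_iUnion_of_subset (i + 1)
              (Set.subset_iUnion₂ (s := fun i _ => g i) i
                (Finset.mem_range.mpr (Nat.lt_succ_self i)))
        have htend := MeasureTheory.tendsto_measure_iUnion_atTop (μ := S) hAccmono
        rw [hAccU] at htend
        have hexN : ∃ N, S (⋃ i, g i) ≤ S (Acc N) + ε₂ := by
          rcases eq_or_ne (S (⋃ i, g i)) 0 with h' | h'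
          · exact ⟨0, by rw [h']; exact zero_le⟩
          · have hlt : S (⋃ i, g i) - ε₂ < S (⋃ i, g i) :=
              ENNReal.sub_lt_self (measure_ne_top S _) h' hε₂0.ne'
            have := htend.eventually_const_lt hlt
            obtain ⟨N, hN⟩ := this.exists
            exact ⟨N, by
              rcases le_total ε₂ (S (⋃ i, g i)) with hc | hc
              · calc S (⋃ i, g i) = S (⋃ i, g i) - ε₂ + ε₂ :=
                    (tsub_add_cancel_of_le hc).symm
                  _ ≤ S (Acc N) + ε₂ := add_le_add_left hN.le _
              · calc S (⋃ i, g i) ≤ ε₂ := hc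
                  _ ≤ S (Acc N) + ε₂ := le_add_self⟩
        obtain ⟨N, hN⟩ := hexN
        have hdiff : S ((⋃ i, g i) \ Acc N) ≤ ε₂ := by
          rw [measure_diff (by rw [← hAccU]; exact Set.subset_iUnion Acc N)
            (hAccm N).nullMeasurableSet (measure_ne_top S _)]
          exact tsub_le_iff_left.2 hN
        rcases Nat.eq_zero_or_pos N with rfl | hNpos
        · -- N = 0 : the empty cylinder works
          refine ⟨0, ∅, MeasurableSet.empty, ?_⟩
          have : symmDiff (⋃ i, g i) (proj 0 ⁻¹' ∅) = ⋃ i, g i := by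
            simp [symmDiff_def]
          rw [this]
          calc S (⋃ i, g i) = S ((⋃ i, g i) \ Acc 0) := by
                simp [hAcc]
            _ ≤ ε₂ := hdiff
            _ < ε := ENNReal.half_lt_self h0.ne' ht
        -- N ≥ 1
        set εi : ℝ≥0∞ := ε₂ / N with hεi
        have hεi0 : 0 < εi := ENNReal.div_pos hε₂0.ne' (by simp)
        have hεit : εi ≠ ⊤ := by
          rw [hεi]
          exact (ENNReal.div_lt_top hε₂t (by exact_mod_cast hNpos.ne')).ne
        choose mf Bf hBfm hSf using fun i => (hg i).2 εi hεi0 hεit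
        set m : ℕ := (Finset.range N).sup mf with hm
        have hmle : ∀ i ∈ Finset.range N, mf i ≤ m := fun i hi => Finset.le_sup hi
        set B : Set ((i : Fin m) → Ω i) :=
          ⋃ i, ⋃ (hi : i ∈ Finset.range N), res (Finset.le_sup (f := mf) hi) ⁻¹' Bf i
          with hB
        have hBm : MeasurableSet B := MeasurableSet.iUnion fun i =>
          MeasurableSet.iUnion fun hi => measurable_res _ (hBfm i)
        have hCeq : proj m ⁻¹' B
            = ⋃ i, ⋃ (hi : i ∈ Finset.range N), proj (mf i) ⁻¹' Bf i := by
          rw [hB, Set.preimage_iUnion]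
          refine Set.iUnion_congr fun i => ?_
          rw [Set.preimage_iUnion]
          refine Set.iUnion_congr fun hi => ?_
          rw [← Set.preimage_comp, proj_comp_res]
        refine ⟨m, B, hBm, ?_⟩
        have hsub : symmDiff (⋃ i, g i) (proj m ⁻¹' B) ⊆
            ((⋃ i, g i) \ Acc N) ∪
              ⋃ i ∈ Finset.range N, symmDiff (g i) (proj (mf i) ⁻¹' Bf i) := by
          intro x hx
          rw [Set.mem_symmDiff] at hx
          rcases hx with ⟨hxA, hxC⟩ | ⟨hxC, hxA⟩
          · by_cases hxAcc : x ∈ Acc N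
            · rw [hAcc] at hxAcc
              simp only [Set.mem_iUnion] at hxAcc
              obtain ⟨i, hi, hxi⟩ := hxAcc
              refine Set.mem_union_right _ ?_
              simp only [Set.mem_iUnion]
              refine ⟨i, hi, ?_⟩
              rw [Set.mem_symmDiff]
              left
              refine ⟨hxi, fun hmem => hxC ?_⟩
              rw [hCeq]
              simp only [Set.mem_iUnion]
              exact ⟨i, hi, hmem⟩
            · exact Set.mem_union_left _ ⟨hxA, hxAcc⟩
          · rw [hCeq] at hxC
            simp only [Set.mem_iUnion] at hxC
            obtain ⟨i, hi, hxi⟩ := hxC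
            refine Set.mem_union_right _ ?_
            simp only [Set.mem_iUnion]
            refine ⟨i, hi, ?_⟩
            rw [Set.mem_symmDiff]
            right
            exact ⟨hxi, fun hmem => hxA (Set.mem_iUnion.mpr ⟨i, hmem⟩)⟩
        have hsum : ∑ i ∈ Finset.range N, S (symmDiff (g i) (proj (mf i) ⁻¹' Bf i))
            < ε₂ := by
          have hne : (Finset.range N).Nonempty := Finset.nonempty_range_iff.mpr hNpos.ne'
          calc ∑ i ∈ Finset.range N, S (symmDiff (g i) (proj (mf i) ⁻¹' Bf i))
              < ∑ _i ∈ Finset.range N, εi :=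
                ENNReal.sum_lt_sum_of_nonempty hne fun i _ => hSf i
            _ = N * εi := by rw [Finset.sum_const, Finset.card_range, nsmul_eq_mul]
            _ ≤ ε₂ := by rw [hεi]; exact ENNReal.mul_div_le
        calc S (symmDiff (⋃ i, g i) (proj m ⁻¹' B))
            ≤ S (((⋃ i, g i) \ Acc N) ∪
                ⋃ i ∈ Finset.range N, symmDiff (g i) (proj (mf i) ⁻¹' Bf i)) :=
              measure_mono hsub
          _ ≤ S ((⋃ i, g i) \ Acc N) +
              S (⋃ i ∈ Finset.range N, symmDiff (g i) (proj (mf i) ⁻¹' Bf i)) :=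
              measure_union_le _ _
          _ ≤ ε₂ + ∑ i ∈ Finset.range N, S (symmDiff (g i) (proj (mf i) ⁻¹' Bf i)) :=
              add_le_add hdiff (measure_biUnion_finset_le _ _)
          _ < ε₂ + ε₂ := ENNReal.add_lt_add_left hε₂t hsum
          _ = ε := hε₂ε
      }
  have hle : (MeasurableSpace.pi : MeasurableSpace ((k : ℕ) → Ω k)) ≤ M := by
    refine iSup_le fun k => ?_
    rw [MeasurableSpace.le_def]
    rintro s ⟨E, hE, rfl⟩
    refine ⟨(measurable_pi_apply k) hE, fun ε h0 _ => ?_⟩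
    refine ⟨k + 1, (fun x : (i : Fin (k+1)) → Ω i => x ⟨k, Nat.lt_succ_self k⟩) ⁻¹' E,
      (measurable_pi_apply _) hE, ?_⟩
    have heq : proj (k+1) ⁻¹'
        ((fun x : (i : Fin (k+1)) → Ω i => x ⟨k, Nat.lt_succ_self k⟩) ⁻¹' E)
        = (fun b : (k : ℕ) → Ω k => b k) ⁻¹' E := rfl
    rw [heq, symmDiff_self]
    simpa using h0
  exact MeasurableSpace.le_def.mp hle A hA


end S5

/-- Kakutani's criterion: if `ν k ≪ μ k` for every `k`, then the infinite product
measure `Q = ⊗ ν k` is absolutely continuous with respect to `P = ⊗ μ k` if and only if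
the infinite product of the Hellinger integrals `ρ(μ k, ν k) = ∫ √(dν k/dμ k) dμ k`
is strictly positive.  Since each Hellinger integral lies in `[0,1]`, the infinite
product is the infimum of the partial products. -/
theorem productMeasure_absolutelyContinuous_iff_hellinger
    {Ω : ℕ → Type*} [∀ k, MeasurableSpace (Ω k)]
    (μ ν : (k : ℕ) → Measure (Ω k))
    [∀ k, IsProbabilityMeasure (μ k)] [∀ k, IsProbabilityMeasure (ν k)]
    (hac : ∀ k, ν k ≪ μ k)
    (P Q : Measure ((k : ℕ) → Ω k))
    (hP : IsProductMeasure μ P) (hQ : IsProductMeasure ν Q) :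
    Q ≪ P ↔
      0 < ⨅ n : ℕ, ∏ k ∈ Finset.range n,
        ∫ x, Real.sqrt (((ν k).rnDeriv (μ k) x).toReal) ∂(μ k) := by
  classical
  haveI hPprob : IsProbabilityMeasure P := isProbability_of_isProductMeasure hP
  haveI hQprob : IsProbabilityMeasure Q := isProbability_of_isProductMeasure hQ
  set rn : ∀ k, Ω k → ℝ≥0∞ := fun k => (ν k).rnDeriv (μ k) with hrn
  have hf : ∀ k, Measurable (rn k) := fun k => Measure.measurable_rnDeriv _ _
  have hint1 : ∀ k, ∫⁻ y, rn k y ∂μ k = 1 := fun k => by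
    rw [hrn]; rw [Measure.lintegral_rnDeriv (hac k)]; exact measure_univ
  have hfin : ∀ k, ∀ᵐ y ∂μ k, rn k y ≠ ⊤ := fun k =>
    (Measure.rnDeriv_lt_top _ _).mono fun y hy => hy.ne
  have hwd : ∀ k, ν k = (μ k).withDensity (rn k) := fun k =>
    (Measure.withDensity_rnDeriv_eq _ _ (hac k)).symm
  set ρ : ℕ → ℝ≥0∞ := fun k => ∫⁻ y, (rn k y) ^ (1/2:ℝ) ∂μ k with hρdef
  have hρle1 : ∀ k, ρ k ≤ 1 := fun k => sqrt_lintegral_le_one (μ k) (hf k) (hint1 k)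
  have hρeq : ∀ k, (∫ x, Real.sqrt (((ν k).rnDeriv (μ k) x).toReal) ∂(μ k)) = (ρ k).toReal := by
    intro k
    rw [integral_eq_lintegral_of_nonneg_ae
      (Filter.Eventually.of_forall fun x => Real.sqrt_nonneg _)
      ((hf k).ennreal_toReal.sqrt).aestronglyMeasurable]
    congr 1
    refine lintegral_congr_ae ?_
    filter_upwards [hfin k] with y hy
    rw [Real.sqrt_eq_rpow,
      ← ENNReal.ofReal_rpow_of_nonneg ENNReal.toReal_nonneg (by norm_num),
      ENNReal.ofReal_toReal hy]
  set p : ℕ → ℝ≥0∞ := fun n => ∏ k ∈ Finset.range n, ρ k with hpdef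
  have hpfin : ∀ n, p n ≠ ⊤ := fun n =>
    (ENNReal.prod_lt_top fun k _ => (hρle1 k).trans_lt ENNReal.one_lt_top).ne
  have hple1 : ∀ n, p n ≤ 1 := fun n =>
    Finset.prod_le_one (fun _ _ => zero_le) fun k _ => hρle1 k
  have hsplit : ∀ {n m : ℕ}, n ≤ m → p n * (∏ k ∈ Finset.Ico n m, ρ k) = p m := by
    intro n m h
    rw [hpdef]
    simp only
    rw [Finset.range_eq_Ico, Finset.range_eq_Ico, Finset.prod_Ico_consecutive _ (Nat.zero_le n) h]
  have hpanti : Antitone p := by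
    intro n m h
    rw [← hsplit h]
    exact (mul_le_mul_right
      (Finset.prod_le_one (fun _ _ => zero_le) fun k _ => hρle1 k) _).trans_eq
      (mul_one _)
  have hiInf : (⨅ n : ℕ, ∏ k ∈ Finset.range n,
      ∫ x, Real.sqrt (((ν k).rnDeriv (μ k) x).toReal) ∂(μ k)) = ⨅ n, (p n).toReal := by
    congr 1
    funext n
    rw [hpdef]
    simp only
    rw [ENNReal.toReal_prod]
    exact Finset.prod_congr rfl fun k _ => hρeq k
  rw [hiInf]
  have hbdd : BddBelow (Set.range fun n => (p n).toReal) := by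
    refine ⟨0, ?_⟩
    rintro x ⟨n, rfl⟩
    exact ENNReal.toReal_nonneg
  have hanti : Antitone (fun n => (p n).toReal) := fun n m h =>
    ENNReal.toReal_mono (hpfin n) (hpanti h)
  have htends : Filter.Tendsto (fun n => (p n).toReal) Filter.atTop
      (nhds (⨅ n, (p n).toReal)) := tendsto_atTop_ciInf hanti hbdd
  have hc0 : 0 ≤ ⨅ n, (p n).toReal := le_ciInf fun n => ENNReal.toReal_nonneg
  have hcle : ∀ n, (⨅ n, (p n).toReal) ≤ (p n).toReal := fun n => ciInf_le hbdd n
  constructor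
  · -- forward direction
    intro hQP
    by_contra hneg
    push_neg at hneg
    have hc : (⨅ n, (p n).toReal) = 0 := le_antisymm hneg hc0
    rw [hc] at htends
    have hex : ∀ j : ℕ, ∃ n, (p n).toReal < ((2:ℝ)⁻¹)^j := fun j =>
      (htends.eventually_lt_const (by positivity)).exists
    choose nf hnf using hex
    have hple : ∀ j, p (nf j) ≤ (2⁻¹ : ℝ≥0∞)^j := by
      intro j
      rw [← ENNReal.ofReal_toReal (hpfin (nf j))]
      calc ENNReal.ofReal (p (nf j)).toReal ≤ ENNReal.ofReal (((2:ℝ)⁻¹)^j) :=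
            ENNReal.ofReal_le_ofReal (hnf j).le
        _ = (2⁻¹ : ℝ≥0∞)^j := by
            rw [ENNReal.ofReal_pow (by norm_num)]
            congr 1
            rw [ENNReal.ofReal_inv_of_pos (by norm_num)]
            norm_num
    have hff := fun j => finite_forward (μ := μ) (nf j) rn hf hint1
    set D : ℕ → Set ((k : ℕ) → Ω k) := fun j => proj (nf j) ⁻¹'
      {x : (i : Fin (nf j)) → Ω i | 1 < ∏ i : Fin (nf j), rn i (x i)} with hDdef
    have hDm : ∀ j, MeasurableSet (D j) := fun j => measurable_proj _ (hff j).1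
    have hPD : ∀ j, P (D j) ≤ (2⁻¹ : ℝ≥0∞)^j := by
      intro j
      rw [hDdef]
      simp only
      rw [← Measure.map_apply (measurable_proj _) (hff j).1, map_proj_eq_pi hP]
      exact ((hff j).2.1.trans_eq rfl).trans (hple j)
    have hQD : ∀ j, 1 - p (nf j) ≤ Q (D j) := by
      intro j
      rw [hDdef]
      simp only
      rw [← Measure.map_apply (measurable_proj _) (hff j).1, map_proj_eq_pi hQ,
        pi_withDensity_eq (nf j) rn hf ν hwd]
      exact (hff j).2.2
    set A : Set ((k : ℕ) → Ω k) := Filter.limsup D Filter.atTop with hAdef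
    have hArw : A = ⋂ J, ⋃ j, ⋃ (_ : j ≥ J), D j := by
      rw [hAdef, Filter.limsup_eq_iInf_iSup_of_nat]
      simp only [Set.iInf_eq_iInter, Set.iSup_eq_iUnion]
    have hAm : MeasurableSet A := by
      rw [hArw]
      exact MeasurableSet.iInter fun J => MeasurableSet.iUnion fun j =>
        MeasurableSet.iUnion fun _ => hDm j
    have hPA : P A = 0 := by
      refine measure_limsup_atTop_eq_zero ?_
      refine ne_top_of_le_ne_top ?_ (ENNReal.tsum_le_tsum hPD)
      rw [ENNReal.tsum_geometric]
      simp [ENNReal.one_sub_inv_two]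
    have hQAc : Q Aᶜ = 0 := by
      have hAc : Aᶜ = ⋃ J, ⋂ j, ⋂ (_ : j ≥ J), (D j)ᶜ := by
        rw [hArw]
        simp only [Set.compl_iInter, Set.compl_iUnion]
      rw [hAc]
      refine measure_iUnion_null fun J => ?_
      have hb : ∀ t : ℕ, Q (⋂ j, ⋂ (_ : j ≥ J), (D j)ᶜ) ≤ (2⁻¹ : ℝ≥0∞)^t := by
        intro t
        calc Q (⋂ j, ⋂ (_ : j ≥ J), (D j)ᶜ)
            ≤ Q ((D (J + t))ᶜ) := measure_mono
              (Set.iInter_subset_of_subset (J + t)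
                (Set.iInter_subset _ (Nat.le_add_right J t)))
          _ = 1 - Q (D (J + t)) := prob_compl_eq_one_sub (hDm _)
          _ ≤ 1 - (1 - p (nf (J + t))) := tsub_le_tsub_left (hQD (J + t)) 1
          _ = p (nf (J + t)) := ENNReal.sub_sub_cancel ENNReal.one_ne_top (hple1 _)
          _ ≤ (2⁻¹ : ℝ≥0∞)^(J + t) := hple _
          _ ≤ (2⁻¹ : ℝ≥0∞)^t :=
              pow_le_pow_of_le_one zero_le (by simp) (Nat.le_add_left t J)
      have htd : Filter.Tendsto (fun t : ℕ => (2⁻¹ : ℝ≥0∞)^t) Filter.atTop (nhds 0) :=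
        ENNReal.tendsto_pow_atTop_nhds_zero_of_lt_one
          (by rw [ENNReal.inv_lt_one]; exact ENNReal.one_lt_two)
      exact le_antisymm (ge_of_tendsto' htd hb) zero_le
    have hQA : Q A = 1 := by
      have := measure_add_measure_compl (μ := Q) hAm
      rw [hQAc, add_zero, measure_univ] at this
      exact this
    have : Q A = 0 := hQP hPA
    rw [hQA] at this
    exact one_ne_zero this
  · -- reverse direction
    intro hcpos
    refine Measure.AbsolutelyContinuous.mk fun A hA hPA => ?_
    have hppos : ∀ n, 0 < (p n).toReal := fun n => lt_of_lt_of_le hcpos (hcle n)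
    have hpne0 : ∀ n, p n ≠ 0 := fun n h => by
      have := hppos n
      rw [h] at this
      simp at this
    have htdiv : Filter.Tendsto (fun n => (⨅ n, (p n).toReal) / (p n).toReal)
        Filter.atTop (nhds 1) := by
      have h1 := Filter.Tendsto.div
        (tendsto_const_nhds (x := ⨅ n, (p n).toReal) (f := Filter.atTop)) htends
        (ne_of_gt hcpos)
      rwa [div_self (ne_of_gt hcpos)] at h1
    have hβ : Filter.Tendsto
        (fun n => Real.sqrt (2 - 2 * ((⨅ n, (p n).toReal) / (p n).toReal)) * 2)
        Filter.atTop (nhds 0) := by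
      have h2 : Filter.Tendsto
          (fun n => 2 - 2 * ((⨅ n, (p n).toReal) / (p n).toReal))
          Filter.atTop (nhds 0) := by
        have h3 := Filter.Tendsto.sub
          (tendsto_const_nhds (x := (2:ℝ)) (f := Filter.atTop)) (htdiv.const_mul 2)
        simpa using h3
      have h4 := (Real.continuous_sqrt.tendsto 0).comp h2
      have h5 := h4.mul_const 2
      simpa using h5
    refine le_antisymm ?_ zero_le
    refine ENNReal.le_of_forall_pos_le_add fun ε hε _ => ?_
    obtain ⟨n, hn⟩ := (hβ.eventually_lt_const
      (show (0:ℝ) < (ε:ℝ)/2 by positivity)).exists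
    have htle1 : (⨅ n, (p n).toReal) / (p n).toReal ≤ 1 :=
      div_le_one_of_le₀ (hcle n) (le_of_lt (hppos n))
    set R : Measure ((k : ℕ) → Ω k) :=
      P.withDensity (fun ω => ∏ k ∈ Finset.range n, rn k (ω k)) with hRdef
    have hRA : R A = 0 := by
      rw [hRdef]
      exact (withDensity_absolutelyContinuous P _) hPA
    have hGmeas : Measurable (fun ω : (k : ℕ) → Ω k =>
        ∏ k ∈ Finset.range n, rn k (ω k)) :=
      Finset.measurable_prod _ fun k _ => (hf k).comp (measurable_pi_apply k)
    haveI hRfin : IsFiniteMeasure R := by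
      constructor
      rw [hRdef, withDensity_apply _ MeasurableSet.univ, Measure.restrict_univ]
      have e1 : ∫⁻ ω, ∏ k ∈ Finset.range n, rn k (ω k) ∂P
          = ∫⁻ ω, (fun x : (i : Fin n) → Ω i => ∏ i : Fin n, rn i (x i)) (proj n ω) ∂P :=
        lintegral_congr fun ω =>
          (Fin.prod_univ_eq_prod_range (fun k => rn k (ω k)) n).symm
      have hprodmeas : Measurable (fun x : (i : Fin n) → Ω i =>
          ∏ i : Fin n, rn i (x i)) :=
        Finset.measurable_prod _ fun i _ => (hf i).comp (measurable_pi_apply i)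
      rw [e1, ← lintegral_map hprodmeas (measurable_proj n),
        map_proj_eq_pi hP n,
        Kakutani.lintegral_pi_prod (fun i : Fin n => μ i) (fun i => rn i)
          (fun i => hf i)]
      have : ∏ i : Fin n, ∫⁻ y, rn i y ∂μ i = 1 :=
        Finset.prod_eq_one fun i _ => hint1 i
      rw [this]
      exact ENNReal.one_lt_top
    obtain ⟨m₀, B₀, hB₀m, hS⟩ := exists_cylinder_approx (Q + R) hA
      ((ε : ℝ≥0∞)/4)
      (ENNReal.div_pos (by exact_mod_cast hε.ne') (by norm_num))
      (ENNReal.div_lt_top ENNReal.coe_ne_top (by norm_num)).ne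
    have hnm : n ≤ max m₀ n := le_max_right m₀ n
    set B : Set ((i : Fin (max m₀ n)) → Ω i) := res (le_max_left m₀ n) ⁻¹' B₀ with hBdef
    have hBm : MeasurableSet B := measurable_res _ hB₀m
    have hCeq : proj m₀ ⁻¹' B₀ = proj (max m₀ n) ⁻¹' B := by
      rw [hBdef, ← Set.preimage_comp, proj_comp_res]
    rw [hCeq] at hS
    set C : Set ((k : ℕ) → Ω k) := proj (max m₀ n) ⁻¹' B with hCdef
    -- identifications
    have hQC : Q C = ((Measure.pi fun i : Fin (max m₀ n) => μ i).withDensity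
        (fun x => ∏ i : Fin (max m₀ n), rn i (x i))) B := by
      rw [hCdef, ← Measure.map_apply (measurable_proj _) hBm, map_proj_eq_pi hQ,
        pi_withDensity_eq (max m₀ n) rn hf ν hwd]
    have hRC : R C = ((Measure.pi fun i : Fin (max m₀ n) => μ i).withDensity
        (fun x => ∏ i : Fin (max m₀ n), if (i : ℕ) < n then rn i (x i) else 1)) B := by
      rw [hCdef, ← Measure.map_apply (measurable_proj _) hBm, hRdef,
        map_withDensity_proj hP hnm rn hf]
    have hkey := (finite_bound (μ := μ) hnm rn hf hint1 hfin hBm).1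
    -- δ bound
    have hδle : (2 - 2 * ∏ k ∈ Finset.Ico n (max m₀ n), ρ k) ^ (1/2:ℝ) * 2 ≤
        ENNReal.ofReal
          (Real.sqrt (2 - 2 * ((⨅ n, (p n).toReal) / (p n).toReal)) * 2) := by
      have h1 : ENNReal.ofReal ((⨅ n, (p n).toReal) / (p n).toReal)
          ≤ ∏ k ∈ Finset.Ico n (max m₀ n), ρ k := by
        rw [ENNReal.ofReal_div_of_pos (hppos n), ENNReal.ofReal_toReal (hpfin n),
          ENNReal.div_le_iff_le_mul (Or.inl (hpne0 n)) (Or.inl (hpfin n))]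
        calc ENNReal.ofReal (⨅ n, (p n).toReal)
            ≤ p (max m₀ n) := by
              rw [← ENNReal.ofReal_toReal (hpfin (max m₀ n))]
              exact ENNReal.ofReal_le_ofReal (hcle (max m₀ n))
          _ = (∏ k ∈ Finset.Ico n (max m₀ n), ρ k) * p n := by
              rw [← hsplit hnm]; ring
      have h2 : (2:ℝ≥0∞) - 2 * ∏ k ∈ Finset.Ico n (max m₀ n), ρ k
          ≤ ENNReal.ofReal (2 - 2 * ((⨅ n, (p n).toReal) / (p n).toReal)) := by
        have e1 : ENNReal.ofReal (2 - 2 * ((⨅ n, (p n).toReal) / (p n).toReal))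
            = 2 - 2 * ENNReal.ofReal ((⨅ n, (p n).toReal) / (p n).toReal) := by
          rw [ENNReal.ofReal_sub _ (by positivity), ENNReal.ofReal_mul (by norm_num)]
          norm_num
        rw [e1]
        exact tsub_le_tsub_left (mul_le_mul_right h1 2) 2
      calc (2 - 2 * ∏ k ∈ Finset.Ico n (max m₀ n), ρ k) ^ (1/2:ℝ) * 2
          ≤ (ENNReal.ofReal
              (2 - 2 * ((⨅ n, (p n).toReal) / (p n).toReal))) ^ (1/2:ℝ) * 2 :=
            mul_le_mul_left (ENNReal.rpow_le_rpow h2 (by norm_num)) 2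
        _ = ENNReal.ofReal
            (Real.sqrt (2 - 2 * ((⨅ n, (p n).toReal) / (p n).toReal)) * 2) := by
            rw [ENNReal.ofReal_rpow_of_nonneg (by nlinarith) (by norm_num),
              ENNReal.ofReal_mul (by positivity)]
            rw [Real.sqrt_eq_rpow]
            norm_num
      -- end hδle
    have hofβ : ENNReal.ofReal
        (Real.sqrt (2 - 2 * ((⨅ n, (p n).toReal) / (p n).toReal)) * 2)
        ≤ (ε : ℝ≥0∞)/2 := by
      calc ENNReal.ofReal _ ≤ ENNReal.ofReal ((ε:ℝ)/2) := ENNReal.ofReal_le_ofReal hn.le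
        _ = (ε : ℝ≥0∞)/2 := by
            rw [ENNReal.ofReal_div_of_pos (by norm_num), ENNReal.ofReal_coe_nnreal]
            norm_num
    -- assembly
    have hQle : Q A ≤ Q C + (Q + R) (symmDiff A C) := by
      calc Q A ≤ Q (C ∪ (A \ C)) := measure_mono (fun x hx => by
            by_cases h : x ∈ C
            · exact Or.inl h
            · exact Or.inr ⟨hx, h⟩)
        _ ≤ Q C + Q (A \ C) := measure_union_le _ _
        _ ≤ Q C + (Q + R) (symmDiff A C) := by
            gcongr _ + ?_
            calc Q (A \ C) ≤ Q (symmDiff A C) := measure_mono (fun x hx => by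
                  rw [Set.mem_symmDiff]; exact Or.inl ⟨hx.1, hx.2⟩)
              _ ≤ (Q + R) (symmDiff A C) := by
                  rw [Measure.add_apply]; exact le_self_add
    have hRCle : R C ≤ (Q + R) (symmDiff A C) := by
      calc R C ≤ R (A ∪ (C \ A)) := measure_mono (fun x hx => by
            by_cases h : x ∈ A
            · exact Or.inl h
            · exact Or.inr ⟨hx, h⟩)
        _ ≤ R A + R (C \ A) := measure_union_le _ _
        _ = R (C \ A) := by rw [hRA, zero_add]
        _ ≤ (Q + R) (symmDiff A C) := by
            rw [Measure.add_apply]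
            refine le_add_left (measure_mono fun x hx => ?_)
            rw [Set.mem_symmDiff]; exact Or.inr ⟨hx.1, hx.2⟩
    calc Q A ≤ Q C + (Q + R) (symmDiff A C) := hQle
      _ ≤ (R C + ENNReal.ofReal
            (Real.sqrt (2 - 2 * ((⨅ n, (p n).toReal) / (p n).toReal)) * 2))
          + (Q + R) (symmDiff A C) := by
          gcongr
          rw [hQC, hRC]
          exact hkey.trans (add_le_add_right (hδle.trans le_rfl) _)
      _ ≤ ((Q + R) (symmDiff A C) + (ε : ℝ≥0∞)/2) + (Q + R) (symmDiff A C) :=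
          add_le_add (add_le_add hRCle hofβ) le_rfl
      _ ≤ ((ε : ℝ≥0∞)/4 + (ε : ℝ≥0∞)/2) + (ε : ℝ≥0∞)/4 :=
          add_le_add (add_le_add hS.le le_rfl) hS.le
      _ ≤ 0 + (ε : ℝ≥0∞) := by
          rw [zero_add]
          calc (ε : ℝ≥0∞)/4 + (ε : ℝ≥0∞)/2 + (ε : ℝ≥0∞)/4
              = ((ε : ℝ≥0∞)/4 + (ε : ℝ≥0∞)/4) + (ε : ℝ≥0∞)/2 := by ring
            _ ≤ (ε : ℝ≥0∞) := by
                rw [ENNReal.div_add_div_same]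
                rw [show ((ε : ℝ≥0∞) + ε) = 2 * ε by ring]
                rw [show (4:ℝ≥0∞) = 2 * 2 by norm_num]
                rw [ENNReal.mul_div_mul_left _ _ (by norm_num) (by norm_num)]
                exact (ENNReal.add_halves _).le
end

section
/- Suppose there is k₀ such that δ_k > 1 (i.e., a_k > r_k) for all k > k₀. Then the set S of all subsums of the series Σ_k a_k is nowhere dense in ℝ. -/
open MeasureTheory Finset Filter

/-- Union of a closed set with empty interior and a set with empty interior has
empty interior. -/
lemma aux_interior_union_empty {X : Type*} [TopologicalSpace X] {s t : Set X}
    (hs : IsClosed s) (hs' : interior s = ∅) (ht' : interior t = ∅) :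
    interior (s ∪ t) = ∅ := by
  have h1 : interior (s ∪ t) ∩ sᶜ ⊆ interior t := by
    apply interior_maximal
    · rintro x ⟨hx, hxs⟩
      rcases interior_subset hx with h | h
      · exact absurd h hxs
      · exact h
    · exact isOpen_interior.inter hs.isOpen_compl
  have h2 : interior (s ∪ t) ⊆ s := by
    intro x hx
    by_contra h
    have := h1 ⟨hx, h⟩
    rw [ht'] at this
    exact this
  have h3 : interior (s ∪ t) ⊆ interior s := interior_maximal h2 isOpen_interior
  rw [hs'] at h3
  exact Set.subset_empty_iff.1 h3

lemma aux_interior_biUnion_empty {X ι : Type*} [TopologicalSpace X] (s : Finset ι)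
    (f : ι → Set X) (hc : ∀ i, IsClosed (f i)) (hi : ∀ i, interior (f i) = ∅) :
    interior (⋃ i ∈ s, f i) = ∅ := by
  classical
  induction s using Finset.induction_on with
  | empty => simp
  | insert _ _ hx ih =>
    rw [Finset.set_biUnion_insert]
    exact aux_interior_union_empty (hc _) (hi _) ih

set_option maxHeartbeats 1000000 in
/-- If `a k > r k` (i.e. `δ k > 1`) for all sufficiently large `k`, where
`r k = ∑_{i > k} a i` is the tail of the positive series `∑ a k = 1`, then the set of
all subsums of the series is nowhere dense in `ℝ`. -/
theorem subsums_isNowhereDense_of_eventually_tail_lt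
    (a : ℕ → ℝ) (ha : ∀ k, 0 < a k) (hsum : ∑' k, a k = 1)
    (r : ℕ → ℝ) (hr : ∀ k, r k = ∑' i : ℕ, a (k + 1 + i))
    (hδ : ∃ k₀, ∀ k > k₀, r k < a k)
    (S : Set ℝ)
    (hS : S = {x | ∃ γ : ℕ → Bool, x = ∑' k : ℕ, if γ k then a k else 0}) :
    IsNowhereDense S := by
  classical
  obtain ⟨k₀, hk₀⟩ := hδ
  -- Summability of `a`
  have hsa : Summable a := by
    by_contra h
    rw [tsum_eq_zero_of_not_summable h] at hsum
    norm_num at hsum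
  -- rewrite the tails
  have hr2 : ∀ k, r k = ∑' i, a (i + (k + 1)) := by
    intro k
    rw [hr k]
    exact tsum_congr fun i => congrArg a (by omega)
  have hsa' : ∀ m : ℕ, Summable fun i => a (i + m) := fun m => (summable_nat_add_iff (f := a) m).2 hsa
  -- recurrence for r
  have hrec : ∀ k, r k = a (k + 1) + r (k + 1) := by
    intro k
    rw [hr2 k, hr2 (k + 1)]
    have h1 := Summable.sum_add_tsum_nat_add (f := fun i => a (i + (k + 1))) 1 (hsa' (k + 1))
    have h2 : (∑' i, a (i + (k + 2))) = ∑' i, a ((i + 1) + (k + 1)) :=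
      tsum_congr fun i => congrArg a (by omega)
    rw [h2, ← h1, Finset.sum_range_one]
    norm_num
  have hrnn : ∀ k, 0 ≤ r k := by
    intro k
    rw [hr2 k]
    exact tsum_nonneg fun i => (ha _).le
  have hrpos : ∀ k, 0 < r k := by
    intro k
    rw [hrec k]
    have := hrnn (k + 1)
    linarith [ha (k + 1)]
  have hrdec : Antitone r := by
    apply antitone_nat_of_succ_le
    intro n
    rw [hrec n]
    linarith [ha (n + 1)]
  -- r tends to 0
  have htend : Tendsto r atTop (nhds 0) := by
    have h1 : Tendsto (fun i => ∑' k, a (k + i)) atTop (nhds 0) := tendsto_sum_nat_add a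
    have h2 : Tendsto (fun n : ℕ => n + 1) atTop atTop := tendsto_add_atTop_nat 1
    have := h1.comp h2
    refine this.congr fun n => ?_
    simp only [Function.comp]
    exact (hr2 n).symm
  -- telescoping formula
  have hIco : ∀ j n : ℕ, j ≤ n → r j = ∑ k ∈ Ico (j + 1) (n + 1), a k + r n := by
    intro j n hjn
    induction n with
    | zero =>
      have : j = 0 := Nat.le_zero.1 hjn
      subst this
      simp
    | succ m ih =>
      rcases Nat.lt_or_ge j (m + 1) with h | h
      · have hjm : j ≤ m := by omega
        rw [Finset.sum_Ico_succ_top (by omega : j + 1 ≤ m + 1)]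
        rw [ih hjm, hrec m]
        ring
      · have : j = m + 1 := by omega
        subst this
        simp
  -- summability of subsums
  have hsub : ∀ γ : ℕ → Bool, Summable (fun k => if γ k then a k else 0) := by
    intro γ
    apply Summable.of_nonneg_of_le (fun k => ?_) (fun k => ?_) hsa
    · split <;> [exact (ha k).le; exact le_refl 0]
    · split <;> [exact le_refl _; exact (ha k).le]
  have hsubm : ∀ (γ : ℕ → Bool) (m : ℕ),
      Summable (fun i => if γ (i + m) then a (i + m) else 0) := by
    intro γ m
    exact ((summable_nat_add_iff (f := fun k => if γ k then a k else 0) m).2 (hsub γ))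
  -- tail bounds for subsums
  have htail : ∀ (γ : ℕ → Bool) (n : ℕ),
      0 ≤ ∑' i, (if γ (i + (n + 1)) then a (i + (n + 1)) else 0) ∧
      (∑' i, (if γ (i + (n + 1)) then a (i + (n + 1)) else 0)) ≤ r n := by
    intro γ n
    constructor
    · exact tsum_nonneg fun i => by split <;> [exact (ha _).le; exact le_refl 0]
    · rw [hr2 n]
      apply Summable.tsum_le_tsum _ (hsubm γ (n + 1)) (hsa' (n + 1))
      intro i
      split <;> [exact le_refl _; exact (ha _).le]
  -- splitting formula
  have hFsplit : ∀ (γ : ℕ → Bool) (m : ℕ),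
      (∑' k, if γ k then a k else 0) =
      (∑ k ∈ range m, if γ k then a k else 0) +
        ∑' i, (if γ (i + m) then a (i + m) else 0) :=
    fun γ m => (Summable.sum_add_tsum_nat_add m (hsub γ)).symm
  -- the pieces
  set F : (ℕ → Bool) → ℝ := fun γ => ∑' k, if γ k then a k else 0 with hF
  set Sb : (Fin (k₀ + 1) → Bool) → Set ℝ := fun b =>
    F '' {γ | ∀ k : Fin (k₀ + 1), γ (k : ℕ) = b k} with hSb
  have hSdecomp : S = ⋃ b, Sb b := by
    rw [hS]
    ext x
    simp only [Set.mem_setOf_eq, Set.mem_iUnion, hSb, Set.mem_image]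
    constructor
    · rintro ⟨γ, hγ⟩
      exact ⟨fun k => γ (k : ℕ), γ, fun k => rfl, hγ.symm⟩
    · rintro ⟨b, γ, _, hγ⟩
      exact ⟨γ, hγ.symm⟩
  -- F is continuous
  have hFcont : Continuous F := by
    apply continuous_tsum (u := a) _ hsa
    · intro n γ
      rw [Real.norm_eq_abs]
      split
      · rw [abs_of_pos (ha n)]
      · rw [abs_zero]; exact (ha n).le
    · intro n
      exact (continuous_of_discreteTopology (f := fun v : Bool => if v then a n else 0)).comp
        (continuous_apply n)
  -- each piece is closed
  have hSbclosed : ∀ b, IsClosed (Sb b) := by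
    intro b
    have hK : IsClosed {γ : ℕ → Bool | ∀ k : Fin (k₀ + 1), γ (k : ℕ) = b k} := by
      have : {γ : ℕ → Bool | ∀ k : Fin (k₀ + 1), γ (k : ℕ) = b k} =
          ⋂ k : Fin (k₀ + 1), {γ : ℕ → Bool | γ (k : ℕ) = b k} := by
        ext γ; simp
      rw [this]
      exact isClosed_iInter fun k => isClosed_eq (continuous_apply _) continuous_const
    exact (hK.isCompact.image hFcont).isClosed
  -- each piece has empty interior
  have hSbint : ∀ b, interior (Sb b) = ∅ := by
    intro b
    rw [Set.eq_empty_iff_forall_notMem]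
    intro x hx
    obtain ⟨ε, hε, hball⟩ := Metric.mem_nhds_iff.1 (mem_interior_iff_mem_nhds.1 hx)
    obtain ⟨γ, hγpre, hγ⟩ := interior_subset hx
    -- choose n
    obtain ⟨N, hN⟩ : ∃ N, r N < ε := by
      have := htend.eventually (eventually_lt_nhds hε)
      exact (this.exists)
    set n := max N k₀ with hn
    have hrn : r n < ε := lt_of_le_of_lt (hrdec (le_max_left N k₀)) hN
    have hnk₀ : k₀ ≤ n := le_max_right N k₀
    -- the candidate point in the gap
    set Cγ : ℝ := ∑ k ∈ range (n + 1), if γ k then a k else 0 with hCγ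
    set y : ℝ := Cγ + r n / 2 with hy
    -- y is in the ball
    have hyball : y ∈ Metric.ball x ε := by
      rw [Metric.mem_ball, Real.dist_eq]
      have hxval : x = Cγ + ∑' i, (if γ (i + (n + 1)) then a (i + (n + 1)) else 0) := by
        rw [← hγ]; exact hFsplit γ (n + 1)
      obtain ⟨ht0, ht1⟩ := htail γ n
      rw [hy, hxval]
      rw [abs_lt]
      constructor <;> [linarith; linarith [hrpos n]]
    -- hence y ∈ Sb b
    obtain ⟨β, hβpre, hβ⟩ := hball hyball
    -- split y at n+2
    set Cβ : ℝ := ∑ k ∈ range (n + 2), if β k then a k else 0 with hCβ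
    have hysplit : y = Cβ + ∑' i, (if β (i + (n + 2)) then a (i + (n + 2)) else 0) := by
      rw [← hβ]; exact hFsplit β (n + 2)
    obtain ⟨htβ0, htβ1⟩ := htail β (n + 1)
    have hkey : Cβ - Cγ = r n / 2 - ∑' i, (if β (i + (n + 2)) then a (i + (n + 2)) else 0) := by
      rw [hysplit] at hy
      linarith [hy]
    have han1 : r (n + 1) < a (n + 1) := hk₀ (n + 1) (Nat.lt_succ_of_le hnk₀)
    have hrecn := hrec n
    by_cases hP : ∀ k ≤ n, β k = γ k
    · -- case A : β and γ agree up to n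
      have hCeq : Cβ = Cγ + (if β (n + 1) then a (n + 1) else 0) := by
        rw [hCβ, Finset.sum_range_succ, hCγ]
        congr 1
        exact Finset.sum_congr rfl fun k hk => by
          rw [hP k (by have := Finset.mem_range.1 hk; omega)]
      rw [hCeq] at hkey
      by_cases hb : β (n + 1)
      · rw [if_pos hb] at hkey
        linarith
      · rw [if_neg hb] at hkey
        linarith
    · -- case B : first difference at some j ≤ n, and j > k₀
      push_neg at hP
      obtain ⟨m, hm, hmne⟩ := hP
      have hex : ∃ k, β k ≠ γ k := ⟨m, hmne⟩
      set j := Nat.find hex with hj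
      have hjspec : β j ≠ γ j := Nat.find_spec hex
      have hjmin : ∀ i < j, β i = γ i := fun i hi => by
        have := Nat.find_min hex hi
        simpa using this
      have hjm : j ≤ m := Nat.find_min' hex hmne
      have hjn : j ≤ n := le_trans hjm hm
      have hjk₀ : k₀ < j := by
        by_contra h
        push_neg at h
        have h1 := hβpre ⟨j, by omega⟩
        have h2 := hγpre ⟨j, by omega⟩
        simp only at h1 h2
        exact hjspec (h1.trans h2.symm)
      have hraj : r j < a j := hk₀ j hjk₀
      -- split both sums at j
      have hsplitβ : Cβ = (∑ k ∈ range j, if β k then a k else 0) +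
          ((if β j then a j else 0) + ∑ k ∈ Ico (j + 1) (n + 2), if β k then a k else 0) := by
        rw [hCβ, Finset.range_eq_Ico,
          ← Finset.sum_Ico_consecutive _ (Nat.zero_le j) (by omega : j ≤ n + 2),
          Finset.sum_eq_sum_Ico_succ_bot (by omega : j < n + 2), ← Finset.range_eq_Ico]
      have hsplitγ : Cγ = (∑ k ∈ range j, if γ k then a k else 0) +
          ((if γ j then a j else 0) + ∑ k ∈ Ico (j + 1) (n + 1), if γ k then a k else 0) := by
        rw [hCγ, Finset.range_eq_Ico,
          ← Finset.sum_Ico_consecutive _ (Nat.zero_le j) (by omega : j ≤ n + 1),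
          Finset.sum_eq_sum_Ico_succ_bot (by omega : j < n + 1), ← Finset.range_eq_Ico]
      have hpre : (∑ k ∈ range j, if β k then a k else 0) =
          ∑ k ∈ range j, if γ k then a k else 0 :=
        Finset.sum_congr rfl fun k hk => by
          rw [hjmin k (Finset.mem_range.1 hk)]
      -- bounds on the partial sums
      have hβub : (∑ k ∈ Ico (j + 1) (n + 2), if β k then a k else 0) ≤ r j - r (n + 1) := by
        have h1 : (∑ k ∈ Ico (j + 1) (n + 2), if β k then a k else 0) ≤
            ∑ k ∈ Ico (j + 1) (n + 2), a k :=
          Finset.sum_le_sum fun k _ => by split <;> [exact le_refl _; exact (ha k).le]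
        have h2 := hIco j (n + 1) (by omega)
        linarith
      have hβlb : 0 ≤ ∑ k ∈ Ico (j + 1) (n + 2), if β k then a k else 0 :=
        Finset.sum_nonneg fun k _ => by split <;> [exact (ha k).le; exact le_refl 0]
      have hγub : (∑ k ∈ Ico (j + 1) (n + 1), if γ k then a k else 0) ≤ r j - r n := by
        have h1 : (∑ k ∈ Ico (j + 1) (n + 1), if γ k then a k else 0) ≤
            ∑ k ∈ Ico (j + 1) (n + 1), a k :=
          Finset.sum_le_sum fun k _ => by split <;> [exact le_refl _; exact (ha k).le]
        have h2 := hIco j n hjn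
        linarith
      have hγlb : 0 ≤ ∑ k ∈ Ico (j + 1) (n + 1), if γ k then a k else 0 :=
        Finset.sum_nonneg fun k _ => by split <;> [exact (ha k).le; exact le_refl 0]
      have hrn1nn := hrnn (n + 1)
      cases hbj : β j with
      | true =>
        have hgj : γ j = false := by
          cases hgj : γ j
          · rfl
          · exact absurd (hbj.trans hgj.symm) hjspec
        rw [hsplitβ, hsplitγ, hpre, hbj, hgj] at hkey
        norm_num at hkey
        -- Cβ - Cγ ≥ a j - (r j - r n) > r n but also = r n / 2 - tβ ≤ r n / 2
        linarith [hrpos n]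
      | false =>
        have hgj : γ j = true := by
          cases hgj : γ j
          · exact absurd (hbj.trans hgj.symm) hjspec
          · rfl
        rw [hsplitβ, hsplitγ, hpre, hbj, hgj] at hkey
        norm_num at hkey
        linarith [hrpos n]
  -- conclude
  rw [hSdecomp]
  have hclosed : IsClosed (⋃ b, Sb b) := isClosed_iUnion_of_finite hSbclosed
  rw [hclosed.isNowhereDense_iff]
  have : (⋃ b, Sb b) = ⋃ b ∈ (Finset.univ : Finset (Fin (k₀ + 1) → Bool)), Sb b := by
    simp
  rw [this]
  exact aux_interior_biUnion_empty _ _ hSbclosed hSbint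
end

section
/- Suppose there is k₀ such that δ_k > 1 (i.e., a_k > r_k) for all k > k₀. Then the set S of all subsums of the series Σ_k a_k has positive Lebesgue measure if and only if Σ_{k=1}^∞ (δ_k − 1) < ∞. -/
open MeasureTheory Filter Topology
open scoped ENNReal
set_option maxHeartbeats 1000000

namespace SubsumsAux

/-- tail sum from index `n` -/
noncomputable def tl (b : ℕ → ℝ) (n : ℕ) : ℝ := ∑' i, b (n + i)

noncomputable def q (b : ℕ → ℝ) {n : ℕ} (γ : Fin n → Bool) : ℝ :=
  ∑ i : Fin n, if γ i then b (i : ℕ) else 0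

def SS (b : ℕ → ℝ) : Set ℝ := {x | ∃ γ : ℕ → Bool, x = ∑' k, if γ k then b k else 0}

noncomputable def E (b : ℕ → ℝ) (n : ℕ) : Set ℝ :=
  ⋃ γ : Fin n → Bool, Set.Icc (q b γ) (q b γ + tl b n)

variable {b : ℕ → ℝ}

lemma summable_shift (hb : Summable b) (n : ℕ) : Summable (fun i => b (n + i)) :=
  (summable_nat_add_iff n).2 hb |>.congr (fun i => by rw [add_comm])

lemma summable_ite (hb : Summable b) (h0 : ∀ k, 0 ≤ b k) (γ : ℕ → Bool) :
    Summable (fun k => if γ k then b k else 0) := by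
  apply Summable.of_nonneg_of_le (fun k => ?_) (fun k => ?_) hb
  · split <;> simp [h0 k]
  · split <;> simp [h0 k]

lemma tl_nonneg (h0 : ∀ k, 0 ≤ b k) (n : ℕ) : 0 ≤ tl b n :=
  tsum_nonneg (fun i => h0 _)

lemma tl_pos (hb : Summable b) (h0 : ∀ k, 0 < b k) (n : ℕ) : 0 < tl b n :=
  Summable.tsum_pos (summable_shift hb n) (fun i => (h0 _).le) 0 (h0 _)

lemma tl_rec (hb : Summable b) (n : ℕ) : tl b n = b n + tl b (n + 1) := by
  have h := Summable.tsum_eq_zero_add (summable_shift hb n)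
  simpa [tl, add_assoc, add_comm 1] using h

lemma tl_eq_sum_add (hb : Summable b) {k l : ℕ} (h : k ≤ l) :
    tl b k = (∑ i ∈ Finset.Ico k l, b i) + tl b l := by
  induction l with
  | zero => simp [Nat.le_zero.mp h]
  | succ l ih =>
    rcases Nat.lt_or_ge k (l + 1) with h' | h'
    · have hkl : k ≤ l := Nat.lt_succ_iff.mp h'
      rw [ih hkl, Finset.sum_Ico_succ_top hkl, tl_rec hb l]; ring
    · have : k = l + 1 := le_antisymm h h'
      simp [this]

lemma tl_tendsto (hb : Summable b) : Tendsto (tl b) atTop (𝓝 0) := by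
  have h1 : Tendsto (fun n => ∑' k, b k - ∑ i ∈ Finset.range n, b i) atTop (𝓝 (∑' k, b k - ∑' k, b k)) :=
    (tendsto_const_nhds).sub hb.hasSum.tendsto_sum_nat
  simp only [sub_self] at h1
  apply h1.congr
  intro n
  have := (Summable.sum_add_tsum_nat_add n hb)
  have h2 : tl b n = ∑' i, b (i + n) := tsum_congr (fun i => by rw [add_comm])
  rw [h2]; linarith

end SubsumsAux

namespace SubsumsAux
variable {b : ℕ → ℝ}

/-- extending a finite choice by `false` gives tsum = finite sum -/
lemma tsum_extend (n : ℕ) (γ : Fin n → Bool) :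
    ∑' k, (if (if h : k < n then γ ⟨k, h⟩ else false) then b k else 0) = q b γ := by
  rw [tsum_eq_sum (s := Finset.range n) (by intro k hk; simp at hk; simp [Nat.not_lt.mpr hk])]
  rw [← Fin.sum_univ_eq_sum_range (fun i => if (if h : i < n then γ ⟨i, h⟩ else false) then b i else 0) n]
  exact Finset.sum_congr rfl (fun i _ => by simp [i.isLt, Fin.eta])

lemma q_mem_SS (n : ℕ) (γ : Fin n → Bool) : q b γ ∈ SS b :=
  ⟨fun k => if h : k < n then γ ⟨k, h⟩ else false, (tsum_extend n γ).symm⟩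

lemma SS_subset_E (hb : Summable b) (h0 : ∀ k, 0 ≤ b k) (n : ℕ) : SS b ⊆ E b n := by
  rintro x ⟨γ, rfl⟩
  have hg := summable_ite hb h0 γ
  unfold E
  rw [Set.mem_iUnion]
  refine ⟨fun i => γ i, ?_⟩
  have hsplit : ∑' k, (if γ k then b k else 0)
      = (∑ i ∈ Finset.range n, if γ i then b i else 0) + ∑' i, (if γ (i + n) then b (i + n) else 0) :=
    (Summable.sum_add_tsum_nat_add n hg).symm
  have hq : q b (fun i : Fin n => γ i) = ∑ i ∈ Finset.range n, if γ i then b i else 0 :=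
    Fin.sum_univ_eq_sum_range (fun i => if γ i then b i else 0) n
  have htail0 : 0 ≤ ∑' i, (if γ (i + n) then b (i + n) else 0) :=
    tsum_nonneg (fun i => by split <;> simp [h0 _])
  have htail1 : ∑' i, (if γ (i + n) then b (i + n) else 0) ≤ tl b n := by
    have h2 : tl b n = ∑' i, b (i + n) := tsum_congr (fun i => by rw [add_comm])
    rw [h2]
    refine Summable.tsum_le_tsum (fun i => ?_) ((summable_nat_add_iff n).2 hg) ((summable_nat_add_iff n).2 hb)
    split <;> simp [h0 _]
  constructor
  · rw [hsplit, hq]; linarith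
  · rw [hsplit, hq]; linarith

lemma isClosed_SS (hb : Summable b) : IsClosed (SS b) := by
  have hc : Continuous (fun γ : ℕ → Bool => ∑' k, if γ k then b k else 0) := by
    apply continuous_tsum (u := fun k => |b k|) (fun k => ?_) hb.abs (fun k γ => ?_)
    · exact Continuous.comp (g := fun v : Bool => if v then b k else 0)
        continuous_of_discreteTopology (continuous_apply k)
    · split <;> simp [abs_nonneg]
  have himg : SS b = (fun γ : ℕ → Bool => ∑' k, if γ k then b k else 0) '' Set.univ := by
    ext x
    constructor
    · rintro ⟨γ, rfl⟩; exact ⟨γ, trivial, rfl⟩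
    · rintro ⟨γ, -, rfl⟩; exact ⟨γ, rfl⟩
  rw [himg]
  exact (isCompact_univ.image hc).isClosed

lemma E_measurable (n : ℕ) : MeasurableSet (E b n) :=
  MeasurableSet.iUnion (fun γ => measurableSet_Icc)

lemma E_antitone (hb : Summable b) (h0 : ∀ k, 0 ≤ b k) : Antitone (E b) := by
  apply antitone_nat_of_succ_le
  intro n
  unfold E
  refine Set.iUnion_subset (fun γ => ?_)
  refine Set.Subset.trans ?_ (Set.subset_iUnion
    (fun γ' : Fin n → Bool => Set.Icc (q b γ') (q b γ' + tl b n)) (fun i : Fin n => γ i.castSucc))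
  have hq : q b γ = q b (fun i : Fin n => γ i.castSucc) + (if γ (Fin.last n) then b n else 0) := by
    rw [q, q, Fin.sum_univ_castSucc]; simp [Fin.last]
  apply Set.Icc_subset_Icc
  · rw [hq]
    have : 0 ≤ (if γ (Fin.last n) then b n else 0) := by split <;> simp [h0 n]
    linarith
  · rw [hq, tl_rec hb n]
    have h1 : (if γ (Fin.last n) then b n else 0) ≤ b n := by split <;> simp [h0 n]
    linarith

lemma volume_E_le (h0 : ∀ k, 0 ≤ b k) (n : ℕ) :
    volume (E b n) ≤ ENNReal.ofReal (2 ^ n * tl b n) := by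
  have h1 : volume (E b n) ≤ ∑' γ : Fin n → Bool, volume (Set.Icc (q b γ) (q b γ + tl b n)) :=
    measure_iUnion_le _
  have h2 : ∀ γ : Fin n → Bool, volume (Set.Icc (q b γ) (q b γ + tl b n))
      = ENNReal.ofReal (tl b n) := by
    intro γ; rw [Real.volume_Icc]; ring_nf
  calc volume (E b n) ≤ ∑' γ : Fin n → Bool, volume (Set.Icc (q b γ) (q b γ + tl b n)) := h1
    _ = (Fintype.card (Fin n → Bool) : ℝ≥0∞) * ENNReal.ofReal (tl b n) := by
        rw [tsum_congr h2, tsum_fintype, Finset.sum_const, Finset.card_univ, nsmul_eq_mul]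
    _ = ENNReal.ofReal (2 ^ n * tl b n) := by
        rw [ENNReal.ofReal_mul (by positivity)]
        congr 1
        rw [Fintype.card_fun]
        simp [ENNReal.ofReal_pow]

end SubsumsAux

namespace SubsumsAux
variable {b : ℕ → ℝ}

lemma ite_nonneg' (c : Prop) [Decidable c] (y : ℝ) (hy : 0 ≤ y) : 0 ≤ if c then y else 0 := by
  split
  · exact hy
  · exact le_refl 0

lemma ite_le' (c : Prop) [Decidable c] (y : ℝ) (hy : 0 ≤ y) : (if c then y else 0) ≤ y := by
  split
  · exact le_rfl
  · exact hy

lemma q_eq_range (n : ℕ) (γ : Fin n → Bool) :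
    q b γ = ∑ k ∈ Finset.range n, (if (if h : k < n then γ ⟨k, h⟩ else false) then b k else 0) := by
  rw [← Fin.sum_univ_eq_sum_range (fun i => if (if h : i < n then γ ⟨i, h⟩ else false) then b i else 0) n]
  exact (Finset.sum_congr rfl (fun i _ => by simp [i.isLt, Fin.eta])).symm

/-- one-sided gap estimate -/
lemma q_gap (hb : Summable b) (h0 : ∀ k, 0 ≤ b k) (hsep : ∀ k, tl b (k + 1) < b k)
    {n j : ℕ} (γ γ' : Fin n → Bool) (hj : j < n)
    (hlt : ∀ i (hi : i < n), i < j → γ ⟨i, hi⟩ = γ' ⟨i, hi⟩)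
    (hγ : γ ⟨j, hj⟩ = true) (hγ' : γ' ⟨j, hj⟩ = false) :
    q b γ' + tl b n < q b γ := by
  set F : ℕ → ℝ := fun k => if (if h : k < n then γ ⟨k, h⟩ else false) then b k else 0 with hF
  set F' : ℕ → ℝ := fun k => if (if h : k < n then γ' ⟨k, h⟩ else false) then b k else 0 with hF'
  have hqF : q b γ = ∑ k ∈ Finset.range n, F k := q_eq_range n γ
  have hqF' : q b γ' = ∑ k ∈ Finset.range n, F' k := q_eq_range n γ'
  have hsplit : ∀ G : ℕ → ℝ, ∑ k ∈ Finset.range n, G k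
      = (∑ k ∈ Finset.range (j+1), G k) + ∑ k ∈ Finset.Ico (j+1) n, G k := by
    intro G
    rw [Finset.range_eq_Ico, Finset.range_eq_Ico]
    exact (Finset.sum_Ico_consecutive G (Nat.zero_le (j+1)) (Nat.succ_le_of_lt hj)).symm
  -- head sums
  have hhead : (∑ k ∈ Finset.range (j+1), F k) = (∑ k ∈ Finset.range j, F k) + b j := by
    rw [Finset.sum_range_succ]
    congr 1
    show F j = b j
    simp only [hF]
    rw [dif_pos hj]
    exact if_pos hγ
  have hhead' : (∑ k ∈ Finset.range (j+1), F' k) = (∑ k ∈ Finset.range j, F' k) + 0 := by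
    rw [Finset.sum_range_succ]
    congr 1
    show F' j = 0
    simp only [hF']
    rw [dif_pos hj]
    exact if_neg (by simp [hγ'])
  have hagree : (∑ k ∈ Finset.range j, F k) = ∑ k ∈ Finset.range j, F' k := by
    refine Finset.sum_congr rfl (fun i hi => ?_)
    have hij : i < j := Finset.mem_range.mp hi
    have hin : i < n := lt_trans hij hj
    simp only [hF, hF', dif_pos hin, hlt i hin hij]
  -- tail sums
  have htailF : 0 ≤ ∑ k ∈ Finset.Ico (j+1) n, F k :=
    Finset.sum_nonneg (fun k _ => by simp only [hF]; exact ite_nonneg' _ _ (h0 k))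
  have htailF' : (∑ k ∈ Finset.Ico (j+1) n, F' k) ≤ ∑ k ∈ Finset.Ico (j+1) n, b k :=
    Finset.sum_le_sum (fun k _ => by simp only [hF']; exact ite_le' _ _ (h0 k))
  have hIco : (∑ k ∈ Finset.Ico (j+1) n, b k) = tl b (j+1) - tl b n := by
    have := tl_eq_sum_add hb (Nat.succ_le_of_lt hj)
    linarith
  have hkey := hsep j
  rw [hqF, hqF', hsplit F, hsplit F', hhead, hhead', hagree]
  have h1 : (∑ k ∈ Finset.Ico (j+1) n, F' k) ≤ tl b (j+1) - tl b n := by linarith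
  linarith

lemma E_disjoint (hb : Summable b) (h0 : ∀ k, 0 ≤ b k) (hsep : ∀ k, tl b (k + 1) < b k)
    (n : ℕ) :
    Pairwise (Function.onFun Disjoint
      (fun γ : Fin n → Bool => Set.Icc (q b γ) (q b γ + tl b n))) := by
  intro γ γ' hne
  classical
  have hex : ∃ k, ∃ h : k < n, γ ⟨k, h⟩ ≠ γ' ⟨k, h⟩ := by
    by_contra hc
    push_neg at hc
    exact hne (funext fun i => by simpa using hc i i.isLt)
  set j := Nat.find hex with hjdef
  obtain ⟨hjn, hnej⟩ := Nat.find_spec hex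
  have hmin : ∀ i (hi : i < n), i < j → γ ⟨i, hi⟩ = γ' ⟨i, hi⟩ := by
    intro i hi hij
    have := Nat.find_min hex hij
    push_neg at this
    exact this hi
  have hdisj : ∀ {α β : Fin n → Bool}, q b α + tl b n < q b β →
      Disjoint (Set.Icc (q b β) (q b β + tl b n)) (Set.Icc (q b α) (q b α + tl b n)) := by
    intro α β hlt
    refine Set.disjoint_left.mpr fun x hx hx' => ?_
    rw [Set.mem_Icc] at hx hx'
    linarith [hx.1, hx'.2]
  cases hγj : γ ⟨j, hjn⟩ with
  | true =>
    have hγ'j : γ' ⟨j, hjn⟩ = false := by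
      cases h' : γ' ⟨j, hjn⟩
      · rfl
      · exact absurd (hγj.trans h'.symm) hnej
    exact hdisj (q_gap hb h0 hsep γ γ' hjn hmin hγj hγ'j)
  | false =>
    have hγ'j : γ' ⟨j, hjn⟩ = true := by
      cases h' : γ' ⟨j, hjn⟩
      · exact absurd (hγj.trans h'.symm) hnej
      · rfl
    exact (hdisj (q_gap hb h0 hsep γ' γ hjn
      (fun i hi hij => (hmin i hi hij).symm) hγ'j hγj)).symm

end SubsumsAux

namespace SubsumsAux
variable {b : ℕ → ℝ}

lemma volume_E_eq (hb : Summable b) (h0 : ∀ k, 0 ≤ b k) (hsep : ∀ k, tl b (k + 1) < b k)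
    (n : ℕ) : volume (E b n) = ENNReal.ofReal (2 ^ n * tl b n) := by
  rw [E, measure_iUnion (E_disjoint hb h0 hsep n) (fun γ => measurableSet_Icc)]
  have h2 : ∀ γ : Fin n → Bool, volume (Set.Icc (q b γ) (q b γ + tl b n))
      = ENNReal.ofReal (tl b n) := by
    intro γ; rw [Real.volume_Icc]; ring_nf
  rw [tsum_congr h2, tsum_fintype, Finset.sum_const, Finset.card_univ, nsmul_eq_mul]
  rw [ENNReal.ofReal_mul (by positivity)]
  congr 1
  rw [Fintype.card_fun]
  simp [ENNReal.ofReal_pow]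

lemma iInter_E_subset_SS (hb : Summable b) (h0 : ∀ k, 0 ≤ b k) :
    (⋂ n, E b n) ⊆ SS b := by
  intro x hx
  have hcl : IsClosed (SS b) := isClosed_SS hb
  rw [← hcl.closure_eq]
  rw [Metric.mem_closure_iff]
  intro ε hε
  obtain ⟨n, hn⟩ := (Metric.tendsto_atTop.mp (tl_tendsto hb) ε hε) |>.imp (fun n h => h n le_rfl) |> fun h => h
  have hxn : x ∈ E b n := Set.mem_iInter.mp hx n
  rw [E, Set.mem_iUnion] at hxn
  obtain ⟨γ, hγ⟩ := hxn
  rw [Set.mem_Icc] at hγ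
  refine ⟨q b γ, q_mem_SS n γ, ?_⟩
  rw [Real.dist_eq, abs_lt]
  have htl : |tl b n| < ε := by simpa [Real.dist_eq] using hn
  have h1 : tl b n < ε := lt_of_le_of_lt (le_abs_self _) htl
  have h2 : 0 ≤ tl b n := tl_nonneg h0 n
  constructor <;> [linarith [hγ.1]; linarith [hγ.2]]

lemma volume_SS_ge (hb : Summable b) (h0 : ∀ k, 0 ≤ b k) (hsep : ∀ k, tl b (k + 1) < b k)
    {c : ℝ} (hc : ∀ n : ℕ, c ≤ 2 ^ n * tl b n) :
    ENNReal.ofReal c ≤ volume (SS b) := by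
  have hmono : volume (⋂ n, E b n) ≤ volume (SS b) :=
    measure_mono (iInter_E_subset_SS hb h0)
  refine le_trans ?_ hmono
  have htendsto := tendsto_measure_iInter_atTop (μ := volume) (s := E b)
    (fun n => (E_measurable n).nullMeasurableSet) (E_antitone hb h0)
    ⟨0, by rw [volume_E_eq hb h0 hsep 0]; exact ENNReal.ofReal_ne_top⟩
  refine ge_of_tendsto' htendsto (fun n => ?_)
  rw [Function.comp_apply, volume_E_eq hb h0 hsep n]
  exact ENNReal.ofReal_le_ofReal (hc n)

lemma volume_SS_le (hb : Summable b) (h0 : ∀ k, 0 ≤ b k) (n : ℕ) :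
    volume (SS b) ≤ ENNReal.ofReal (2 ^ n * tl b n) :=
  le_trans (measure_mono (SS_subset_E hb h0 n)) (volume_E_le h0 n)

lemma one_add_sum_le_prod (s : Finset ℕ) (x : ℕ → ℝ) (hx : ∀ i ∈ s, 0 ≤ x i) :
    1 + ∑ i ∈ s, x i ≤ ∏ i ∈ s, (1 + x i) := by
  classical
  induction s using Finset.induction_on with
  | empty => simp
  | insert _ _ hnotmem ih =>
    rename_i a s
    rw [Finset.sum_insert hnotmem, Finset.prod_insert hnotmem]
    have hxa : 0 ≤ x a := hx a (Finset.mem_insert_self a s)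
    have hsum : 0 ≤ ∑ i ∈ s, x i := Finset.sum_nonneg (fun i hi => hx i (Finset.mem_insert_of_mem hi))
    have ih' := ih (fun i hi => hx i (Finset.mem_insert_of_mem hi))
    nlinarith

lemma prod_le_exp_sum (s : Finset ℕ) (x : ℕ → ℝ) (hx : ∀ i ∈ s, 0 ≤ x i) :
    ∏ i ∈ s, (1 + x i) ≤ Real.exp (∑ i ∈ s, x i) := by
  rw [Real.exp_sum]
  refine Finset.prod_le_prod (fun i hi => by linarith [hx i hi]) (fun i hi => ?_)
  have := Real.add_one_le_exp (x i)
  linarith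

end SubsumsAux

namespace SubsumsAux
variable {b : ℕ → ℝ}

lemma tl_shift (b : ℕ → ℝ) (m i : ℕ) : tl (fun j => b (m + j)) i = tl b (m + i) :=
  tsum_congr (fun j => congrArg b (by omega))

lemma key_prod (hb : Summable b) (h0 : ∀ k, 0 < b k) (m : ℕ) : ∀ n : ℕ,
    2 ^ m * tl b m = (2 ^ (m + n) * tl b (m + n)) *
      ∏ k ∈ Finset.Ico m (m + n), ((1 + b k / tl b (k + 1)) / 2) := by
  intro n
  induction n with
  | zero => simp
  | succ n ih =>
    have hlast : m ≤ m + n := Nat.le_add_right m n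
    have htlpos : 0 < tl b (m + n + 1) := tl_pos hb h0 _
    have hrec : tl b (m + n) = b (m + n) + tl b (m + n + 1) := tl_rec hb (m + n)
    have hfac : (2:ℝ) ^ (m + n) * tl b (m + n)
        = 2 ^ (m + n + 1) * tl b (m + n + 1) * ((1 + b (m + n) / tl b (m + n + 1)) / 2) := by
      rw [hrec, pow_succ]
      field_simp
      ring
    rw [show m + (n + 1) = (m + n) + 1 from rfl, Finset.prod_Ico_succ_top hlast, ih, hfac]
    ring

end SubsumsAux

open SubsumsAux

/-- Suppose `a k > r k` (i.e. `δ k > 1`) for all sufficiently large `k`, where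
`r k = ∑_{i > k} a i` is the tail of the positive series `∑ a k = 1`.  Then the set of
all subsums of the series has positive Lebesgue measure if and only if
`∑ (δ k - 1) < ∞`, where `δ k = a k / r k`. -/
theorem subsums_pos_volume_iff_summable
    (a : ℕ → ℝ) (ha : ∀ k, 0 < a k) (hsum : ∑' k, a k = 1)
    (r : ℕ → ℝ) (hr : ∀ k, r k = ∑' i : ℕ, a (k + 1 + i))
    (hδ : ∃ k₀, ∀ k > k₀, r k < a k)
    (S : Set ℝ)
    (hS : S = {x | ∃ γ : ℕ → Bool, x = ∑' k : ℕ, if γ k then a k else 0}) :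
    0 < volume S ↔ Summable (fun k => a k / r k - 1) := by
  obtain ⟨k₀, hk₀⟩ := hδ
  have hsa : Summable a := by
    by_contra h
    rw [tsum_eq_zero_of_not_summable h] at hsum
    norm_num at hsum
  have ha0 : ∀ k, 0 ≤ a k := fun k => (ha k).le
  have hrtl : ∀ k, r k = tl a (k + 1) := fun k => hr k
  have hrpos : ∀ k, 0 < r k := fun k => (hrtl k) ▸ tl_pos hsa ha (k + 1)
  have hSeq : S = SS a := hS
  set m := k₀ + 1 with hm
  set b : ℕ → ℝ := fun j => a (m + j) with hbdef
  have hsb : Summable b := summable_shift hsa m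
  have hb0 : ∀ k, 0 ≤ b k := fun k => ha0 _
  have htlb : ∀ i, tl b i = tl a (m + i) := tl_shift a m
  have hsepb : ∀ k, tl b (k + 1) < b k := by
    intro k
    rw [htlb (k + 1), show m + (k + 1) = (m + k) + 1 from by omega, ← hrtl (m + k)]
    exact hk₀ (m + k) (by omega)
  have hprod : ∀ n : ℕ, 2 ^ m * tl a m = (2 ^ (m + n) * tl a (m + n)) *
      ∏ k ∈ Finset.Ico m (m + n), (1 + (a k / r k - 1) / 2) := by
    intro n
    rw [key_prod hsa ha m n]
    congr 1
    refine Finset.prod_congr rfl (fun k _ => ?_)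
    rw [← hrtl k]
    ring
  have hx0 : ∀ k, m ≤ k → 0 ≤ (a k / r k - 1) / 2 := by
    intro k hk
    have h1 : 1 < a k / r k := (one_lt_div (hrpos k)).2 (hk₀ k (by omega))
    linarith
  have hProdPos : ∀ n, 0 < ∏ k ∈ Finset.Ico m (m + n), (1 + (a k / r k - 1) / 2) := by
    intro n
    refine Finset.prod_pos (fun k hk => ?_)
    have := hx0 k (Finset.mem_Ico.mp hk).1
    linarith
  have hC : ∀ n, 2 ^ (m + n) * tl a (m + n)
      = (2 ^ m * tl a m) / ∏ k ∈ Finset.Ico m (m + n), (1 + (a k / r k - 1) / 2) :=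
    fun n => (eq_div_iff (ne_of_gt (hProdPos n))).2 (hprod n).symm
  have hsum_eq : ∀ n, ∑ k ∈ Finset.Ico m (m + n), ((a k / r k - 1) / 2)
      = (∑ j ∈ Finset.range n, (a (m + j) / r (m + j) - 1)) / 2 := by
    intro n
    rw [Finset.sum_Ico_eq_sum_range]
    simp only [add_tsub_cancel_left]
    rw [Finset.sum_div]
  constructor
  · -- positive volume → summable (by contradiction)
    intro hpos
    by_contra hns
    have hg'nn : ∀ j : ℕ, 0 ≤ a (m + j) / r (m + j) - 1 := by
      intro j
      have := hx0 (m + j) (by omega)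
      linarith
    have hnsg : ¬ Summable (fun j => a (m + j) / r (m + j) - 1) := by
      intro h
      exact hns ((summable_nat_add_iff m).1 (h.congr (fun j => by rw [Nat.add_comm])))
    have hdiv : Tendsto (fun n => ∑ j ∈ Finset.range n, (a (m + j) / r (m + j) - 1))
        atTop atTop := (not_summable_iff_tendsto_nat_atTop_of_nonneg hg'nn).1 hnsg
    have hPge : ∀ n, 1 + (∑ j ∈ Finset.range n, (a (m + j) / r (m + j) - 1)) / 2
        ≤ ∏ k ∈ Finset.Ico m (m + n), (1 + (a k / r k - 1) / 2) := by
      intro n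
      rw [← hsum_eq n]
      exact one_add_sum_le_prod _ _ (fun k hk => hx0 k (Finset.mem_Ico.mp hk).1)
    have hPtop : Tendsto (fun n => ∏ k ∈ Finset.Ico m (m + n), (1 + (a k / r k - 1) / 2))
        atTop atTop := by
      refine tendsto_atTop_mono hPge ?_
      refine tendsto_atTop_add_const_left atTop 1 ?_
      have h2 := Tendsto.const_mul_atTop (show (0:ℝ) < 1/2 by norm_num) hdiv
      refine h2.congr (fun n => ?_)
      ring
    have hreal : Tendsto (fun n => 2 ^ (m + n) * tl a (m + n)) atTop (𝓝 0) := by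
      have h3 := Filter.Tendsto.div_atTop
        (tendsto_const_nhds (x := (2:ℝ) ^ m * tl a m) (f := atTop)) hPtop
      exact h3.congr (fun n => (hC n).symm)
    have henn : Tendsto (fun n => ENNReal.ofReal (2 ^ (m + n) * tl a (m + n))) atTop (𝓝 0) := by
      have h4 := (ENNReal.continuous_ofReal.tendsto 0).comp hreal
      simpa only [Function.comp_def, ENNReal.ofReal_zero] using h4
    have hle : volume S ≤ 0 := by
      refine ge_of_tendsto henn (Filter.Eventually.of_forall (fun n => ?_))
      rw [hSeq]
      exact volume_SS_le hsa ha0 (m + n)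
    exact absurd (le_antisymm hle zero_le) (ne_of_gt hpos)
  · -- summable → positive volume
    intro hsumm
    have hxs : Summable (fun k => (a k / r k - 1) / 2) := hsumm.div_const 2
    have hg : Summable (fun j => (a (m + j) / r (m + j) - 1) / 2) :=
      ((summable_nat_add_iff m).2 hxs).congr (fun j => by rw [Nat.add_comm])
    set X := ∑' j, (a (m + j) / r (m + j) - 1) / 2 with hX
    have hpartial : ∀ n, ∑ k ∈ Finset.Ico m (m + n), ((a k / r k - 1) / 2) ≤ X := by
      intro n
      rw [Finset.sum_Ico_eq_sum_range]
      simp only [add_tsub_cancel_left]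
      exact Summable.sum_le_tsum (Finset.range n) (fun i _ => hx0 (m + i) (by omega)) hg
    have hPle : ∀ n, (∏ k ∈ Finset.Ico m (m + n), (1 + (a k / r k - 1) / 2)) ≤ Real.exp X :=
      fun n => le_trans (prod_le_exp_sum _ _ (fun k hk => hx0 k (Finset.mem_Ico.mp hk).1))
        (Real.exp_le_exp.2 (hpartial n))
    have hApos : 0 < 2 ^ m * tl a m := by
      have := tl_pos hsa ha m
      positivity
    set c : ℝ := (2 ^ m * tl a m) * Real.exp (-X) / 2 ^ m with hc
    have hcpos : 0 < c := by positivity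
    have hlow : ∀ n : ℕ, c ≤ 2 ^ n * tl b n := by
      intro n
      rw [htlb n]
      have hge : (2 ^ m * tl a m) * Real.exp (-X) ≤ 2 ^ (m + n) * tl a (m + n) := by
        rw [hC n, Real.exp_neg, ← div_eq_mul_inv]
        exact div_le_div_of_nonneg_left hApos.le (hProdPos n) (hPle n)
      have h5 : (2:ℝ) ^ (m + n) * tl a (m + n) / 2 ^ m = 2 ^ n * tl a (m + n) := by
        rw [pow_add]
        field_simp
      rw [hc, ← h5]
      exact (div_le_div_iff_of_pos_right (by positivity)).2 hge
    have hvol := volume_SS_ge hsb hb0 hsepb hlow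
    have hsub : SS b ⊆ S := by
      rw [hSeq]
      rintro x ⟨γ, rfl⟩
      refine ⟨fun k => if h : m ≤ k then γ (k - m) else false, ?_⟩
      have hγs := summable_ite hsa ha0 (fun k => if h : m ≤ k then γ (k - m) else false)
      rw [← Summable.sum_add_tsum_nat_add m hγs]
      have h1 : ∑ i ∈ Finset.range m,
          (if (if h : m ≤ i then γ (i - m) else false) then a i else 0) = 0 :=
        Finset.sum_eq_zero (fun i hi => by
          have him : i < m := Finset.mem_range.mp hi
          rw [dif_neg (by omega)]
          simp)
      rw [h1, zero_add]
      refine tsum_congr (fun i => ?_)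
      rw [dif_pos (Nat.le_add_left m i), Nat.add_sub_cancel]
      have hba : b i = a (m + i) := rfl
      rw [hba, Nat.add_comm m i]
    exact lt_of_lt_of_le (ENNReal.ofReal_pos.2 hcpos) (le_trans hvol (measure_mono hsub))
end

section
/- Let (p_k)_{k≥1} be a sequence with p_k ∈ [0,1] for all k. Then the infinite product Π_{k=1}^∞ (√(p_k/2) + √((1−p_k)/2)) is strictly positive if and only if Σ_{k=1}^∞ (1/2 − p_k)² < ∞. -/
/-- For `pₖ ∈ [0,1]`, the infinite product `∏ (√(pₖ/2) + √((1-pₖ)/2))` is strictly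
positive if and only if `∑ (1/2 - pₖ)² < ∞`.  Since each factor lies in `[0,1]`, the
partial products are nonincreasing and the infinite product is their infimum. -/
theorem infinite_product_sqrt_pos_iff_summable_sq
    (p : ℕ → ℝ) (hp : ∀ k, p k ∈ Set.Icc (0 : ℝ) 1) :
    (0 < ⨅ n : ℕ, ∏ k ∈ Finset.range n,
        (Real.sqrt (p k / 2) + Real.sqrt ((1 - p k) / 2))) ↔
      Summable fun k => (1 / 2 - p k) ^ 2 := by
  obtain ⟨f, hf⟩ : ∃ f : ℕ → ℝ, ∀ k,
      f k = Real.sqrt (p k / 2) + Real.sqrt ((1 - p k) / 2) := ⟨_, fun _ => rfl⟩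
  obtain ⟨s, hs⟩ : ∃ s : ℕ → ℝ, ∀ k, s k = Real.sqrt (p k * (1 - p k)) :=
    ⟨_, fun _ => rfl⟩
  obtain ⟨q, hq⟩ : ∃ q : ℕ → ℝ, ∀ k, q k = (1 / 2 - p k) ^ 2 := ⟨_, fun _ => rfl⟩
  simp only [← hf, ← hq]
  have hp0 : ∀ k, 0 ≤ p k := fun k => (hp k).1
  have hp1 : ∀ k, p k ≤ 1 := fun k => (hp k).2
  have hq0 : ∀ k, 0 ≤ q k := fun k => (hq k) ▸ sq_nonneg _
  have hq4 : ∀ k, q k ≤ 1 / 4 := by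
    intro k; rw [hq k]; nlinarith [hp0 k, hp1 k]
  have hqid : ∀ k, q k + p k * (1 - p k) = 1 / 4 := by
    intro k; rw [hq k]; ring
  have hs0 : ∀ k, 0 ≤ s k := fun k => (hs k) ▸ Real.sqrt_nonneg _
  have hssq : ∀ k, (s k) ^ 2 = p k * (1 - p k) := by
    intro k; rw [hs k]; exact Real.sq_sqrt (by nlinarith [hp0 k, hp1 k])
  -- s k ≤ 1/2 - q k
  have hs_ub : ∀ k, s k ≤ 1 / 2 - q k := by
    intro k
    have h1 : p k * (1 - p k) ≤ (1 / 2 - q k) ^ 2 := by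
      nlinarith [hqid k, hq0 k, sq_nonneg (q k)]
    rw [hs k]
    calc Real.sqrt (p k * (1 - p k)) ≤ Real.sqrt ((1 / 2 - q k) ^ 2) :=
          Real.sqrt_le_sqrt h1
      _ = 1 / 2 - q k := Real.sqrt_sq (by nlinarith [hq4 k])
  -- 1/2 - 2 q k ≤ s k
  have hs_lb : ∀ k, 1 / 2 - 2 * q k ≤ s k := by
    intro k
    rcases le_or_gt (1 / 2 - 2 * q k) 0 with h | h
    · linarith [hs0 k]
    · rw [hs k]
      rw [Real.le_sqrt h.le (by nlinarith [hp0 k, hp1 k])]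
      nlinarith [hqid k, hq0 k, hq4 k]
  -- square of f
  have hfsq : ∀ k, (f k) ^ 2 = 1 / 2 + s k := by
    intro k
    have hnn1 : (0 : ℝ) ≤ p k / 2 := by linarith [hp0 k]
    have hnn2 : (0 : ℝ) ≤ (1 - p k) / 2 := by linarith [hp1 k]
    have hmul : Real.sqrt (p k / 2) * Real.sqrt ((1 - p k) / 2) = s k / 2 := by
      rw [← Real.sqrt_mul hnn1]
      rw [show p k / 2 * ((1 - p k) / 2) = (s k / 2) ^ 2 by
        rw [div_pow, hssq k]; ring]
      exact Real.sqrt_sq (by linarith [hs0 k])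
    have e1 : Real.sqrt (p k / 2) ^ 2 = p k / 2 := Real.sq_sqrt hnn1
    have e2 : Real.sqrt ((1 - p k) / 2) ^ 2 = (1 - p k) / 2 := Real.sq_sqrt hnn2
    have e3 : (f k) ^ 2 = Real.sqrt (p k / 2) ^ 2 +
        2 * (Real.sqrt (p k / 2) * Real.sqrt ((1 - p k) / 2)) +
        Real.sqrt ((1 - p k) / 2) ^ 2 := by rw [hf k]; ring
    rw [e3, e1, e2, hmul]; ring
  have hf0 : ∀ k, 0 ≤ f k := fun k =>
    (hf k) ▸ add_nonneg (Real.sqrt_nonneg _) (Real.sqrt_nonneg _)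
  have hfpos : ∀ k, 0 < f k := by
    intro k
    rcases (hf0 k).lt_or_eq with h | h
    · exact h
    · exfalso; have h2 := hfsq k; rw [← h] at h2; nlinarith [hs0 k]
  have hf2pos : ∀ k, 0 < (f k) ^ 2 := fun k => pow_pos (hfpos k) 2
  have hfle1 : ∀ k, f k ≤ 1 := by
    intro k
    nlinarith [hfsq k, hs_ub k, hq0 k, hf0 k, sq_nonneg (f k - 1)]
  -- the negative-log sequence
  obtain ⟨L, hL⟩ : ∃ L : ℕ → ℝ, ∀ k, L k = -Real.log (f k) := ⟨_, fun _ => rfl⟩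
  have hL0 : ∀ k, 0 ≤ L k := by
    intro k
    rw [hL k, neg_nonneg]
    exact Real.log_nonpos (hf0 k) (hfle1 k)
  have hlogsq : ∀ k, Real.log ((f k) ^ 2) = -(2 * L k) := by
    intro k; rw [Real.log_pow, hL k]; push_cast; ring
  -- lower bound: q k / 2 ≤ L k
  have hL_lb : ∀ k, q k / 2 ≤ L k := by
    intro k
    have h := Real.log_le_sub_one_of_pos (hf2pos k)
    rw [hlogsq k, hfsq k] at h
    linarith [hs_ub k]
  -- upper bound: L k ≤ 2 * q k
  have hL_ub : ∀ k, L k ≤ 2 * q k := by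
    intro k
    have hpos : 0 < ((f k) ^ 2)⁻¹ := inv_pos.mpr (hf2pos k)
    have h := Real.log_le_sub_one_of_pos hpos
    rw [Real.log_inv, hlogsq k] at h
    have hinv : (f k) ^ 2 * ((f k) ^ 2)⁻¹ = 1 := mul_inv_cancel₀ (ne_of_gt (hf2pos k))
    have h3 : 1 / 2 ≤ (f k) ^ 2 := by nlinarith [hs0 k, hfsq k]
    have h4 : 1 - (f k) ^ 2 ≤ 2 * q k := by nlinarith [hs_lb k, hfsq k]
    have hI2 : ((f k) ^ 2)⁻¹ ≤ 2 := by nlinarith [hinv, h3, hpos]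
    have hm1 : 0 ≤ (2 * q k - (1 - (f k) ^ 2)) * ((f k) ^ 2)⁻¹ :=
      mul_nonneg (by linarith) hpos.le
    have hm2 : 0 ≤ q k * (2 - ((f k) ^ 2)⁻¹) :=
      mul_nonneg (hq0 k) (by linarith)
    nlinarith [hinv, hm1, hm2, h]
  -- equivalence of summability
  have hsum_iff : Summable L ↔ Summable q := by
    constructor
    · intro h
      exact Summable.of_nonneg_of_le hq0 (fun k => by linarith [hL_lb k]) (h.mul_left 2)
    · intro h
      exact Summable.of_nonneg_of_le hL0 hL_ub (h.mul_left 2)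
  -- partial products
  have hprod : ∀ n, ∏ k ∈ Finset.range n, f k =
      Real.exp (-(∑ k ∈ Finset.range n, L k)) := by
    intro n
    have hlog : Real.log (∏ k ∈ Finset.range n, f k) = ∑ k ∈ Finset.range n, Real.log (f k) :=
      Real.log_prod (fun k _ => ne_of_gt (hfpos k))
    have hPpos : 0 < ∏ k ∈ Finset.range n, f k :=
      Finset.prod_pos (fun k _ => hfpos k)
    rw [← Real.exp_log hPpos, hlog]
    congr 1
    have hsn : ∑ k ∈ Finset.range n, L k = -∑ k ∈ Finset.range n, Real.log (f k) := by
      rw [← Finset.sum_neg_distrib]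
      exact Finset.sum_congr rfl fun k _ => hL k
    rw [hsn, neg_neg]
  rw [hsum_iff.symm]
  constructor
  · -- positivity → summability, by contraposition
    intro hpos
    by_contra hns
    have htend := (not_summable_iff_tendsto_nat_atTop_of_nonneg hL0).mp hns
    have hPtend : Filter.Tendsto (fun n => ∏ k ∈ Finset.range n, f k)
        Filter.atTop (nhds 0) := by
      simp only [hprod]
      have hneg : Filter.Tendsto (fun n => -(∑ k ∈ Finset.range n, L k))
          Filter.atTop Filter.atBot := Filter.tendsto_neg_atBot_iff.mpr htend
      exact Real.tendsto_exp_atBot.comp hneg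
    have hbdd : BddBelow (Set.range (fun n => ∏ k ∈ Finset.range n, f k)) := by
      refine ⟨0, ?_⟩
      rintro x ⟨n, rfl⟩
      exact Finset.prod_nonneg (fun k _ => hf0 k)
    have hle : (⨅ n : ℕ, ∏ k ∈ Finset.range n, f k) ≤ 0 :=
      ge_of_tendsto' hPtend (fun n => ciInf_le hbdd n)
    linarith
  · -- summability → positivity
    intro hsum
    have hT : ∀ n, ∑ k ∈ Finset.range n, L k ≤ ∑' k, L k :=
      fun n => Summable.sum_le_tsum _ (fun k _ => hL0 k) hsum
    have hlb : ∀ n, Real.exp (-(∑' k, L k)) ≤ ∏ k ∈ Finset.range n, f k := by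
      intro n
      rw [hprod n]
      exact Real.exp_le_exp.mpr (by linarith [hT n])
    exact lt_of_lt_of_le (Real.exp_pos _) (le_ciInf hlb)
end

section
/- Suppose the sequence (a_k) is monotonically nonincreasing (a_k ≥ a_{k+1} for all k), and let n be such that a_n > r_n. Then the open interval (r_n, a_n) contains no point of the set S of all subsums: every subsum x = Σ_k γ_k a_k with γ ∈ {0,1}^ℕ satisfies either x ≤ r_n (if γ_k = 0 for all k ≤ n) or x ≥ a_n (if γ_k = 1 for some k ≤ n). -/
open MeasureTheory

/-- Let the positive terms `a k` of the series `∑ a k = 1` be nonincreasing, let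
`r k = ∑_{i > k} a i` be the tails, and suppose `a n > r n`.  Then every subsum
`x = ∑ γ k * a k` with `γ : ℕ → Bool` satisfies `x ≤ r n` if `γ k = false` for all
`k ≤ n`, and `x ≥ a n` if `γ k = true` for some `k ≤ n`; in particular the open
interval `(r n, a n)` contains no subsum of the series. -/
theorem subsum_not_mem_gap
    (a : ℕ → ℝ) (ha : ∀ k, 0 < a k) (hsum : ∑' k, a k = 1)
    (hmono : ∀ k, a (k + 1) ≤ a k)
    (r : ℕ → ℝ) (hr : ∀ k, r k = ∑' i : ℕ, a (k + 1 + i))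
    (n : ℕ) (hn : r n < a n) :
    ∀ γ : ℕ → Bool,
      ((∀ k ≤ n, γ k = false) → (∑' k : ℕ, if γ k then a k else 0) ≤ r n) ∧
      ((∃ k ≤ n, γ k = true) → a n ≤ ∑' k : ℕ, if γ k then a k else 0) ∧
      (∑' k : ℕ, if γ k then a k else 0) ∉ Set.Ioo (r n) (a n) := by
  have hsa : Summable a := by
    by_contra h
    rw [tsum_eq_zero_of_not_summable h] at hsum
    norm_num at hsum
  have hanti : Antitone a := antitone_nat_of_succ_le hmono
  intro γ
  set f : ℕ → ℝ := fun k => if γ k then a k else 0 with hf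
  have hfle : ∀ k, f k ≤ a k := by
    intro k; simp only [hf]; split <;> [exact le_refl _; exact (ha k).le]
  have hf0 : ∀ k, 0 ≤ f k := by
    intro k; simp only [hf]; split <;> [exact (ha k).le; exact le_refl _]
  have hsf : Summable f := hsa.of_nonneg_of_le hf0 hfle
  have h1 : (∀ k ≤ n, γ k = false) → (∑' k : ℕ, f k) ≤ r n := by
    intro h
    have hsplit := (Summable.sum_add_tsum_nat_add (n + 1) hsf).symm
    have hz : ∑ k ∈ Finset.range (n + 1), f k = 0 := by
      apply Finset.sum_eq_zero
      intro k hk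
      have : γ k = false := h k (Nat.lt_succ_iff.mp (Finset.mem_range.mp hk))
      simp [hf, this]
    rw [hsplit, hz, zero_add, hr]
    simp only [show ∀ i, n + 1 + i = i + (n + 1) from fun i => by ring]
    exact Summable.tsum_le_tsum (fun i => hfle _) ((summable_nat_add_iff _).mpr hsf)
      ((summable_nat_add_iff _).mpr hsa)
  have h2 : (∃ k ≤ n, γ k = true) → a n ≤ ∑' k : ℕ, f k := by
    rintro ⟨k, hk, hγk⟩
    have h1 : a n ≤ a k := hanti hk
    have h2 : a k = f k := by simp [hf, hγk]
    calc a n ≤ a k := h1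
      _ = f k := h2
      _ ≤ ∑' k, f k := Summable.le_tsum hsf k (fun j _ => hf0 j)
  refine ⟨h1, h2, ?_⟩
  rintro ⟨hlt, hgt⟩
  by_cases hc : ∀ k ≤ n, γ k = false
  · exact absurd (h1 hc) (not_le.mpr hlt)
  · push_neg at hc
    obtain ⟨k, hk, hγk⟩ := hc
    have : γ k = true := by simpa using hγk
    exact absurd (h2 ⟨k, hk, this⟩) (not_le.mpr hgt)
end

section
/- Let ε ∈ (0,1) and a_k = (1−ε)/2^k + 3ε/4^k for k ≥ 1. Then the set S of all subsums of the series Σ_k a_k is a nowhere dense subset of ℝ of positive Lebesgue measure. -/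
open MeasureTheory

noncomputable def Tt (ε : ℝ) (n : ℕ) : ℝ := (1 - ε) / 2 ^ n + ε / 4 ^ n
def gs (a : ℕ → ℝ) (γ : ℕ → Bool) (k : ℕ) : ℝ := if γ k then a k else 0
noncomputable def ps (a : ℕ → ℝ) (γ : ℕ → Bool) (n : ℕ) : ℝ :=
  ∑ k ∈ Finset.range n, gs a γ k
noncomputable def fs (a : ℕ → ℝ) (γ : ℕ → Bool) : ℝ := ∑' k, gs a γ k

section Aux
variable {ε : ℝ} {a : ℕ → ℝ}
  (hε : ε ∈ Set.Ioo (0:ℝ) 1)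
  (haval : ∀ k, a k = (1 - ε) / 2 ^ (k + 1) + 3 * ε / 4 ^ (k + 1))

include hε haval

lemma a_pos (k : ℕ) : 0 < a k := by
  rw [haval]
  obtain ⟨h1, h2⟩ := hε
  have e1 : (0:ℝ) < (1 - ε) / 2 ^ (k+1) := div_pos (by linarith) (by positivity)
  have e2 : (0:ℝ) < 3 * ε / 4 ^ (k+1) := div_pos (by linarith) (by positivity)
  linarith

omit haval in
lemma Tt_pos (n : ℕ) : 0 < Tt ε n := by
  obtain ⟨h1, h2⟩ := hε
  unfold Tt
  have e1 : (0:ℝ) < (1 - ε) / 2 ^ n := div_pos (by linarith) (by positivity)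
  have e2 : (0:ℝ) < ε / 4 ^ n := div_pos (by linarith) (by positivity)
  linarith

omit hε in
lemma Tt_step (n : ℕ) : Tt ε n = a n + Tt ε (n + 1) := by
  rw [haval]
  unfold Tt
  have h2 : (2:ℝ) ^ (n+1) = 2 * 2 ^ n := by ring
  have h4 : (4:ℝ) ^ (n+1) = 4 * 4 ^ n := by ring
  rw [h2, h4]
  have p2 : (2:ℝ) ^ n ≠ 0 := by positivity
  have p4 : (4:ℝ) ^ n ≠ 0 := by positivity
  field_simp
  ring

lemma gap_pos (n : ℕ) : Tt ε (n+1) < a n := by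
  have h : a n - Tt ε (n+1) = 2 * ε / 4 ^ (n+1) := by
    rw [haval]; unfold Tt
    have h2 : (2:ℝ) ^ (n+1) = 2 * 2 ^ n := by ring
    have h4 : (4:ℝ) ^ (n+1) = 4 * 4 ^ n := by ring
    rw [h2, h4]
    have p2 : (2:ℝ) ^ n ≠ 0 := by positivity
    have p4 : (4:ℝ) ^ n ≠ 0 := by positivity
    field_simp
    try ring
  have hp : 0 < 2 * ε / 4 ^ (n+1) := by
    have := hε.1; positivity
  linarith

omit hε in
lemma hasSum_tail (n : ℕ) : HasSum (fun k => a (n + k)) (Tt ε n) := by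
  have h1 : HasSum (fun k : ℕ => ((1:ℝ)/2) ^ k) 2 := by
    have := hasSum_geometric_of_lt_one (by norm_num : (0:ℝ) ≤ 1/2) (by norm_num : (1:ℝ)/2 < 1)
    convert this using 1
    norm_num
  have h2 : HasSum (fun k : ℕ => ((1:ℝ)/4) ^ k) (4/3) := by
    have := hasSum_geometric_of_lt_one (by norm_num : (0:ℝ) ≤ 1/4) (by norm_num : (1:ℝ)/4 < 1)
    convert this using 1
    norm_num
  have h3 := (h1.mul_left ((1 - ε) / 2 ^ (n+1))).add (h2.mul_left (3 * ε / 4 ^ (n+1)))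
  have efun : (fun k => a (n + k)) = (fun k : ℕ =>
      (1 - ε) / 2 ^ (n+1) * ((1:ℝ)/2) ^ k + 3 * ε / 4 ^ (n+1) * ((1:ℝ)/4) ^ k) := by
    funext k
    rw [haval]
    have e2 : (2:ℝ) ^ (n + k + 1) = 2 ^ (n+1) * 2 ^ k := by ring
    have e4 : (4:ℝ) ^ (n + k + 1) = 4 ^ (n+1) * 4 ^ k := by ring
    rw [e2, e4]
    have p2 : (2:ℝ) ^ (n+1) ≠ 0 := by positivity
    have p4 : (4:ℝ) ^ (n+1) ≠ 0 := by positivity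
    have q2 : (2:ℝ) ^ k ≠ 0 := by positivity
    have q4 : (4:ℝ) ^ k ≠ 0 := by positivity
    rw [div_pow, div_pow, one_pow]
    field_simp
    try ring
  rw [efun]
  have eT : Tt ε n = (1 - ε) / 2 ^ (n+1) * 2 + 3 * ε / 4 ^ (n+1) * (4/3) := by
    unfold Tt
    have h2 : (2:ℝ) ^ (n+1) = 2 * 2 ^ n := by ring
    have h4 : (4:ℝ) ^ (n+1) = 4 * 4 ^ n := by ring
    rw [h2, h4]
    have p2 : (2:ℝ) ^ n ≠ 0 := by positivity
    have p4 : (4:ℝ) ^ n ≠ 0 := by positivity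
    field_simp
    try ring
  rw [eT]
  exact h3

omit hε in
lemma summable_a : Summable a := by
  have h := (hasSum_tail haval 0).summable
  simpa using h

omit hε haval in
lemma gs_nonneg_le (hpos : ∀ k, 0 < a k) (γ : ℕ → Bool) (k : ℕ) :
    0 ≤ gs a γ k ∧ gs a γ k ≤ a k := by
  unfold gs
  cases γ k <;> simp <;> [exact (hpos k).le; exact (hpos k).le]

lemma summable_gs (γ : ℕ → Bool) : Summable (gs a γ) :=
  Summable.of_nonneg_of_le (fun k => (gs_nonneg_le (a_pos hε haval) γ k).1)
    (fun k => (gs_nonneg_le (a_pos hε haval) γ k).2) (summable_a haval)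

lemma fs_between (γ : ℕ → Bool) (n : ℕ) :
    ps a γ n ≤ fs a γ ∧ fs a γ ≤ ps a γ n + Tt ε n := by
  have hsg := summable_gs hε haval γ
  have hdecomp : fs a γ = ps a γ n + ∑' k, gs a γ (k + n) :=
    (Summable.sum_add_tsum_nat_add n hsg).symm
  have htail0 : 0 ≤ ∑' k, gs a γ (k + n) :=
    tsum_nonneg (fun k => (gs_nonneg_le (a_pos hε haval) γ (k + n)).1)
  have htailT : (∑' k, gs a γ (k + n)) ≤ Tt ε n := by
    have hTa : (∑' k, a (n + k)) = Tt ε n := (hasSum_tail haval n).tsum_eq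
    have := Summable.tsum_le_tsum (f := fun k => gs a γ (k + n)) (g := fun k => a (n + k))
      (fun k => by
        have := (gs_nonneg_le (a_pos hε haval) γ (k + n)).2
        simpa [Nat.add_comm] using this)
      ((summable_nat_add_iff n).2 hsg) (hasSum_tail haval n).summable
    linarith [hTa ▸ this]
  exact ⟨by linarith, by linarith⟩

omit hε in
lemma sum_range_a (n : ℕ) : ∑ k ∈ Finset.range n, a k = Tt ε 0 - Tt ε n := by
  induction n with
  | zero => simp
  | succ n ih =>
    rw [Finset.sum_range_succ, ih, Tt_step haval n]
    try ring

omit hε haval in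
lemma ps_succ (γ : ℕ → Bool) (n : ℕ) : ps a γ (n+1) = ps a γ n + gs a γ n :=
  Finset.sum_range_succ _ n

lemma ps_mono (γ : ℕ → Bool) {m n : ℕ} (h : m ≤ n) : ps a γ m ≤ ps a γ n := by
  unfold ps
  exact Finset.sum_le_sum_of_subset_of_nonneg (Finset.range_subset_range.2 h)
    (fun k _ _ => (gs_nonneg_le (a_pos hε haval) γ k).1)

lemma ps_diff_le (γ : ℕ → Bool) {m n : ℕ} (h : m ≤ n) :
    ps a γ n ≤ ps a γ m + (Tt ε m - Tt ε n) := by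
  have h1 : ps a γ n - ps a γ m = ∑ k ∈ Finset.Ico m n, gs a γ k := by
    unfold ps
    rw [Finset.sum_Ico_eq_sub _ h]
    try ring
  have h2 : (∑ k ∈ Finset.Ico m n, gs a γ k) ≤ ∑ k ∈ Finset.Ico m n, a k :=
    Finset.sum_le_sum (fun k _ => (gs_nonneg_le (a_pos hε haval) γ k).2)
  have h3 : (∑ k ∈ Finset.Ico m n, a k) = Tt ε m - Tt ε n := by
    rw [Finset.sum_Ico_eq_sub _ h, sum_range_a haval, sum_range_a haval]
    try ring
  linarith

lemma gap_not_mem (n : ℕ) (γ δ : ℕ → Bool)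
    (h1 : ps a δ n + Tt ε (n+1) < fs a γ) (h2 : fs a γ < ps a δ n + a n) : False := by
  have hTpos : ∀ m, 0 < Tt ε m := Tt_pos hε
  have hapos : ∀ k, 0 < a k := a_pos hε haval
  have hgap : ∀ m, Tt ε (m+1) < a m := gap_pos hε haval
  have hstep : ∀ m, Tt ε m = a m + Tt ε (m+1) := Tt_step haval
  -- digits of γ and δ agree up to n
  have key : ∀ m, m ≤ n → ps a γ m = ps a δ m := by
    intro m
    induction m with
    | zero => intro _; simp [ps]
    | succ m ih =>
      intro hmn
      have hm : m ≤ n := Nat.le_of_succ_le hmn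
      have hc : ps a γ m = ps a δ m := ih hm
      have F1 := (fs_between hε haval γ (m+1)).1
      have F2 := (fs_between hε haval γ (m+1)).2
      have F3 : ps a δ (m+1) ≤ ps a δ n := ps_mono hε haval δ hmn
      have F4 : ps a δ n ≤ ps a δ (m+1) + (Tt ε (m+1) - Tt ε n) :=
        ps_diff_le hε haval δ hmn
      have G1 := ps_succ (a := a) γ m
      have G2 := ps_succ (a := a) δ m
      have han : a n < Tt ε n := by have := hstep n; have := hTpos (n+1); linarith
      have hTmn : Tt ε n ≤ Tt ε (m+1) := by
        have := ps_diff_le hε haval (fun _ => false) hmn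
        -- easier: Tt is antitone via hstep; prove directly
        clear this
        have : ∀ j, Tt ε (m+1+j) ≤ Tt ε (m+1) := by
          intro j
          induction j with
          | zero => simp
          | succ j ihj =>
            have := hstep (m+1+j)
            have := hapos (m+1+j)
            have : Tt ε (m+1+j+1) ≤ Tt ε (m+1+j) := by linarith
            calc Tt ε (m+1+(j+1)) = Tt ε (m+1+j+1) := by ring_nf
              _ ≤ Tt ε (m+1+j) := this
              _ ≤ Tt ε (m+1) := ihj
        have hj := this (n - (m+1))
        have : m+1 + (n - (m+1)) = n := by omega
        rwa [this] at hj
      cases hbγ : γ m <;> cases hbδ : δ m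
      · simp [gs, hbγ, hbδ] at G1 G2; rw [G1, G2, hc]
      · -- γ m = false, δ m = true
        exfalso
        simp [gs, hbγ, hbδ] at G1 G2
        have := hTpos (n+1)
        have := hgap m
        linarith
      · -- γ m = true, δ m = false
        exfalso
        simp [gs, hbγ, hbδ] at G1 G2
        have := hgap m
        have := hTpos (n+1)
        linarith
      · simp [gs, hbγ, hbδ] at G1 G2; rw [G1, G2, hc]
  have hc : ps a γ n = ps a δ n := key n le_rfl
  have F1 := (fs_between hε haval γ (n+1)).1
  have F2 := (fs_between hε haval γ (n+1)).2
  have G1 := ps_succ (a := a) γ n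
  cases hbγ : γ n
  · simp [gs, hbγ] at G1
    linarith
  · simp [gs, hbγ] at G1
    linarith

end Aux

noncomputable def Fn (a : ℕ → ℝ) (n : ℕ) : Finset ℝ :=
  Finset.image (fun v : Fin n → Bool => ∑ k : Fin n, if v k then a k.1 else 0) Finset.univ

lemma ps_mem_Fn (a : ℕ → ℝ) (γ : ℕ → Bool) (n : ℕ) : ps a γ n ∈ Fn a n := by
  refine Finset.mem_image.2 ⟨fun i => γ i.1, Finset.mem_univ _, ?_⟩
  rw [Fin.sum_univ_eq_sum_range (fun k => if γ k then a k else 0) n]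
  rfl

lemma card_Fn (a : ℕ → ℝ) (n : ℕ) : (Fn a n).card ≤ 2 ^ n := by
  refine le_trans Finset.card_image_le ?_
  simp [Finset.card_univ]

noncomputable def Gset (ε : ℝ) (a : ℕ → ℝ) : Set ℝ :=
  ⋃ n : ℕ, ⋃ c ∈ Fn a n, Set.Ioo (c + Tt ε (n+1)) (c + a n)

section Aux2
variable {ε : ℝ} {a : ℕ → ℝ}
  (hε : ε ∈ Set.Ioo (0:ℝ) 1)
  (haval : ∀ k, a k = (1 - ε) / 2 ^ (k + 1) + 3 * ε / 4 ^ (k + 1))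

include hε haval

lemma vol_Gset : MeasureTheory.volume (Gset ε a) ≤ ENNReal.ofReal ε := by
  have hlen : ∀ n, a n - Tt ε (n+1) = (ε/2) * ((1:ℝ)/4) ^ n := by
    intro n
    rw [haval]
    unfold Tt
    have h2 : (2:ℝ) ^ (n+1) = 2 * 2 ^ n := by ring
    have h4 : (4:ℝ) ^ (n+1) = 4 * 4 ^ n := by ring
    rw [h2, h4]
    have p2 : (2:ℝ) ^ n ≠ 0 := by positivity
    have p4 : (4:ℝ) ^ n ≠ 0 := by positivity
    have e : ((1:ℝ)/4) ^ n = 1 / 4 ^ n := by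
      rw [div_pow]; norm_num
    rw [e]
    field_simp
    try ring
  calc MeasureTheory.volume (Gset ε a)
      ≤ ∑' n : ℕ, MeasureTheory.volume (⋃ c ∈ Fn a n, Set.Ioo (c + Tt ε (n+1)) (c + a n)) :=
        MeasureTheory.measure_iUnion_le _
    _ ≤ ∑' n : ℕ, ∑ c ∈ Fn a n, MeasureTheory.volume (Set.Ioo (c + Tt ε (n+1)) (c + a n)) :=
        ENNReal.tsum_le_tsum (fun n => MeasureTheory.measure_biUnion_finset_le _ _)
    _ ≤ ∑' n : ℕ, ENNReal.ofReal ((ε/2) * ((1:ℝ)/2) ^ n) := by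
        refine ENNReal.tsum_le_tsum (fun n => ?_)
        have hvol : ∀ c : ℝ, MeasureTheory.volume (Set.Ioo (c + Tt ε (n+1)) (c + a n))
            = ENNReal.ofReal ((ε/2) * ((1:ℝ)/4) ^ n) := by
          intro c
          rw [Real.volume_Ioo]
          congr 1
          rw [← hlen n]
          ring
        calc (∑ c ∈ Fn a n, MeasureTheory.volume (Set.Ioo (c + Tt ε (n+1)) (c + a n)))
            = (Fn a n).card • ENNReal.ofReal ((ε/2) * ((1:ℝ)/4) ^ n) := by
              rw [Finset.sum_congr rfl (fun c _ => hvol c), Finset.sum_const]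
          _ ≤ (2^n : ℕ) • ENNReal.ofReal ((ε/2) * ((1:ℝ)/4) ^ n) := by
              rw [nsmul_eq_mul, nsmul_eq_mul]
              exact mul_le_mul_left (Nat.cast_le.2 (card_Fn a n)) _
          _ = ENNReal.ofReal ((2:ℝ)^n * ((ε/2) * ((1:ℝ)/4) ^ n)) := by
              rw [nsmul_eq_mul]
              have hc : ((2^n : ℕ) : ENNReal) = ENNReal.ofReal ((2:ℝ)^n) := by
                rw [ENNReal.ofReal_pow (by norm_num)]
                norm_num
              rw [hc, ← ENNReal.ofReal_mul (by positivity : (0:ℝ) ≤ (2:ℝ)^n)]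
          _ = ENNReal.ofReal ((ε/2) * ((1:ℝ)/2) ^ n) := by
              congr 1
              have h42 : ((1:ℝ)/4) ^ n * 2 ^ n = ((1:ℝ)/2) ^ n := by
                rw [← mul_pow]; norm_num
              calc (2:ℝ)^n * ((ε/2) * ((1:ℝ)/4) ^ n)
                  = (ε/2) * (((1:ℝ)/4) ^ n * 2 ^ n) := by ring
                _ = (ε/2) * ((1:ℝ)/2) ^ n := by rw [h42]
    _ = ENNReal.ofReal (∑' n : ℕ, (ε/2) * ((1:ℝ)/2) ^ n) := by
        rw [ENNReal.ofReal_tsum_of_nonneg]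
        · intro n
          have := hε.1
          positivity
        · exact (summable_geometric_of_lt_one (by norm_num) (by norm_num)).mul_left _
    _ = ENNReal.ofReal ε := by
        congr 1
        rw [tsum_mul_left, tsum_geometric_of_lt_one (by norm_num) (by norm_num)]
        norm_num

lemma Tt_tendsto_zero : Filter.Tendsto (fun n => Tt ε n) Filter.atTop (nhds 0) := by
  have h1 : Filter.Tendsto (fun n : ℕ => (1 - ε) * ((1:ℝ)/2) ^ n) Filter.atTop (nhds 0) := by
    have := (tendsto_pow_atTop_nhds_zero_of_lt_one (by norm_num : (0:ℝ) ≤ 1/2)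
      (by norm_num : (1:ℝ)/2 < 1)).const_mul (1 - ε)
    simpa using this
  have h2 : Filter.Tendsto (fun n : ℕ => ε * ((1:ℝ)/4) ^ n) Filter.atTop (nhds 0) := by
    have := (tendsto_pow_atTop_nhds_zero_of_lt_one (by norm_num : (0:ℝ) ≤ 1/4)
      (by norm_num : (1:ℝ)/4 < 1)).const_mul ε
    simpa using this
  have := h1.add h2
  simp only [add_zero] at this
  convert this using 2 with n
  unfold Tt
  rw [div_pow, div_pow]
  norm_num
  ring

omit haval in
lemma Tt_le_pow (n : ℕ) : Tt ε n ≤ ((1:ℝ)/2) ^ n := by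
  obtain ⟨h1, h2⟩ := hε
  unfold Tt
  have h24 : (2:ℝ)^n ≤ 4^n := by
    exact pow_le_pow_left₀ (by norm_num) (by norm_num) n
  have p2 : (0:ℝ) < 2^n := by positivity
  have p4 : (0:ℝ) < 4^n := by positivity
  have e : ε / 4 ^ n ≤ ε / 2 ^ n := div_le_div_of_nonneg_left h1.le p2 h24
  have e2 : (1 - ε) / 2 ^ n + ε / 2 ^ n = ((1:ℝ)/2)^n := by
    rw [div_pow]
    field_simp
    ring
  linarith

lemma greedy (x : ℝ) (hx : x ∈ Set.Icc (0:ℝ) 1) (hxG : x ∉ Gset ε a) :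
    ∃ γ : ℕ → Bool, x = fs a γ := by
  classical
  set c : ℕ → ℝ := fun n => Nat.rec (0:ℝ) (fun n cn => if a n ≤ x - cn then cn + a n else cn) n
    with hcdef
  set γ : ℕ → Bool := fun n => if a n ≤ x - c n then true else false with hγdef
  have hc0 : c 0 = 0 := rfl
  have hcs : ∀ n, c (n+1) = if a n ≤ x - c n then c n + a n else c n := fun n => rfl
  have hcps : ∀ n, c n = ps a γ n := by
    intro n
    induction n with
    | zero => simp [hc0, ps]
    | succ n ih =>
      rw [hcs n, ps_succ]
      by_cases h : a n ≤ x - c n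
      · have hb : γ n = true := by rw [hγdef]; simp [h]
        rw [if_pos h, ih]
        unfold gs
        rw [hb]
        simp
      · have hb : γ n = false := by rw [hγdef]; simp [h]
        rw [if_neg h, ih]
        unfold gs
        rw [hb]
        simp
  have hstep : ∀ m, Tt ε m = a m + Tt ε (m+1) := Tt_step haval
  have hTt0 : Tt ε 0 = 1 := by unfold Tt; norm_num
  have hinv : ∀ n, 0 ≤ x - c n ∧ x - c n ≤ Tt ε n := by
    intro n
    induction n with
    | zero =>
      rw [hc0, hTt0]
      constructor <;> [linarith [hx.1]; linarith [hx.2]]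
    | succ n ih =>
      have hnotgap : x ∉ Set.Ioo (c n + Tt ε (n+1)) (c n + a n) := by
        intro hmem
        apply hxG
        refine Set.mem_iUnion.2 ⟨n, ?_⟩
        refine Set.mem_iUnion₂.2 ⟨c n, ?_, hmem⟩
        rw [hcps n]
        exact ps_mem_Fn a γ n
      rw [hcs n]
      by_cases h : a n ≤ x - c n
      · rw [if_pos h]
        constructor
        · linarith
        · have := hstep n
          have := ih.2
          linarith
      · rw [if_neg h]
        push_neg at h
        constructor
        · exact ih.1
        · by_contra hcon
          push_neg at hcon
          exact hnotgap ⟨by linarith, by linarith⟩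
  have hsg := summable_gs hε haval γ
  have hps_tendsto : Filter.Tendsto (fun n => ps a γ n) Filter.atTop (nhds (fs a γ)) :=
    hsg.hasSum.tendsto_sum_nat
  have hc_tendsto : Filter.Tendsto c Filter.atTop (nhds (fs a γ)) := by
    have : c = fun n => ps a γ n := funext hcps
    rw [this]
    exact hps_tendsto
  have hx_tendsto : Filter.Tendsto c Filter.atTop (nhds x) := by
    have hlow : Filter.Tendsto (fun n => x - Tt ε n) Filter.atTop (nhds x) := by
      have := (tendsto_const_nhds (x := x) (f := Filter.atTop (α := ℕ))).sub
        (Tt_tendsto_zero hε haval)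
      simpa using this
    refine tendsto_of_tendsto_of_tendsto_of_le_of_le hlow tendsto_const_nhds ?_ ?_
    · intro n; have := (hinv n).2; simp; linarith
    · intro n; have := (hinv n).1; simp; linarith
  exact ⟨γ, tendsto_nhds_unique hx_tendsto hc_tendsto⟩

end Aux2

open MeasureTheory

/-- For `ε ∈ (0,1)` and `aₖ = (1-ε)/2ᵏ + 3ε/4ᵏ` (`k ≥ 1`), the set of all subsums of
the series `∑ aₖ` is a nowhere dense subset of `ℝ` of positive Lebesgue measure. -/
theorem subsums_example_isNowhereDense_pos_volume
    (ε : ℝ) (hε : ε ∈ Set.Ioo (0 : ℝ) 1)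
    (a : ℕ → ℝ)
    (haval : ∀ k, a k = (1 - ε) / 2 ^ (k + 1) + 3 * ε / 4 ^ (k + 1))
    (S : Set ℝ)
    (hS : S = {x | ∃ γ : ℕ → Bool, x = ∑' k : ℕ, if γ k then a k else 0}) :
    IsNowhereDense S ∧ 0 < volume S := by
  have hSr : S = Set.range (fs a) := by
    rw [hS]
    ext x
    simp only [Set.mem_setOf_eq, Set.mem_range]
    constructor
    · rintro ⟨γ, hγ⟩; exact ⟨γ, hγ.symm⟩
    · rintro ⟨γ, hγ⟩; exact ⟨γ, hγ.symm⟩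
  have hcont : Continuous (fs a) := by
    apply continuous_tsum (f := fun k (γ : ℕ → Bool) => gs a γ k) (u := a)
    · intro k
      exact (continuous_of_discreteTopology
        (f := fun b : Bool => if b then a k else 0)).comp (continuous_apply k)
    · exact summable_a haval
    · intro k γ
      rw [Real.norm_eq_abs, abs_of_nonneg (gs_nonneg_le (a_pos hε haval) γ k).1]
      exact (gs_nonneg_le (a_pos hε haval) γ k).2
  have hclosed : IsClosed (Set.range (fs a)) := (isCompact_range hcont).isClosed
  constructor
  · -- nowhere dense
    rw [hSr]
    unfold IsNowhereDense
    rw [hclosed.closure_eq, interior_eq_empty_iff_dense_compl]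
    intro x
    rw [Metric.mem_closure_iff]
    intro r hr
    by_cases hxS : x ∈ Set.range (fs a)
    · obtain ⟨γ, hγ⟩ := hxS
      obtain ⟨n, hn⟩ := exists_pow_lt_of_lt_one hr (by norm_num : (1:ℝ)/2 < 1)
      have hTn : Tt ε n < r := lt_of_le_of_lt (Tt_le_pow hε n) hn
      have hTpos : 0 < Tt ε n := Tt_pos hε n
      have hTpos1 : 0 < Tt ε (n+1) := Tt_pos hε (n+1)
      have hstep : Tt ε n = a n + Tt ε (n+1) := Tt_step haval n
      have hgap : Tt ε (n+1) < a n := gap_pos hε haval n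
      have hyS : ps a γ n + Tt ε n / 2 ∉ Set.range (fs a) := by
        rintro ⟨δ, hδ⟩
        refine gap_not_mem hε haval n δ γ ?_ ?_
        · rw [hδ]; linarith
        · rw [hδ]; linarith
      refine ⟨ps a γ n + Tt ε n / 2, hyS, ?_⟩
      have F1 : ps a γ n ≤ x := by rw [← hγ]; exact (fs_between hε haval γ n).1
      have F2 : x ≤ ps a γ n + Tt ε n := by rw [← hγ]; exact (fs_between hε haval γ n).2
      rw [Real.dist_eq, abs_sub_lt_iff]
      constructor
      · linarith
      · linarith
    · exact ⟨x, hxS, by simpa [dist_self] using hr⟩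
  · -- positive measure
    rw [hSr]
    by_contra h
    push_neg at h
    have h0 : volume (Set.range (fs a)) = 0 := le_antisymm (by simpa using h) zero_le
    have hsub : Set.Icc (0:ℝ) 1 ⊆ Set.range (fs a) ∪ Gset ε a := by
      intro x hx
      by_cases hxG : x ∈ Gset ε a
      · right; exact hxG
      · left
        obtain ⟨γ, hγ⟩ := greedy hε haval x hx hxG
        exact ⟨γ, hγ.symm⟩
    have h1 : volume (Set.Icc (0:ℝ) 1) ≤ volume (Set.range (fs a) ∪ Gset ε a) :=
      measure_mono hsub
    have h2 : volume (Set.range (fs a) ∪ Gset ε a)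
        ≤ volume (Set.range (fs a)) + volume (Gset ε a) := measure_union_le _ _
    have h3 : volume (Set.Icc (0:ℝ) 1) = 1 := by
      rw [Real.volume_Icc]
      norm_num
    have h4 : (1:ENNReal) ≤ ENNReal.ofReal ε := by
      calc (1:ENNReal) = volume (Set.Icc (0:ℝ) 1) := h3.symm
        _ ≤ volume (Set.range (fs a)) + volume (Gset ε a) := le_trans h1 h2
        _ = volume (Gset ε a) := by rw [h0, zero_add]
        _ ≤ ENNReal.ofReal ε := vol_Gset hε haval
    have h5 : ENNReal.ofReal ε < 1 := by
      rw [ENNReal.ofReal_lt_one]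
      exact hε.2
    exact absurd h4 (not_le.2 h5)
end
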